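/- arXiv:2510.13097 — 7 statements merged into one kernel-verified Lean document; each statement's English description precedes it below -/
import Mathlib

section
/- Let Ω ⊆ ℝ be an interval, v : Ω → ℝ continuous, λ ∈ ℝ, δ > 0, m ∈ ℕ*, and let E = {y ∈ Ω : |v(y) − λ| < δ^m} and 𝓔 = {y ∈ Ω : dist(y, E) < δ}. Then there exists a function χ : Ω → [−1, 1] such that: (i) |χ(y)| ≤ 1 for all y, and χ is Lipschitz with Lipschitz constant at most 1/δ; (ii) χ(y)·(v(y) − λ) ≥ 0 for all y ∈ Ω; (iii) for every y ∈ Ω \ 𝓔, χ(y) = sign(v(y) − λ). (One such choice is χ(y) = φ(sign(v(y) − λ)·dist(y, E)/δ), where φ is the unique odd function on ℝ with φ(t) = min{t, 1} for t ≥ 0.) -/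
open MeasureTheory Filter Set ENNReal

/-- existence of the cutoff function `χ`.  For an interval `Ω`,
a continuous `v`, `λ ∈ ℝ`, `δ > 0` and `m ∈ ℕ*`, with
`E = {y ∈ Ω : |v(y) − λ| < δ^m}` and `𝓔 = {y ∈ Ω : dist(y, E) < δ}` (with
`dist(y, ∅) = ∞`), there is `χ : Ω → [−1,1]` which is `(1/δ)`-Lipschitz, satisfies
`χ·(v − λ) ≥ 0` on `Ω`, and equals `sign(v − λ)` on `Ω \ 𝓔`. -/
theorem cutoff_function_exists
    (Ω : Set ℝ) (hΩ : Ω.OrdConnected)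
    (v : ℝ → ℝ) (hv : ContinuousOn v Ω)
    (lam δ : ℝ) (hδ : 0 < δ) (m : ℕ) (hm : 1 ≤ m) :
    ∃ χ : ℝ → ℝ,
      -- (i) bounded by 1 and Lipschitz with constant at most `1/δ`
      (∀ y ∈ Ω, |χ y| ≤ 1) ∧
      LipschitzOnWith (Real.toNNReal (1 / δ)) χ Ω ∧
      -- (ii) `χ (v − λ) ≥ 0` on `Ω`
      (∀ y ∈ Ω, 0 ≤ χ y * (v y - lam)) ∧
      -- (iii) `χ = sign (v − λ)` outside the thickened neighborhood `𝓔`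
      (∀ y ∈ Ω \
          {z ∈ Ω | EMetric.infEdist z {w ∈ Ω | |v w - lam| < δ ^ m} < ENNReal.ofReal δ},
        χ y = Real.sign (v y - lam)) := by
  classical
  set E : Set ℝ := {w ∈ Ω | |v w - lam| < δ ^ m} with hEdef
  set P : Set ℝ := {w ∈ Ω | v w ≤ lam} with hPdef
  set N : Set ℝ := {w ∈ Ω | lam ≤ v w} with hNdef
  set fP : ℝ → ℝ := fun y => if P = ∅ then 1 else min 1 (Metric.infDist y P / δ) with hfP
  set fN : ℝ → ℝ := fun y => if N = ∅ then 1 else min 1 (Metric.infDist y N / δ) with hfN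
  -- bounds on the building blocks
  have hbnd : ∀ (S : Set ℝ) (y : ℝ),
      0 ≤ (if S = ∅ then (1:ℝ) else min 1 (Metric.infDist y S / δ)) ∧
      (if S = ∅ then (1:ℝ) else min 1 (Metric.infDist y S / δ)) ≤ 1 := by
    intro S y
    split
    · exact ⟨zero_le_one, le_refl 1⟩
    · refine ⟨le_min zero_le_one ?_, min_le_left _ _⟩
      have := Metric.infDist_nonneg (s := S) (x := y)
      positivity
  have hfPbnd : ∀ y, 0 ≤ fP y ∧ fP y ≤ 1 := fun y => hbnd P y
  have hfNbnd : ∀ y, 0 ≤ fN y ∧ fN y ≤ 1 := fun y => hbnd N y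
  -- vanishing on the set itself
  have hzero : ∀ (S : Set ℝ) (y : ℝ), y ∈ S →
      (if S = ∅ then (1:ℝ) else min 1 (Metric.infDist y S / δ)) = 0 := by
    intro S y hy
    rw [if_neg (Set.nonempty_iff_ne_empty.mp ⟨y, hy⟩)]
    rw [Metric.infDist_zero_of_mem hy]
    simp
  -- 1/δ-Lipschitz estimate for each building block
  have hlipf : ∀ (S : Set ℝ) (x y : ℝ),
      |(if S = ∅ then (1:ℝ) else min 1 (Metric.infDist x S / δ)) -
        (if S = ∅ then (1:ℝ) else min 1 (Metric.infDist y S / δ))| ≤ dist x y / δ := by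
    intro S x y
    split
    · simp
      positivity
    · have h1 : |Metric.infDist x S - Metric.infDist y S| ≤ dist x y := by
        rw [abs_sub_le_iff]
        constructor
        · have := Metric.infDist_le_infDist_add_dist (x := x) (y := y) (s := S)
          linarith
        · have := Metric.infDist_le_infDist_add_dist (x := y) (y := x) (s := S)
          rw [dist_comm] at this
          linarith
      calc |min 1 (Metric.infDist x S / δ) - min 1 (Metric.infDist y S / δ)|
          ≤ max |1 - 1| |Metric.infDist x S / δ - Metric.infDist y S / δ| :=
            abs_min_sub_min_le_max _ _ _ _
        _ = |Metric.infDist x S - Metric.infDist y S| / δ := by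
            rw [div_sub_div_same, abs_div, abs_of_pos hδ]
            simp
            positivity
        _ ≤ dist x y / δ := (div_le_div_iff_of_pos_right hδ).mpr h1

  -- intermediate value: a zero of `v - lam` between two points with opposite signs
  have hbetween : ∀ x ∈ Ω, ∀ p ∈ Ω, v p ≤ lam → lam ≤ v x →
      ∃ z ∈ Ω, v z = lam ∧ dist x z + dist z p = dist x p := by
    intro x hx p hp hvp hvx
    have hsub : Set.uIcc x p ⊆ Ω := hΩ.uIcc_subset hx hp
    have hmem : lam ∈ Set.uIcc (v x) (v p) := by
      rw [Set.mem_uIcc]; right; exact ⟨hvp, hvx⟩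
    obtain ⟨z, hz, hvz⟩ := intermediate_value_uIcc (hv.mono hsub) hmem
    refine ⟨z, hsub hz, hvz, ?_⟩
    rcases le_total x p with h | h
    · rw [Set.uIcc_of_le h, Set.mem_Icc] at hz
      rw [Real.dist_eq, Real.dist_eq, Real.dist_eq, abs_of_nonpos (by linarith),
        abs_of_nonpos (by linarith), abs_of_nonpos (by linarith)]
      ring
    · rw [Set.uIcc_of_ge h, Set.mem_Icc] at hz
      rw [Real.dist_eq, Real.dist_eq, Real.dist_eq, abs_of_nonneg (by linarith),
        abs_of_nonneg (by linarith), abs_of_nonneg (by linarith)]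
      ring
  refine ⟨fun y => fP y - fN y, ?_, ?_, ?_, ?_⟩
  · -- (i) boundedness
    intro y _
    have h1 := hfPbnd y
    have h2 := hfNbnd y
    show |fP y - fN y| ≤ 1
    rw [abs_le]; constructor <;> linarith [h1.1, h1.2, h2.1, h2.2]
  · -- Lipschitz
    rw [lipschitzOnWith_iff_dist_le_mul]
    intro x hx y hy
    have hcoe : ((Real.toNNReal (1 / δ)) : ℝ) = 1 / δ :=
      Real.coe_toNNReal _ (by positivity)
    rw [hcoe]
    have hlipfP : ∀ a b : ℝ, |fP a - fP b| ≤ dist a b / δ := by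
      intro a b
      rw [hfP]
      exact hlipf P a b
    have hlipfN : ∀ a b : ℝ, |fN a - fN b| ≤ dist a b / δ := by
      intro a b
      rw [hfN]
      exact hlipf N a b
    have key : ∀ a ∈ Ω, ∀ b ∈ Ω, dist (fP a - fN a) (fP b - fN b) ≤ dist a b / δ := by
      intro a ha b hb
      rcases le_total lam (v a) with hva | hva <;> rcases le_total lam (v b) with hvb | hvb
      · -- both ≥ lam : fN vanishes
        have h1 : fN a = 0 := hzero N a ⟨ha, hva⟩
        have h2 : fN b = 0 := hzero N b ⟨hb, hvb⟩
        rw [Real.dist_eq, h1, h2, sub_zero, sub_zero]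
        exact hlipfP a b
      · -- mixed: lam ≤ v a, v b ≤ lam
        have h1 : fN a = 0 := hzero N a ⟨ha, hva⟩
        have h2 : fP b = 0 := hzero P b ⟨hb, hvb⟩
        obtain ⟨z, hzΩ, hvz, hzd⟩ := hbetween a ha b hb hvb hva
        have hzP : z ∈ P := ⟨hzΩ, le_of_eq hvz⟩
        have hzN : z ∈ N := ⟨hzΩ, ge_of_eq hvz⟩
        have hPa : fP a ≤ dist a z / δ := by
          rw [hfP]
          simp only
          rw [if_neg (Set.nonempty_iff_ne_empty.mp ⟨z, hzP⟩)]
          refine le_trans (min_le_right _ _) ?_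
          gcongr
          exact Metric.infDist_le_dist_of_mem hzP
        have hNb : fN b ≤ dist z b / δ := by
          rw [hfN]
          simp only
          rw [if_neg (Set.nonempty_iff_ne_empty.mp ⟨z, hzN⟩)]
          refine le_trans (min_le_right _ _) ?_
          gcongr
          rw [dist_comm]
          exact Metric.infDist_le_dist_of_mem hzN
        have hPa0 := (hfPbnd a).1
        have hNb0 := (hfNbnd b).1
        rw [Real.dist_eq, h1, h2, sub_zero, zero_sub, sub_neg_eq_add,
          abs_of_nonneg (by linarith)]
        have : dist a z / δ + dist z b / δ = dist a b / δ := by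
          rw [← add_div, hzd]
        linarith
      · -- mixed: v a ≤ lam, lam ≤ v b
        have h1 : fP a = 0 := hzero P a ⟨ha, hva⟩
        have h2 : fN b = 0 := hzero N b ⟨hb, hvb⟩
        obtain ⟨z, hzΩ, hvz, hzd⟩ := hbetween b hb a ha hva hvb
        have hzP : z ∈ P := ⟨hzΩ, le_of_eq hvz⟩
        have hzN : z ∈ N := ⟨hzΩ, ge_of_eq hvz⟩
        have hPb : fP b ≤ dist b z / δ := by
          rw [hfP]
          simp only
          rw [if_neg (Set.nonempty_iff_ne_empty.mp ⟨z, hzP⟩)]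
          refine le_trans (min_le_right _ _) ?_
          gcongr
          exact Metric.infDist_le_dist_of_mem hzP
        have hNa : fN a ≤ dist z a / δ := by
          rw [hfN]
          simp only
          rw [if_neg (Set.nonempty_iff_ne_empty.mp ⟨z, hzN⟩)]
          refine le_trans (min_le_right _ _) ?_
          gcongr
          rw [dist_comm]
          exact Metric.infDist_le_dist_of_mem hzN
        have hPb0 := (hfPbnd b).1
        have hNa0 := (hfNbnd a).1
        rw [Real.dist_eq, h1, h2, zero_sub, sub_zero, abs_sub_comm,
          sub_neg_eq_add, abs_of_nonneg (by linarith)]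
        have : dist b z / δ + dist z a / δ = dist b a / δ := by
          rw [← add_div, hzd]
        rw [dist_comm a b]
        linarith
      · -- both ≤ lam : fP vanishes
        have h1 : fP a = 0 := hzero P a ⟨ha, hva⟩
        have h2 : fP b = 0 := hzero P b ⟨hb, hvb⟩
        rw [Real.dist_eq, h1, h2, zero_sub, zero_sub]
        have heq : -fN a - -fN b = -(fN a - fN b) := by ring
        rw [heq, abs_neg]
        exact hlipfN a b
    calc dist (fP x - fN x) (fP y - fN y) ≤ dist x y / δ := key x hx y hy
      _ = 1 / δ * dist x y := by ring
  · -- (ii) sign condition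
    intro y hy
    rcases lt_trichotomy (v y) lam with h | h | h
    · have h1 : fP y = 0 := hzero P y ⟨hy, le_of_lt h⟩
      have h2 := (hfNbnd y).1
      show 0 ≤ (fP y - fN y) * (v y - lam)
      rw [h1, zero_sub]
      nlinarith [h2]
    · have h1 : fP y = 0 := hzero P y ⟨hy, le_of_eq h⟩
      have h2 : fN y = 0 := hzero N y ⟨hy, ge_of_eq h⟩
      show 0 ≤ (fP y - fN y) * (v y - lam)
      rw [h1, h2]
      simp
    · have h2 : fN y = 0 := hzero N y ⟨hy, le_of_lt h⟩
      have h1 := (hfPbnd y).1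
      show 0 ≤ (fP y - fN y) * (v y - lam)
      rw [h2, sub_zero]
      exact mul_nonneg h1 (by linarith)
  · -- (iii) equality with the sign outside the thickened set
    intro y hy
    obtain ⟨hyΩ, hy2⟩ := hy
    have hfar : ENNReal.ofReal δ ≤ EMetric.infEdist y E := by
      by_contra h
      push_neg at h
      exact hy2 ⟨hyΩ, h⟩
    have hEfar : ∀ z ∈ E, δ ≤ dist y z := by
      intro z hz
      by_contra h
      push_neg at h
      have h1 : EMetric.infEdist y E ≤ edist y z := EMetric.infEdist_le_edist_of_mem hz
      rw [edist_dist] at h1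
      have h2 : ENNReal.ofReal (dist y z) < ENNReal.ofReal δ :=
        (ENNReal.ofReal_lt_ofReal_iff hδ).mpr h
      exact absurd (lt_of_le_of_lt h1 h2) (not_lt.mpr hfar)
    have hδm : 0 < δ ^ m := pow_pos hδ m
    rcases lt_trichotomy (v y) lam with h | h | h
    · -- v y < lam : χ y = -1 = sign
      have hsgn : Real.sign (v y - lam) = -1 := Real.sign_of_neg (by linarith)
      have h1 : fP y = 0 := hzero P y ⟨hyΩ, le_of_lt h⟩
      have h2 : fN y = 1 := by
        rw [hfN]
        simp only
        split
        · rfl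
        · rename_i hNne
          have hNne' : N.Nonempty := Set.nonempty_iff_ne_empty.mpr hNne
          have hdN : δ ≤ Metric.infDist y N := by
            by_contra hcon
            push_neg at hcon
            obtain ⟨n, hnN, hnd⟩ := (Metric.infDist_lt_iff hNne').mp hcon
            obtain ⟨z, hzΩ, hvz, hzd⟩ := hbetween n hnN.1 y hyΩ (le_of_lt h) hnN.2
            have hzE : z ∈ E := ⟨hzΩ, by rw [hvz]; simpa using hδm⟩
            have hzfar := hEfar z hzE
            have hdz : dist y z ≤ dist n y := by
              have h0 := dist_nonneg (x := n) (y := z)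
              rw [dist_comm y z]
              linarith
            rw [dist_comm n y] at hdz
            linarith
          rw [min_eq_left]
          rw [le_div_iff₀ hδ, one_mul]
          exact hdN
      show fP y - fN y = Real.sign (v y - lam)
      rw [h1, h2, hsgn]
      ring
    · -- v y = lam : y ∈ E, contradiction with hfar
      exfalso
      have hyE : y ∈ E := ⟨hyΩ, by rw [h]; simpa using hδm⟩
      have : EMetric.infEdist y E = 0 := EMetric.infEdist_zero_of_mem hyE
      rw [this] at hfar
      have : (0:ℝ≥0∞) < ENNReal.ofReal δ := ENNReal.ofReal_pos.mpr hδ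
      exact absurd hfar (not_le.mpr this)
    · -- v y > lam : χ y = 1 = sign
      have hsgn : Real.sign (v y - lam) = 1 := Real.sign_of_pos (by linarith)
      have h2 : fN y = 0 := hzero N y ⟨hyΩ, le_of_lt h⟩
      have h1 : fP y = 1 := by
        rw [hfP]
        simp only
        split
        · rfl
        · rename_i hPne
          have hPne' : P.Nonempty := Set.nonempty_iff_ne_empty.mpr hPne
          have hdP : δ ≤ Metric.infDist y P := by
            by_contra hcon
            push_neg at hcon
            obtain ⟨p, hpP, hpd⟩ := (Metric.infDist_lt_iff hPne').mp hcon
            obtain ⟨z, hzΩ, hvz, hzd⟩ := hbetween y hyΩ p hpP.1 hpP.2 (le_of_lt h)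
            have hzE : z ∈ E := ⟨hzΩ, by rw [hvz]; simpa using hδm⟩
            have := hEfar z hzE
            have hdz : dist y z ≤ dist y p := by
              have := dist_nonneg (x := z) (y := p)
              linarith
            linarith
          rw [min_eq_left]
          rw [le_div_iff₀ hδ, one_mul]
          exact hdP
      show fP y - fN y = Real.sign (v y - lam)
      rw [h1, h2, hsgn]
      ring
end

section
/- Let m ≥ 1 and L₁ < L₂ be real numbers, and let v : [L₁, L₂] → ℝ be a C^m function satisfying |v'(y)| + |v''(y)| + ⋯ + |v^{(m)}(y)| > 0 for all y ∈ [L₁, L₂]. Then v is piecewise strictly monotone: there exist N ∈ ℕ* and points L₁ = y₀ < y₁ < ⋯ < y_N = L₂ such that v is strictly monotone on each interval [y_{j−1}, y_j] for j = 1, …, N, and the direction of monotonicity (strictly increasing vs. strictly decreasing) alternates between consecutive intervals. -/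
open Set

lemma cont_ne_aux {S : Set ℝ} {g : ℝ → ℝ} (hg : ContinuousOn g S) {y₀ : ℝ} (hy₀ : y₀ ∈ S)
    (h : g y₀ ≠ 0) : ∃ ε > 0, ∀ y ∈ S, |y - y₀| < ε → g y ≠ 0 := by
  have h1 : g ⁻¹' ({0}ᶜ) ∈ nhdsWithin y₀ S :=
    (hg y₀ hy₀) (isOpen_compl_singleton.mem_nhds h)
  rw [Metric.mem_nhdsWithin_iff] at h1
  obtain ⟨ε, hε, hsub⟩ := h1
  exact ⟨ε, hε, fun y hy hlt => hsub ⟨Metric.mem_ball.2 (by simpa [Real.dist_eq] using hlt), hy⟩⟩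

lemma iso_aux (L₁ L₂ : ℝ) (hL : L₁ < L₂) :
    ∀ (k : ℕ) (g : ℝ → ℝ), ContDiffOn ℝ k g (Set.Icc L₁ L₂) →
    ∀ y₀ ∈ Set.Icc L₁ L₂, iteratedDerivWithin k g (Set.Icc L₁ L₂) y₀ ≠ 0 →
    ∃ ε > 0, ∀ y ∈ Set.Icc L₁ L₂, y ≠ y₀ → |y - y₀| < ε → g y ≠ 0 := by
  have hU : UniqueDiffOn ℝ (Set.Icc L₁ L₂) := uniqueDiffOn_Icc hL
  intro k
  induction k with
  | zero =>
    intro g hg y₀ hy₀ h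
    rw [iteratedDerivWithin_zero] at h
    obtain ⟨ε, hε, H⟩ := cont_ne_aux hg.continuousOn hy₀ h
    exact ⟨ε, hε, fun y hy _ => H y hy⟩
  | succ k ih =>
    intro g hg y₀ hy₀ h
    by_cases hg0 : g y₀ ≠ 0
    · obtain ⟨ε, hε, H⟩ := cont_ne_aux hg.continuousOn hy₀ hg0
      exact ⟨ε, hε, fun y hy _ => H y hy⟩
    push_neg at hg0
    set g' := derivWithin g (Set.Icc L₁ L₂) with hg'def
    have hg' : ContDiffOn ℝ k g' (Set.Icc L₁ L₂) := by
      apply hg.derivWithin hU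
      exact_mod_cast le_refl _
    have hiter : iteratedDerivWithin k g' (Set.Icc L₁ L₂) y₀ ≠ 0 := by
      rw [← iteratedDerivWithin_succ']; exact h
    obtain ⟨ε, hε, H⟩ := ih g' hg' y₀ hy₀ hiter
    -- differentiability giving HasDerivAt on interior
    have hdiff : ∀ x ∈ Ioo L₁ L₂, HasDerivAt g (g' x) x := by
      intro x hx
      have hx' : x ∈ Icc L₁ L₂ := Ioo_subset_Icc_self hx
      have := (hg.differentiableOn (by simp) x hx').hasDerivWithinAt
      exact this.hasDerivAt (Icc_mem_nhds hx.1 hx.2)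
    refine ⟨ε, hε, fun y hy hne hlt => ?_⟩
    rcases lt_or_gt_of_ne hne with hlt' | hlt'
    · -- y < y₀
      have hcont : ContinuousOn g (Icc y y₀) :=
        hg.continuousOn.mono (Icc_subset_Icc hy.1 hy₀.2)
      have hder : ∀ x ∈ Ioo y y₀, HasDerivAt g (g' x) x := fun x hx =>
        hdiff x ⟨lt_of_le_of_lt hy.1 hx.1, lt_of_lt_of_le hx.2 hy₀.2⟩
      obtain ⟨c, hc, hceq⟩ := exists_hasDerivAt_eq_slope g g' hlt' hcont hder
      have hcS : c ∈ Icc L₁ L₂ := ⟨le_of_lt (lt_of_le_of_lt hy.1 hc.1), le_of_lt (lt_of_lt_of_le hc.2 hy₀.2)⟩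
      have hcne : c ≠ y₀ := ne_of_lt hc.2
      have hclt : |c - y₀| < ε := by
        rw [abs_sub_lt_iff] at hlt ⊢
        constructor <;> nlinarith [hc.1, hc.2, hlt.1, hlt.2]
      have := H c hcS hcne hclt
      rw [hceq, hg0] at this
      intro hgy
      apply this
      rw [hgy]; simp
    · -- y₀ < y
      have hcont : ContinuousOn g (Icc y₀ y) :=
        hg.continuousOn.mono (Icc_subset_Icc hy₀.1 hy.2)
      have hder : ∀ x ∈ Ioo y₀ y, HasDerivAt g (g' x) x := fun x hx =>
        hdiff x ⟨lt_of_le_of_lt hy₀.1 hx.1, lt_of_lt_of_le hx.2 hy.2⟩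
      obtain ⟨c, hc, hceq⟩ := exists_hasDerivAt_eq_slope g g' hlt' hcont hder
      have hcS : c ∈ Icc L₁ L₂ := ⟨le_of_lt (lt_of_le_of_lt hy₀.1 hc.1), le_of_lt (lt_of_lt_of_le hc.2 hy.2)⟩
      have hcne : c ≠ y₀ := ne_of_gt hc.1
      have hclt : |c - y₀| < ε := by
        rw [abs_sub_lt_iff] at hlt ⊢
        constructor <;> nlinarith [hc.1, hc.2, hlt.1, hlt.2]
      have := H c hcS hcne hclt
      rw [hceq, hg0] at this
      intro hgy
      apply this
      rw [hgy]; simp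

lemma finite_zeros (m : ℕ) (hm : 1 ≤ m) (L₁ L₂ : ℝ) (hL : L₁ < L₂)
    (v : ℝ → ℝ) (hv : ContDiffOn ℝ m v (Set.Icc L₁ L₂))
    (hnd : ∀ y ∈ Set.Icc L₁ L₂,
      0 < ∑ j ∈ Finset.Icc 1 m, |iteratedDerivWithin j v (Set.Icc L₁ L₂) y|) :
    Set.Finite {y | y ∈ Set.Icc L₁ L₂ ∧ derivWithin v (Set.Icc L₁ L₂) y = 0} := by
  have hU : UniqueDiffOn ℝ (Set.Icc L₁ L₂) := uniqueDiffOn_Icc hL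
  set S := Set.Icc L₁ L₂ with hS
  set g := derivWithin v S with hg
  set Z := {y | y ∈ S ∧ g y = 0} with hZ
  have hgm : ContDiffOn ℝ (m - 1 : ℕ) g S := by
    apply hv.derivWithin hU
    exact_mod_cast Nat.cast_le.mpr (by omega : m - 1 + 1 ≤ m)
  have hgc : ContinuousOn g S := hgm.continuousOn
  have hZclosed : IsClosed Z := by
    have : Z = S ∩ g ⁻¹' {0} := rfl
    rw [this]
    exact hgc.preimage_isClosed_of_isClosed isClosed_Icc isClosed_singleton
  have hZcomp : IsCompact Z := isCompact_Icc.of_isClosed_subset hZclosed (fun y hy => hy.1)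
  have key : ∀ y, y ∈ Z → ∃ ε > 0, ∀ z ∈ Z, |z - y| < ε → z = y := by
    intro y hy
    obtain ⟨j, hjmem, hjne⟩ := Finset.exists_ne_zero_of_sum_ne_zero (ne_of_gt (hnd y hy.1))
    rw [Finset.mem_Icc] at hjmem
    have hjne' : iteratedDerivWithin j v S y ≠ 0 := fun h => hjne (by rw [h]; simp)
    have hiter : iteratedDerivWithin (j - 1) g S y ≠ 0 := by
      have : j = (j - 1) + 1 := by omega
      rw [this] at hjne'
      rwa [iteratedDerivWithin_succ'] at hjne'
    have hgk : ContDiffOn ℝ (j - 1 : ℕ) g S := hgm.of_le (by exact_mod_cast Nat.sub_le_sub_right hjmem.2 1)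
    obtain ⟨ε, hε, H⟩ := iso_aux L₁ L₂ hL (j - 1) g hgk y hy.1 hiter
    refine ⟨ε, hε, fun z hz hlt => ?_⟩
    by_contra hne
    exact H z hz.1 hne hlt hz.2
  choose! ε hε hsep using key
  obtain ⟨t, ht, hcov⟩ := hZcomp.elim_nhds_subcover
    (fun y => Metric.ball y (if y ∈ Z then ε y else 1))
    (fun y hy => Metric.ball_mem_nhds y (by simp [hy, hε y hy]))
  apply Set.Finite.subset t.finite_toSet
  intro z hz
  obtain ⟨y, hyt, hzball⟩ := by simpa using hcov hz
  have hyZ := ht y hyt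
  rw [Real.dist_eq, if_pos hyZ] at hzball
  have := hsep y hyZ z hz hzball
  rwa [this]

def DirOn (b : Bool) (v : ℝ → ℝ) (s : Set ℝ) : Prop :=
  if b then StrictMonoOn v s else StrictAntiOn v s

lemma strictMonoOn_concat {f : ℝ → ℝ} {a b c : ℝ} (hab : a ≤ b) (hbc : b ≤ c)
    (h1 : StrictMonoOn f (Icc a b)) (h2 : StrictMonoOn f (Icc b c)) :
    StrictMonoOn f (Icc a c) := by
  intro x hx y hy hxy
  rcases le_or_gt y b with hyb | hyb
  · exact h1 ⟨hx.1, hxy.le.trans hyb⟩ ⟨hx.1.trans hxy.le, hyb⟩ hxy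
  · rcases le_or_gt b x with hbx | hbx
    · exact h2 ⟨hbx, hx.2⟩ ⟨hyb.le, hy.2⟩ hxy
    · calc f x < f b := h1 ⟨hx.1, hbx.le⟩ ⟨hab, le_refl b⟩ hbx
        _ < f y := h2 ⟨le_refl b, hbc⟩ ⟨hyb.le, hy.2⟩ hyb

lemma strictAntiOn_concat {f : ℝ → ℝ} {a b c : ℝ} (hab : a ≤ b) (hbc : b ≤ c)
    (h1 : StrictAntiOn f (Icc a b)) (h2 : StrictAntiOn f (Icc b c)) :
    StrictAntiOn f (Icc a c) := by
  intro x hx y hy hxy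
  rcases le_or_gt y b with hyb | hyb
  · exact h1 ⟨hx.1, hxy.le.trans hyb⟩ ⟨hx.1.trans hxy.le, hyb⟩ hxy
  · rcases le_or_gt b x with hbx | hbx
    · exact h2 ⟨hbx, hx.2⟩ ⟨hyb.le, hy.2⟩ hxy
    · calc f y < f b := h2 ⟨le_refl b, hbc⟩ ⟨hyb.le, hy.2⟩ hyb
        _ < f x := h1 ⟨hx.1, hbx.le⟩ ⟨hab, le_refl b⟩ hbx

lemma dirOn_concat {d : Bool} {f : ℝ → ℝ} {a b c : ℝ} (hab : a ≤ b) (hbc : b ≤ c)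
    (h1 : DirOn d f (Icc a b)) (h2 : DirOn d f (Icc b c)) : DirOn d f (Icc a c) := by
  cases d
  · exact strictAntiOn_concat hab hbc h1 h2
  · exact strictMonoOn_concat hab hbc h1 h2

lemma key_merge (v : ℝ → ℝ) : ∀ (K : ℕ) (z : ℕ → ℝ), 0 < K → (∀ j < K, z j < z (j + 1)) →
    (∀ j < K, ∃ d : Bool, DirOn d v (Icc (z j) (z (j + 1)))) →
    ∃ N, 0 < N ∧ ∃ ys : ℕ → ℝ, ∃ b : Bool, ys 0 = z 0 ∧ ys N = z K ∧
      (∀ j < N, ys j < ys (j + 1)) ∧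
      ∀ j < N, DirOn (if Even j then b else !b) v (Icc (ys j) (ys (j + 1))) := by
  intro K
  induction K with
  | zero => omega
  | succ K ih =>
    intro z _ hinc hdir
    rcases Nat.eq_zero_or_pos K with hK | hK
    · subst hK
      obtain ⟨d, hd⟩ := hdir 0 (by omega)
      refine ⟨1, one_pos, z, d, rfl, rfl, fun j hj => ?_, fun j hj => ?_⟩
      · interval_cases j; exact hinc 0 (by omega)
      · interval_cases j; simpa using hd
    · obtain ⟨N, hN, ys, b, hys0, hysN, hysinc, hysdir⟩ :=
        ih (fun j => z (j + 1)) hK (fun j hj => hinc (j + 1) (by omega))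
          (fun j hj => hdir (j + 1) (by omega))
      obtain ⟨d, hd⟩ := hdir 0 (by omega)
      by_cases hdb : d = b
      · -- merge
        subst hdb
        refine ⟨N, hN, fun j => if j = 0 then z 0 else ys j, d, by simp, ?_, ?_, ?_⟩
        · simp only [if_neg hN.ne']
          exact hysN
        · intro j hj
          rcases Nat.eq_zero_or_pos j with h0 | h0
          · subst h0
            simp only [if_pos rfl, if_neg one_ne_zero]
            exact lt_trans (hys0 ▸ hinc 0 (by omega)) (hysinc 0 hN)
          · simp only [if_neg h0.ne', if_neg (by omega : j + 1 ≠ 0)]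
            exact hysinc j hj
        · intro j hj
          rcases Nat.eq_zero_or_pos j with h0 | h0
          · subst h0
            simp only [if_pos rfl, if_neg one_ne_zero, if_pos (Even.zero)]
            have h1 : DirOn d v (Icc (z 0) (ys 0)) := hys0 ▸ hd
            have h2 : DirOn d v (Icc (ys 0) (ys 1)) := by
              have := hysdir 0 hN
              simpa using this
            exact dirOn_concat (hys0 ▸ (hinc 0 (by omega)).le) (hysinc 0 hN).le h1 h2
          · simp only [if_neg h0.ne', if_neg (by omega : j + 1 ≠ 0)]
            exact hysdir j hj
      · -- prepend; d = !b
        have hdb' : d = !b := by cases d <;> cases b <;> simp_all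
        refine ⟨N + 1, by omega, fun j => if j = 0 then z 0 else ys (j - 1), d, by simp, ?_, ?_, ?_⟩
        · simp only [if_neg (by omega : N + 1 ≠ 0)]
          simpa using hysN
        · intro j hj
          rcases Nat.eq_zero_or_pos j with h0 | h0
          · subst h0
            simp only [if_pos rfl, if_neg one_ne_zero]
            simpa [hys0] using hinc 0 (by omega)
          · simp only [if_neg h0.ne', if_neg (by omega : j + 1 ≠ 0)]
            have : j + 1 - 1 = (j - 1) + 1 := by omega
            rw [this]
            exact hysinc (j - 1) (by omega)
        · intro j hj
          rcases Nat.eq_zero_or_pos j with h0 | h0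
          · subst h0
            simp only [if_pos rfl, if_neg one_ne_zero, if_pos Even.zero]
            simpa [hys0] using hd
          · obtain ⟨k, rfl⟩ : ∃ k, j = k + 1 := ⟨j - 1, by omega⟩
            simp only [if_neg (by omega : k + 1 ≠ 0), if_neg (by omega : k + 1 + 1 ≠ 0),
              Nat.add_sub_cancel, Nat.even_add_one]
            have hdk := hysdir k (by omega)
            subst hdb'
            by_cases hk : Even k
            · simpa [hk] using hdk
            · simpa [hk] using hdk

lemma sign_const {g : ℝ → ℝ} {a b : ℝ} (hc : ContinuousOn g (Ioo a b))
    (hne : ∀ x ∈ Ioo a b, g x ≠ 0) :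
    (∀ x ∈ Ioo a b, 0 < g x) ∨ (∀ x ∈ Ioo a b, g x < 0) := by
  by_contra h
  push_neg at h
  obtain ⟨⟨x₁, hx₁, h1⟩, ⟨x₂, hx₂, h2⟩⟩ := h
  have h1' : g x₁ < 0 := lt_of_le_of_ne h1 (hne x₁ hx₁)
  have h2' : 0 < g x₂ := lt_of_le_of_ne h2 (Ne.symm (hne x₂ hx₂))
  rcases le_total x₁ x₂ with hle | hle
  · have hsub : Icc x₁ x₂ ⊆ Ioo a b := Icc_subset_Ioo hx₁.1 hx₂.2
    obtain ⟨c, hc', hgc⟩ := intermediate_value_Icc hle (hc.mono hsub)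
      (⟨h1'.le, h2'.le⟩ : (0:ℝ) ∈ Icc (g x₁) (g x₂))
    exact hne c (hsub hc') hgc
  · have hsub : Icc x₂ x₁ ⊆ Ioo a b := Icc_subset_Ioo hx₂.1 hx₁.2
    obtain ⟨c, hc', hgc⟩ := intermediate_value_Icc' hle (hc.mono hsub)
      (⟨h1'.le, h2'.le⟩ : (0:ℝ) ∈ Icc (g x₁) (g x₂))
    exact hne c (hsub hc') hgc

lemma dir_of_deriv_ne {v : ℝ → ℝ} {L₁ L₂ a b : ℝ} (hab : a < b)
    (hsub : Icc a b ⊆ Icc L₁ L₂) (hsub' : Ioo a b ⊆ Ioo L₁ L₂)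
    (hcv : ContinuousOn v (Icc L₁ L₂))
    (hcg : ContinuousOn (derivWithin v (Icc L₁ L₂)) (Icc L₁ L₂))
    (hne : ∀ x ∈ Ioo a b, derivWithin v (Icc L₁ L₂) x ≠ 0) :
    ∃ d : Bool, DirOn d v (Icc a b) := by
  set g := derivWithin v (Icc L₁ L₂) with hg
  have hder : ∀ x ∈ Ioo a b, deriv v x = g x := by
    intro x hx
    rw [hg, derivWithin_of_mem_nhds]
    exact Icc_mem_nhds (hsub' hx).1 (hsub' hx).2
  have hcont : ContinuousOn v (Icc a b) := hcv.mono hsub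
  rcases sign_const (hcg.mono (fun x hx => hsub (Ioo_subset_Icc_self hx))) hne with hpos | hneg
  · refine ⟨true, ?_⟩
    show StrictMonoOn v (Icc a b)
    apply strictMonoOn_of_deriv_pos (convex_Icc a b) hcont
    intro x hx
    rw [interior_Icc] at hx
    rw [hder x hx]
    exact hpos x hx
  · refine ⟨false, ?_⟩
    show StrictAntiOn v (Icc a b)
    apply strictAntiOn_of_deriv_neg (convex_Icc a b) hcont
    intro x hx
    rw [interior_Icc] at hx
    rw [hder x hx]
    exact hneg x hx

/-- piecewise strict monotonicity.  If `v ∈ C^m([L₁,L₂])` satisfies the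
`m`-th order non-degeneracy condition, then there is a partition
`L₁ = y₀ < y₁ < ⋯ < y_N = L₂` such that `v` is strictly monotone on each `[y_{j−1}, y_j]`,
with alternating direction of monotonicity on consecutive intervals. -/
theorem piecewise_strict_monotonicity
    (m : ℕ) (hm : 1 ≤ m) (L₁ L₂ : ℝ) (hL : L₁ < L₂)
    (v : ℝ → ℝ) (hv : ContDiffOn ℝ m v (Set.Icc L₁ L₂))
    (hnd : ∀ y ∈ Set.Icc L₁ L₂,
      0 < ∑ j ∈ Finset.Icc 1 m, |iteratedDerivWithin j v (Set.Icc L₁ L₂) y|) :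
    ∃ N : ℕ, 0 < N ∧ ∃ ys : ℕ → ℝ,
      ys 0 = L₁ ∧ ys N = L₂ ∧ (∀ j < N, ys j < ys (j + 1)) ∧
      ((∀ j < N,
          if Even j then StrictMonoOn v (Set.Icc (ys j) (ys (j + 1)))
          else StrictAntiOn v (Set.Icc (ys j) (ys (j + 1)))) ∨
       (∀ j < N,
          if Even j then StrictAntiOn v (Set.Icc (ys j) (ys (j + 1)))
          else StrictMonoOn v (Set.Icc (ys j) (ys (j + 1))))) := by
  have hU : UniqueDiffOn ℝ (Set.Icc L₁ L₂) := uniqueDiffOn_Icc hL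
  have hZfin : Set.Finite {y | y ∈ Set.Icc L₁ L₂ ∧ derivWithin v (Set.Icc L₁ L₂) y = 0} :=
    finite_zeros m hm L₁ L₂ hL v hv hnd
  set F : Finset ℝ := insert L₁ (insert L₂ hZfin.toFinset) with hFdef
  have hL₁F : L₁ ∈ F := Finset.mem_insert_self _ _
  have hL₂F : L₂ ∈ F := Finset.mem_insert_of_mem (Finset.mem_insert_self _ _)
  have hFsub : ∀ x ∈ F, x ∈ Set.Icc L₁ L₂ := by
    intro x hx
    rcases Finset.mem_insert.mp hx with rfl | h
    · exact ⟨le_refl _, hL.le⟩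
    rcases Finset.mem_insert.mp h with rfl | h'
    · exact ⟨hL.le, le_refl _⟩
    · exact (Set.Finite.mem_toFinset hZfin |>.mp h').1
  set n := F.card with hn
  have hn2 : 1 < n := Finset.one_lt_card.mpr ⟨L₁, hL₁F, L₂, hL₂F, hL.ne⟩
  set e := F.orderIsoOfFin (rfl : F.card = n) with hedef
  set z : ℕ → ℝ := fun j => ((e ⟨min j (n - 1), by omega⟩ : {x // x ∈ F}) : ℝ) with hzdef
  have hzval : ∀ (j : ℕ) (h : j < n), z j = ((e ⟨j, h⟩ : {x // x ∈ F}) : ℝ) := by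
    intro j h
    have heq : (⟨min j (n - 1), by omega⟩ : Fin n) = ⟨j, h⟩ :=
      Fin.ext (by show min j (n - 1) = j; omega)
    simp only [hzdef, heq]
  have hzmemF : ∀ j : ℕ, z j ∈ F := fun j => (e _).2
  have hzmemS : ∀ j : ℕ, z j ∈ Set.Icc L₁ L₂ := fun j => hFsub _ (hzmemF j)
  have hzinc : ∀ j < n - 1, z j < z (j + 1) := by
    intro j hj
    rw [hzval j (by omega), hzval (j + 1) (by omega)]
    exact Subtype.coe_lt_coe.mpr (e.lt_iff_lt.mpr (by simp [Fin.lt_def]))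
  have hz0 : z 0 = L₁ := by
    rw [hzval 0 (by omega)]
    have h1 : ((e ⟨0, by omega⟩ : {x // x ∈ F}) : ℝ) ≤ L₁ := by
      have := e.monotone (show (⟨0, by omega⟩ : Fin n) ≤ e.symm ⟨L₁, hL₁F⟩ from Fin.mk_le_mk.mpr (Nat.zero_le _))
      rw [e.apply_symm_apply] at this
      exact Subtype.coe_le_coe.mpr this
    exact le_antisymm h1 (hFsub _ (e _).2).1
  have hzK : z (n - 1) = L₂ := by
    rw [hzval (n - 1) (by omega)]
    have h1 : L₂ ≤ ((e ⟨n - 1, by omega⟩ : {x // x ∈ F}) : ℝ) := by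
      have hlt : (e.symm ⟨L₂, hL₂F⟩).val < n := (e.symm ⟨L₂, hL₂F⟩).isLt
      have := e.monotone (show e.symm ⟨L₂, hL₂F⟩ ≤ (⟨n - 1, by omega⟩ : Fin n) from
        Fin.le_def.mpr (by simp only [Fin.val_mk]; omega))
      rw [e.apply_symm_apply] at this
      exact Subtype.coe_le_coe.mpr this
    exact le_antisymm (hFsub _ (e _).2).2 h1
  have hcv : ContinuousOn v (Set.Icc L₁ L₂) := hv.continuousOn
  have hcg : ContinuousOn (derivWithin v (Set.Icc L₁ L₂)) (Set.Icc L₁ L₂) := by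
    have : ContDiffOn ℝ (m - 1 : ℕ) (derivWithin v (Set.Icc L₁ L₂)) (Set.Icc L₁ L₂) := by
      apply hv.derivWithin hU
      exact_mod_cast Nat.cast_le.mpr (by omega : m - 1 + 1 ≤ m)
    exact this.continuousOn
  have hdirs : ∀ j < n - 1, ∃ d : Bool, DirOn d v (Icc (z j) (z (j + 1))) := by
    intro j hj
    apply dir_of_deriv_ne (hzinc j hj)
      (Icc_subset_Icc (hzmemS j).1 (hzmemS (j + 1)).2)
      (Ioo_subset_Ioo (hzmemS j).1 (hzmemS (j + 1)).2) hcv hcg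
    intro x hx hgx
    have hxS : x ∈ Set.Icc L₁ L₂ :=
      ⟨(hzmemS j).1.trans hx.1.le, hx.2.le.trans (hzmemS (j + 1)).2⟩
    have hxF : x ∈ F := by
      apply Finset.mem_insert_of_mem
      apply Finset.mem_insert_of_mem
      exact (Set.Finite.mem_toFinset hZfin).mpr ⟨hxS, hgx⟩
    set i : Fin n := e.symm ⟨x, hxF⟩ with hi
    have hxe : ((e i : {x // x ∈ F}) : ℝ) = x := by rw [e.apply_symm_apply]
    have h1 : j < i.val := by
      have hlt : z j < ((e i : {x // x ∈ F}) : ℝ) := by rw [hxe]; exact hx.1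
      rw [hzval j (by omega)] at hlt
      have := e.lt_iff_lt.mp (Subtype.coe_lt_coe.mp hlt)
      simpa [Fin.lt_def] using this
    have h2 : i.val < j + 1 := by
      have hlt : ((e i : {x // x ∈ F}) : ℝ) < z (j + 1) := by rw [hxe]; exact hx.2
      rw [hzval (j + 1) (by omega)] at hlt
      have := e.lt_iff_lt.mp (Subtype.coe_lt_coe.mp hlt)
      simpa [Fin.lt_def] using this
    omega
  obtain ⟨N, hN, ys, b, hys0, hysN, hysinc, hysdir⟩ :=
    key_merge v (n - 1) z (by omega) hzinc hdirs
  refine ⟨N, hN, ys, by rw [hys0, hz0], by rw [hysN, hzK], hysinc, ?_⟩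
  cases b
  · right
    intro j hj
    have := hysdir j hj
    by_cases hEv : Even j
    · rw [if_pos hEv]
      simpa [DirOn, hEv] using this
    · rw [if_neg hEv]
      simpa [DirOn, hEv] using this
  · left
    intro j hj
    have := hysdir j hj
    by_cases hEv : Even j
    · rw [if_pos hEv]
      simpa [DirOn, hEv] using this
    · rw [if_neg hEv]
      simpa [DirOn, hEv] using this
end

section
/- Let m ≥ 1 and L₁ < L₂ be real numbers, and let v : [L₁, L₂] → ℝ be a C^m function satisfying |v'(y)| + |v''(y)| + ⋯ + |v^{(m)}(y)| > 0 for all y ∈ [L₁, L₂]. Then the cardinality of the level sets of v is uniformly bounded: there exists N₀ ∈ ℕ* such that for every λ ∈ ℝ, the set E_λ = {y ∈ [L₁, L₂] : v(y) = λ} is finite with card(E_λ) ≤ N₀. -/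
open Set

/-- Counting: if `f` is a chain of derivatives and `f k` never vanishes on `[c,d] ⊆ [L₁,L₂]`,
then any finset inside the zero set of `f 0` on `[c,d]` has at most `k` elements. -/
theorem count_aux (L₁ L₂ : ℝ) :
    ∀ (k : ℕ) (f : ℕ → ℝ → ℝ) (c d : ℝ), Set.Icc c d ⊆ Set.Icc L₁ L₂ →
    (∀ i ≤ k, ContinuousOn (f i) (Set.Icc c d)) →
    (∀ i < k, ∀ x ∈ Set.Ioo L₁ L₂, HasDerivAt (f i) (f (i+1) x) x) →
    (∀ x ∈ Set.Icc c d, f k x ≠ 0) →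
    ∀ T : Finset ℝ, ↑T ⊆ {x ∈ Set.Icc c d | f 0 x = 0} → T.card ≤ k := by
  intro k
  induction k with
  | zero =>
    intro f c d _ _ _ hk T hT
    rcases Finset.eq_empty_or_nonempty T with h | ⟨x, hx⟩
    · simp [h]
    · exact absurd (hT hx).2 (hk x (hT hx).1)
  | succ k ih =>
    intro f c d hcd hcont hder hk T hT
    by_contra hcard
    push_neg at hcard
    have hle : k + 2 ≤ T.card := hcard
    set e : Fin (k+2) ↪o ℝ := T.orderEmbOfCardLe hle with he
    have heZ : ∀ j, (e j) ∈ {x ∈ Set.Icc c d | f 0 x = 0} :=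
      fun j => hT (T.orderEmbOfCardLe_mem hle j)
    have rolle : ∀ j : Fin (k+1),
        ∃ p ∈ Set.Ioo (e j.castSucc) (e j.succ), f 1 p = 0 := by
      intro j
      have hab : e j.castSucc < e j.succ := e.strictMono (Fin.castSucc_lt_succ : j.castSucc < j.succ)
      have hmem1 := heZ j.castSucc
      have hmem2 := heZ j.succ
      have hsub : Set.Icc (e j.castSucc) (e j.succ) ⊆ Set.Icc c d :=
        Set.Icc_subset_Icc hmem1.1.1 hmem2.1.2
      refine exists_hasDerivAt_eq_zero hab ((hcont 0 (by omega)).mono hsub)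
        (by rw [hmem1.2, hmem2.2]) ?_
      intro x hx
      refine hder 0 (by omega) x ?_
      have hL1 : L₁ ≤ e j.castSucc := (hcd hmem1.1).1
      have hL2 : e j.succ ≤ L₂ := (hcd hmem2.1).2
      exact ⟨lt_of_le_of_lt hL1 hx.1, lt_of_lt_of_le hx.2 hL2⟩
    choose p hp hp0 using rolle
    have hpmono : StrictMono p := by
      intro j₁ j₂ hjj
      calc p j₁ < e j₁.succ := (hp j₁).2
        _ ≤ e j₂.castSucc := e.monotone (by
            simp only [Fin.le_def, Fin.val_succ, Fin.coe_castSucc]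
            exact hjj)
        _ < p j₂ := (hp j₂).1
    set F : Finset ℝ := Finset.image p Finset.univ with hF
    have hFcard : F.card = k + 1 := by
      rw [hF, Finset.card_image_of_injective _ hpmono.injective, Finset.card_univ,
        Fintype.card_fin]
    have hFsub : ↑F ⊆ {x ∈ Set.Icc c d | f 1 x = 0} := by
      intro x hx
      simp only [hF, Finset.coe_image, Set.mem_image, Finset.coe_univ, Set.image_univ,
        Set.mem_range] at hx
      obtain ⟨j, rfl⟩ := hx
      refine ⟨⟨?_, ?_⟩, hp0 j⟩
      · exact le_trans (heZ j.castSucc).1.1 (hp j).1.le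
      · exact le_trans (hp j).2.le (heZ j.succ).1.2
    have := ih (fun i => f (i+1)) c d hcd
      (fun i hi => hcont (i+1) (by omega))
      (fun i hi x hx => hder (i+1) (by omega) x hx)
      hk F hFsub
    omega

theorem count_fin (L₁ L₂ : ℝ) (k : ℕ) (f : ℕ → ℝ → ℝ) (c d : ℝ)
    (hcd : Set.Icc c d ⊆ Set.Icc L₁ L₂)
    (hcont : ∀ i ≤ k, ContinuousOn (f i) (Set.Icc c d))
    (hder : ∀ i < k, ∀ x ∈ Set.Ioo L₁ L₂, HasDerivAt (f i) (f (i+1) x) x)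
    (hk : ∀ x ∈ Set.Icc c d, f k x ≠ 0) :
    {x ∈ Set.Icc c d | f 0 x = 0}.Finite ∧
      {x ∈ Set.Icc c d | f 0 x = 0}.ncard ≤ k := by
  have hb := count_aux L₁ L₂ k f c d hcd hcont hder hk
  have hfin : {x ∈ Set.Icc c d | f 0 x = 0}.Finite := by
    by_contra h
    have hinf : {x ∈ Set.Icc c d | f 0 x = 0}.Infinite := h
    obtain ⟨T, hTs, hTc⟩ := hinf.exists_subset_card_eq (k+1)
    have := hb T hTs
    omega
  refine ⟨hfin, ?_⟩
  have := hb hfin.toFinset (by rw [Set.Finite.coe_toFinset])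
  rwa [Set.ncard_eq_toFinset_card _ hfin]

theorem ncard_biUnion_le' {ι : Type*} [DecidableEq ι] (t : Finset ι) (A : ι → Set ℝ) (n : ℕ)
    (h : ∀ i ∈ t, (A i).Finite ∧ (A i).ncard ≤ n) :
    (⋃ i ∈ t, A i).Finite ∧ (⋃ i ∈ t, A i).ncard ≤ t.card * n := by
  induction t using Finset.induction with
  | empty => simp
  | @insert a s ha ih =>
    have h1 := h a (Finset.mem_insert_self a s)
    have h2 := ih (fun i hi => h i (Finset.mem_insert_of_mem hi))
    rw [Finset.set_biUnion_insert]
    constructor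
    · exact h1.1.union h2.1
    · calc (A a ∪ ⋃ i ∈ s, A i).ncard ≤ (A a).ncard + (⋃ i ∈ s, A i).ncard :=
            Set.ncard_union_le _ _
        _ ≤ n + s.card * n := Nat.add_le_add h1.2 h2.2
        _ = (insert a s).card * n := by
            rw [Finset.card_insert_of_notMem ha]; ring

/-- uniformly finite level sets.  If `v ∈ C^m([L₁,L₂])` satisfies the
`m`-th order non-degeneracy condition, then there is `N₀ ∈ ℕ*` such that for every
`λ ∈ ℝ` the level set `E_λ = {y ∈ [L₁,L₂] : v(y) = λ}` is finite with at most `N₀`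
elements. -/
theorem level_sets_uniformly_finite
    (m : ℕ) (hm : 1 ≤ m) (L₁ L₂ : ℝ) (hL : L₁ < L₂)
    (v : ℝ → ℝ) (hv : ContDiffOn ℝ m v (Set.Icc L₁ L₂))
    (hnd : ∀ y ∈ Set.Icc L₁ L₂,
      0 < ∑ j ∈ Finset.Icc 1 m, |iteratedDerivWithin j v (Set.Icc L₁ L₂) y|) :
    ∃ N₀ : ℕ, 0 < N₀ ∧ ∀ lam : ℝ,
      {y ∈ Set.Icc L₁ L₂ | v y = lam}.Finite ∧
      {y ∈ Set.Icc L₁ L₂ | v y = lam}.ncard ≤ N₀ := by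
  set s := Set.Icc L₁ L₂ with hs_def
  have hus : UniqueDiffOn ℝ s := uniqueDiffOn_Icc hL
  set g : ℕ → ℝ → ℝ := fun j => iteratedDerivWithin j v s with hg
  -- continuity of derivatives
  have hcont : ∀ j ≤ m, ContinuousOn (g j) s := fun j hj =>
    hv.continuousOn_iteratedDerivWithin (by exact_mod_cast hj) hus
  -- derivatives at interior points
  have hder : ∀ j < m, ∀ x ∈ Set.Ioo L₁ L₂, HasDerivAt (g j) (g (j+1) x) x := by
    intro j hj x hx
    have hxs : x ∈ s := Set.Ioo_subset_Icc_self hx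
    have hdiff : DifferentiableWithinAt ℝ (g j) s x :=
      (hv.differentiableOn_iteratedDerivWithin (by exact_mod_cast hj) hus) x hxs
    have h1 : HasDerivWithinAt (g j) (derivWithin (g j) s x) s x :=
      hdiff.hasDerivWithinAt
    have h2 : g (j+1) x = derivWithin (g j) s x := congrFun iteratedDerivWithin_succ x
    rw [h2]
    exact h1.hasDerivAt (Icc_mem_nhds hx.1 hx.2)
  -- for each point, some derivative of order in [1,m] is nonzero
  have hex : ∀ y ∈ s, ∃ j, 1 ≤ j ∧ j ≤ m ∧ g j y ≠ 0 := by
    intro y hy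
    by_contra h
    push_neg at h
    have : ∑ j ∈ Finset.Icc 1 m, |g j y| = 0 := by
      apply Finset.sum_eq_zero
      intro j hj
      rw [Finset.mem_Icc] at hj
      rw [h j hj.1 hj.2, abs_zero]
    have h2 := hnd y hy
    simp only [hg] at this
    linarith
  -- choose radii via continuity
  have hrad : ∀ y ∈ s, ∃ j, 1 ≤ j ∧ j ≤ m ∧ ∃ ε > 0,
      ∀ x ∈ Metric.ball y ε ∩ s, g j x ≠ 0 := by
    intro y hy
    obtain ⟨j, hj1, hjm, hjy⟩ := hex y hy
    refine ⟨j, hj1, hjm, ?_⟩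
    have hcw : ContinuousWithinAt (g j) s y := (hcont j hjm) y hy
    have hev : {x | g j x ≠ 0} ∈ nhdsWithin y s :=
      hcw (isOpen_compl_singleton.mem_nhds hjy)
    rw [Metric.mem_nhdsWithin_iff] at hev
    obtain ⟨ε, hε, hsub⟩ := hev
    exact ⟨ε, hε, fun x hx => hsub hx⟩
  classical
  choose! J hJ1 hJm ε hε hball using hrad
  -- compact cover
  have hcompact : IsCompact s := isCompact_Icc
  obtain ⟨t, hts, hcover⟩ := hcompact.elim_nhds_subcover
    (fun y => Metric.ball y (ε y / 2))
    (fun y hy => Metric.ball_mem_nhds y (by linarith [hε y hy]))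
  refine ⟨t.card * m + 1, Nat.succ_pos _, ?_⟩
  intro lam
  -- the chain for v - lam
  set f : ℕ → ℝ → ℝ := fun i => if i = 0 then (fun x => v x - lam) else g i with hf
  -- pieces
  set a : ℝ → ℝ := fun y => max L₁ (y - ε y / 2) with ha
  set b : ℝ → ℝ := fun y => min L₂ (y + ε y / 2) with hb
  have hpiece : ∀ y ∈ t, {x ∈ Set.Icc (a y) (b y) | v x = lam}.Finite ∧
      {x ∈ Set.Icc (a y) (b y) | v x = lam}.ncard ≤ m := by
    intro y hyt
    have hy : y ∈ s := hts y hyt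
    have hsub : Set.Icc (a y) (b y) ⊆ s := fun x hx =>
      ⟨le_trans (le_max_left _ _) hx.1, le_trans hx.2 (min_le_left _ _)⟩
    have hballsub : Set.Icc (a y) (b y) ⊆ Metric.ball y (ε y) ∩ s := by
      intro x hx
      refine ⟨?_, hsub hx⟩
      rw [Metric.mem_ball, Real.dist_eq, abs_lt]
      have h1 : y - ε y / 2 ≤ x := le_trans (le_max_right _ _) hx.1
      have h2 : x ≤ y + ε y / 2 := le_trans hx.2 (min_le_right _ _)
      have := hε y hy
      constructor <;> linarith
    have hcont' : ∀ i ≤ J y, ContinuousOn (f i) (Set.Icc (a y) (b y)) := by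
      intro i hi
      rcases Nat.eq_zero_or_pos i with rfl | hi0
      · have hc0 : ContinuousOn (fun x => v x - lam) (Set.Icc (a y) (b y)) := fun x hx =>
          ((hv.continuousOn.mono hsub) x hx).sub continuousWithinAt_const
        simpa [hf] using hc0
      · have : f i = g i := by simp [hf, Nat.pos_iff_ne_zero.mp hi0]
        rw [this]
        exact (hcont i (le_trans hi (hJm y hy))).mono hsub
    have hder' : ∀ i < J y, ∀ x ∈ Set.Ioo L₁ L₂, HasDerivAt (f i) (f (i+1) x) x := by
      intro i hi x hx
      rcases Nat.eq_zero_or_pos i with rfl | hi0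
      · have h1 : HasDerivAt v (g 1 x) x := by
          have := hder 0 (by omega) x hx
          simpa [hg, iteratedDerivWithin_zero] using this
        have : f 0 = fun x => v x - lam := by simp [hf]
        rw [this]
        have hf1 : f 1 = g 1 := by simp [hf]
        rw [hf1]
        exact h1.sub_const lam
      · have h1 : f i = g i := by simp [hf, Nat.pos_iff_ne_zero.mp hi0]
        have h2 : f (i+1) = g (i+1) := by simp [hf]
        rw [h1, h2]
        exact hder i (lt_of_lt_of_le hi (hJm y hy)) x hx
    have hk' : ∀ x ∈ Set.Icc (a y) (b y), f (J y) x ≠ 0 := by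
      intro x hx
      have : f (J y) = g (J y) := by
        simp [hf, Nat.pos_iff_ne_zero.mp (hJ1 y hy)]
      rw [this]
      exact hball y hy x (hballsub hx)
    have hcount := count_fin L₁ L₂ (J y) f (a y) (b y)
      (le_trans hsub (le_refl s)) hcont' hder' hk'
    have hset : {x ∈ Set.Icc (a y) (b y) | f 0 x = 0} =
        {x ∈ Set.Icc (a y) (b y) | v x = lam} := by
      ext x
      simp [hf, sub_eq_zero]
    rw [hset] at hcount
    exact ⟨hcount.1, le_trans hcount.2 (hJm y hy)⟩
  -- union bound
  have hbig := ncard_biUnion_le' t (fun y => {x ∈ Set.Icc (a y) (b y) | v x = lam}) m hpiece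
  have hZsub : {x ∈ s | v x = lam} ⊆ ⋃ y ∈ t, {x ∈ Set.Icc (a y) (b y) | v x = lam} := by
    intro x hx
    have hxs : x ∈ s := hx.1
    have := hcover hxs
    rw [Set.mem_iUnion₂] at this
    obtain ⟨y, hyt, hxy⟩ := this
    rw [Set.mem_iUnion₂]
    refine ⟨y, hyt, ⟨?_, hx.2⟩⟩
    rw [Metric.mem_ball, Real.dist_eq, abs_lt] at hxy
    constructor
    · exact max_le hxs.1 (by linarith [hxy.1])
    · exact le_min hxs.2 (by linarith [hxy.2])
  constructor
  · exact hbig.1.subset hZsub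
  · calc {x ∈ s | v x = lam}.ncard
        ≤ (⋃ y ∈ t, {x ∈ Set.Icc (a y) (b y) | v x = lam}).ncard :=
          Set.ncard_le_ncard hZsub hbig.1
      _ ≤ t.card * m := hbig.2
      _ ≤ t.card * m + 1 := Nat.le_succ _
end

section
/- Let m ≥ 1 and L₁ < L₂ be real numbers, and let v : [L₁, L₂] → ℝ be a C^m function satisfying |v'(y)| + ⋯ + |v^{(m)}(y)| > 0 for all y ∈ [L₁, L₂]. Let v₁ = min_{[L₁,L₂]} v and v₂ = max_{[L₁,L₂]} v; then v₁ < v₂, and for every λ ∈ [v₁, v₂] there exist δ₀(λ) > 0 and C(λ) > 0 such that for every λ' ∈ (λ − δ₀(λ)^m, λ + δ₀(λ)^m) and every δ ∈ (0, δ₀(λ)], the Lebesgue measure of the set E^m_{λ',δ} = {y ∈ [L₁, L₂] : |v(y) − λ'| < δ^m} satisfies m(E^m_{λ',δ}) ≤ C(λ) δ. -/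
open Set MeasureTheory

lemma vol_le_of_dist_le {S : Set ℝ} {d : ℝ}
    (h : ∀ y ∈ S, ∀ z ∈ S, |y - z| ≤ d) :
    volume S ≤ ENNReal.ofReal (2 * d) := by
  rcases S.eq_empty_or_nonempty with rfl | ⟨y₀, hy₀⟩
  · simp
  · have hsub : S ⊆ Set.Icc (y₀ - d) (y₀ + d) := by
      intro z hz
      have h2 := abs_le.1 (h z hz y₀ hy₀)
      exact ⟨by linarith [h2.2], by linarith [h2.1]⟩
    calc volume S ≤ volume (Set.Icc (y₀ - d) (y₀ + d)) := measure_mono hsub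
      _ = ENNReal.ofReal (2 * d) := by rw [Real.volume_Icc]; ring_nf

lemma sign_dichotomy {s : Set ℝ} (hs : Convex ℝ s) {g : ℝ → ℝ} (hg : ContinuousOn g s)
    {c : ℝ} (hc : 0 < c) (hlb : ∀ x ∈ s, c ≤ |g x|) :
    (∀ x ∈ s, c ≤ g x) ∨ (∀ x ∈ s, c ≤ -g x) := by
  by_contra hcon
  push_neg at hcon
  obtain ⟨⟨a, ha, ha'⟩, ⟨b, hb, hb'⟩⟩ := hcon
  have h1 : g a ≤ -c := by
    rcases abs_cases (g a) with h | h <;> [linarith [hlb a ha, h.1]; linarith [hlb a ha, h.1]]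
  have h2 : c ≤ g b := by
    rcases abs_cases (g b) with h | h <;> [linarith [hlb b hb, h.1]; linarith [hlb b hb, h.1]]
  have := hs.isPreconnected.intermediate_value ha hb hg
    (show (0:ℝ) ∈ Set.Icc (g a) (g b) from ⟨by linarith, by linarith⟩)
  obtain ⟨x, hx, hgx⟩ := this
  have := hlb x hx
  rw [hgx] at this
  simp at this
  linarith

noncomputable def Csub : ℕ → ℝ
  | 0 => 4
  | (k+1) => 2 * Csub k + 4

lemma Csub_pos (k : ℕ) : 0 < Csub k := by
  induction k with
  | zero => norm_num [Csub]
  | succ k ih => simp only [Csub]; linarith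

/-- From a lower bound on the derivative magnitude, a two-sided growth bound. -/
lemma key_growth {s : Set ℝ} (hs : Convex ℝ s) {f g : ℝ → ℝ} {c : ℝ} (hc : 0 < c)
    (hder : ∀ x ∈ s, HasDerivWithinAt f (g x) s x)
    (hcont : ContinuousOn g s) (hlb : ∀ x ∈ s, c ≤ |g x|) :
    (∀ y ∈ s, ∀ z ∈ s, y ≤ z → c * (z - y) ≤ f z - f y) ∨
    (∀ y ∈ s, ∀ z ∈ s, y ≤ z → c * (z - y) ≤ f y - f z) := by
  have hcf : ContinuousOn f s := fun x hx => (hder x hx).differentiableWithinAt.continuousWithinAt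
  have hdiff : DifferentiableOn ℝ f (interior s) := fun x hx =>
    (((hder x (interior_subset hx)).hasDerivAt
      (mem_interior_iff_mem_nhds.1 hx)).differentiableAt).differentiableWithinAt
  rcases sign_dichotomy hs hcont hc hlb with hpos | hneg
  · left
    intro y hy z hz hyz
    exact hs.mul_sub_le_image_sub_of_le_deriv hcf hdiff
      (fun x hx => by
        rw [((hder x (interior_subset hx)).hasDerivAt (mem_interior_iff_mem_nhds.1 hx)).deriv]
        exact hpos x (interior_subset hx)) y hy z hz hyz
  · right
    intro y hy z hz hyz
    have := hs.mul_sub_le_image_sub_of_le_deriv (f := fun t => -f t) hcf.neg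
      (hdiff.neg)
      (fun x hx => by
        rw [show deriv (fun t => -f t) x = -g x from (((hder x (interior_subset hx)).neg).hasDerivAt
          (mem_interior_iff_mem_nhds.1 hx)).deriv]
        exact hneg x (interior_subset hx)) y hy z hz hyz
    linarith

/-- Van der Corput type sublevel set estimate. -/
lemma sublevel (k : ℕ) (F : ℕ → ℝ → ℝ) (s : Set ℝ) (hs : Convex ℝ s)
    (c ε r : ℝ) (hc : 0 < c) (hε : 0 < ε) (hr : 0 < r)
    (hchain : ∀ i ≤ k, ∀ x ∈ s, HasDerivWithinAt (F i) (F (i+1) x) s x)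
    (hcont : ContinuousOn (F (k+1)) s)
    (hlb : ∀ x ∈ s, c ≤ |F (k+1) x|)
    (hεr : ε ≤ c * r ^ (k+1)) :
    volume {y ∈ s | |F 0 y| < ε} ≤ ENNReal.ofReal (Csub k * r) := by
  induction k generalizing s c with
  | zero =>
    norm_num at hεr
    have hg := key_growth hs hc (fun x hx => hchain 0 le_rfl x hx) hcont hlb
    have hkey : ∀ y ∈ s, ∀ z ∈ s, y ≤ z → c * (z - y) ≤ |F 0 z - F 0 y| := by
      rcases hg with h | h
      · exact fun y hy z hz hyz => (h y hy z hz hyz).trans (le_abs_self _)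
      · exact fun y hy z hz hyz => (h y hy z hz hyz).trans (by rw [abs_sub_comm]; exact le_abs_self _)
    have hd : ∀ y ∈ {y ∈ s | |F 0 y| < ε}, ∀ z ∈ {y ∈ s | |F 0 y| < ε}, |y - z| ≤ 2 * r := by
      have main : ∀ y ∈ {y ∈ s | |F 0 y| < ε}, ∀ z ∈ {y ∈ s | |F 0 y| < ε},
          y ≤ z → z - y ≤ 2 * r := by
        intro y hy z hz hyz
        have h1 := hkey y hy.1 z hz.1 hyz
        have h2 : |F 0 z - F 0 y| < 2 * ε :=
          (abs_sub _ _).trans_lt (by linarith [hy.2, hz.2])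
        have h3 : c * (z - y) < 2 * (c * r) := by
          calc c * (z - y) ≤ |F 0 z - F 0 y| := h1
            _ < 2 * ε := h2
            _ ≤ 2 * (c * r) := by linarith
        nlinarith
      intro y hy z hz
      rcases le_total y z with h | h
      · rw [abs_sub_comm, abs_of_nonneg (by linarith)]; exact main y hy z hz h
      · rw [abs_of_nonneg (by linarith)]; exact main z hz y hy h
    calc volume {y ∈ s | |F 0 y| < ε} ≤ ENNReal.ofReal (2 * (2 * r)) := vol_le_of_dist_le hd
      _ = ENNReal.ofReal (Csub 0 * r) := by
          congr 1
          simp only [Csub]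
          ring
  | succ k IH =>
    set ρ : ℝ := c * r with hρdef
    have hρ : 0 < ρ := mul_pos hc hr
    -- growth for F (k+1)
    have hcontk1 : ContinuousOn (F (k+1)) s := fun x hx =>
      (hchain (k+1) le_rfl x hx).differentiableWithinAt.continuousWithinAt
    have hg := key_growth hs hc (fun x hx => hchain (k+1) le_rfl x hx) hcont hlb
    -- monotonicity direction
    have hmono : (∀ y ∈ s, ∀ z ∈ s, y ≤ z → F (k+1) y ≤ F (k+1) z) ∨
        (∀ y ∈ s, ∀ z ∈ s, y ≤ z → F (k+1) z ≤ F (k+1) y) := by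
      rcases hg with h | h
      · exact Or.inl fun y hy z hz hyz => by nlinarith [h y hy z hz hyz]
      · exact Or.inr fun y hy z hz hyz => by nlinarith [h y hy z hz hyz]
    have hkey : ∀ y ∈ s, ∀ z ∈ s, y ≤ z → c * (z - y) ≤ |F (k+1) z - F (k+1) y| := by
      rcases hg with h | h
      · exact fun y hy z hz hyz => (h y hy z hz hyz).trans (le_abs_self _)
      · exact fun y hy z hz hyz => (h y hy z hz hyz).trans (by rw [abs_sub_comm]; exact le_abs_self _)
    set J : Set ℝ := {y ∈ s | |F (k+1) y| < ρ} with hJdef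
    set sp : Set ℝ := {y ∈ s | ρ ≤ F (k+1) y} with hspdef
    set sm : Set ℝ := {y ∈ s | F (k+1) y ≤ -ρ} with hsmdef
    -- J has small measure
    have hJvol : volume J ≤ ENNReal.ofReal (2 * (2 * r)) := by
      apply vol_le_of_dist_le
      have main : ∀ y ∈ J, ∀ z ∈ J, y ≤ z → z - y ≤ 2 * r := by
        intro y hy z hz hyz
        have h1 := hkey y hy.1 z hz.1 hyz
        have h2 : |F (k+1) z - F (k+1) y| < 2 * ρ :=
          (abs_sub _ _).trans_lt (by linarith [hy.2, hz.2])
        nlinarith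
      intro y hy z hz
      rcases le_total y z with h | h
      · rw [abs_sub_comm, abs_of_nonneg (by linarith)]; exact main y hy z hz h
      · rw [abs_of_nonneg (by linarith)]; exact main z hz y hy h
    -- sp and sm are convex
    have hspconv : Convex ℝ sp := by
      rw [convex_iff_ordConnected]
      constructor
      intro x hx y hy z hz
      have hzs : z ∈ s := hs.ordConnected.out hx.1 hy.1 hz
      refine ⟨hzs, ?_⟩
      rcases hmono with h | h
      · exact le_trans hx.2 (h x hx.1 z hzs hz.1)
      · exact le_trans hy.2 (h z hzs y hy.1 hz.2)
    have hsmconv : Convex ℝ sm := by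
      rw [convex_iff_ordConnected]
      constructor
      intro x hx y hy z hz
      have hzs : z ∈ s := hs.ordConnected.out hx.1 hy.1 hz
      refine ⟨hzs, ?_⟩
      rcases hmono with h | h
      · exact le_trans (h z hzs y hy.1 hz.2) hy.2
      · exact le_trans (h x hx.1 z hzs hz.1) hx.2
    have hsps : sp ⊆ s := fun x hx => hx.1
    have hsms : sm ⊆ s := fun x hx => hx.1
    -- apply IH on sp and sm
    have hIHp : volume {y ∈ sp | |F 0 y| < ε} ≤ ENNReal.ofReal (Csub k * r) := by
      apply IH sp hspconv ρ hρ
      · exact fun i hi x hx => (hchain i (hi.trans (Nat.le_succ _)) x (hsps hx)).mono hsps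
      · exact hcontk1.mono hsps
      · exact fun x hx => le_trans hx.2 (le_abs_self _)
      · calc ε ≤ c * r ^ (k+2) := hεr
          _ = ρ * r ^ (k+1) := by ring
    have hIHm : volume {y ∈ sm | |F 0 y| < ε} ≤ ENNReal.ofReal (Csub k * r) := by
      apply IH sm hsmconv ρ hρ
      · exact fun i hi x hx => (hchain i (hi.trans (Nat.le_succ _)) x (hsms hx)).mono hsms
      · exact hcontk1.mono hsms
      · exact fun x hx => le_trans (by linarith [hx.2] : ρ ≤ -F (k+1) x) (neg_le_abs _)
      · calc ε ≤ c * r ^ (k+2) := hεr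
          _ = ρ * r ^ (k+1) := by ring
    -- combine
    have hcover : {y ∈ s | |F 0 y| < ε} ⊆
        J ∪ ({y ∈ sp | |F 0 y| < ε} ∪ {y ∈ sm | |F 0 y| < ε}) := by
      intro y hy
      rcases lt_or_ge (|F (k+1) y|) ρ with h | h
      · exact Or.inl ⟨hy.1, h⟩
      · rcases abs_cases (F (k+1) y) with ⟨heq, _⟩ | ⟨heq, _⟩
        · exact Or.inr (Or.inl ⟨⟨hy.1, by linarith⟩, hy.2⟩)
        · exact Or.inr (Or.inr ⟨⟨hy.1, by linarith⟩, hy.2⟩)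
    calc volume {y ∈ s | |F 0 y| < ε}
        ≤ volume (J ∪ ({y ∈ sp | |F 0 y| < ε} ∪ {y ∈ sm | |F 0 y| < ε})) := measure_mono hcover
      _ ≤ volume J + (volume {y ∈ sp | |F 0 y| < ε} + volume {y ∈ sm | |F 0 y| < ε}) :=
          le_trans (measure_union_le _ _) (by gcongr; exact measure_union_le _ _)
      _ ≤ ENNReal.ofReal (2 * (2 * r)) +
          (ENNReal.ofReal (Csub k * r) + ENNReal.ofReal (Csub k * r)) := by gcongr
      _ = ENNReal.ofReal (2 * (2 * r) + (Csub k * r + Csub k * r)) := by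
          have h0 : 0 ≤ Csub k * r := mul_nonneg (Csub_pos k).le hr.le
          rw [← ENNReal.ofReal_add h0 h0, ← ENNReal.ofReal_add (by positivity) (add_nonneg h0 h0)]
      _ = ENNReal.ofReal (Csub (k+1) * r) := by
          congr 1; simp only [Csub]; ring

/-- local-in-`λ` measure estimate for thickened level sets.  If
`v ∈ C^m([L₁,L₂])` satisfies the `m`-th order non-degeneracy condition, then
`v₁ = min v < max v = v₂`, and for every `λ ∈ [v₁, v₂]` there are `δ₀(λ) > 0` and
`C(λ) > 0` such that for every `λ'` with `|λ' − λ| < δ₀(λ)^m` and every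
`δ ∈ (0, δ₀(λ)]`, the set `E^m_{λ',δ} = {y ∈ [L₁,L₂] : |v(y) − λ'| < δ^m}` has
Lebesgue measure at most `C(λ) δ`. -/
theorem measure_estimate_local
    (m : ℕ) (hm : 1 ≤ m) (L₁ L₂ : ℝ) (hL : L₁ < L₂)
    (v : ℝ → ℝ) (hv : ContDiffOn ℝ m v (Set.Icc L₁ L₂))
    (hnd : ∀ y ∈ Set.Icc L₁ L₂,
      0 < ∑ j ∈ Finset.Icc 1 m, |iteratedDerivWithin j v (Set.Icc L₁ L₂) y|) :
    sInf (v '' Set.Icc L₁ L₂) < sSup (v '' Set.Icc L₁ L₂) ∧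
    ∀ lam ∈ Set.Icc (sInf (v '' Set.Icc L₁ L₂)) (sSup (v '' Set.Icc L₁ L₂)),
      ∃ δ₀ > 0, ∃ C > 0,
        ∀ lam' : ℝ, |lam' - lam| < δ₀ ^ m →
          ∀ δ : ℝ, 0 < δ → δ ≤ δ₀ →
            volume {y ∈ Set.Icc L₁ L₂ | |v y - lam'| < δ ^ m} ≤ ENNReal.ofReal (C * δ) := by
  have hud : UniqueDiffOn ℝ (Set.Icc L₁ L₂) := uniqueDiffOn_Icc hL
  have hvc : ContinuousOn v (Set.Icc L₁ L₂) := hv.continuousOn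
  have hL1mem : L₁ ∈ Set.Icc L₁ L₂ := ⟨le_rfl, hL.le⟩
  have himc : IsCompact (v '' Set.Icc L₁ L₂) := isCompact_Icc.image_of_continuousOn hvc
  -- Part 1
  have part1 : sInf (v '' Set.Icc L₁ L₂) < sSup (v '' Set.Icc L₁ L₂) := by
    by_contra hcon
    push_neg at hcon
    set a := sInf (v '' Set.Icc L₁ L₂) with hadef
    have hconst : Set.EqOn v (fun _ => a) (Set.Icc L₁ L₂) := by
      intro y hy
      have h1 : a ≤ v y := csInf_le himc.bddBelow ⟨y, hy, rfl⟩
      have h2 : v y ≤ sSup (v '' Set.Icc L₁ L₂) := le_csSup himc.bddAbove ⟨y, hy, rfl⟩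
      simp only
      linarith
    have hzeroc : ∀ n : ℕ, ∀ x ∈ Set.Icc L₁ L₂,
        iteratedDerivWithin (n+1) (fun _ : ℝ => a) (Set.Icc L₁ L₂) x = 0 := by
      intro n
      induction n with
      | zero =>
        intro x hx
        rw [iteratedDerivWithin_one]
        simp
      | succ n ih =>
        intro x hx
        rw [iteratedDerivWithin_succ]
        rw [derivWithin_congr (fun y hy => ih y hy) (ih x hx)]
        simp
    have hzero : ∀ n : ℕ, ∀ x ∈ Set.Icc L₁ L₂,
        iteratedDerivWithin (n+1) v (Set.Icc L₁ L₂) x = 0 := by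
      intro n x hx
      rw [iteratedDerivWithin_congr hconst hx]
      exact hzeroc n x hx
    have hsum : ∑ j ∈ Finset.Icc 1 m, |iteratedDerivWithin j v (Set.Icc L₁ L₂) L₁| = 0 := by
      apply Finset.sum_eq_zero
      intro j hj
      have hj1 := (Finset.mem_Icc.1 hj).1
      obtain ⟨k, rfl⟩ : ∃ k, j = k + 1 := ⟨j - 1, by omega⟩
      rw [hzero k L₁ hL1mem, abs_zero]
    have := hnd L₁ hL1mem
    rw [hsum] at this
    exact lt_irrefl 0 this
  refine ⟨part1, ?_⟩
  -- Part 2 : local data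
  have hloc : ∀ y : ℝ, ∃ (j : ℕ) (c r : ℝ), 0 < c ∧ 0 < r ∧
      (y ∈ Set.Icc L₁ L₂ → 1 ≤ j ∧ j ≤ m ∧
        ∀ z ∈ Set.Ioo (y - r) (y + r) ∩ Set.Icc L₁ L₂,
          c ≤ |iteratedDerivWithin j v (Set.Icc L₁ L₂) z|) := by
    intro y
    by_cases hy : y ∈ Set.Icc L₁ L₂
    · obtain ⟨j, hjmem, hjpos⟩ :
          ∃ j ∈ Finset.Icc 1 m, 0 < |iteratedDerivWithin j v (Set.Icc L₁ L₂) y| := by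
        by_contra hcon
        push_neg at hcon
        have h0 : ∑ j ∈ Finset.Icc 1 m, |iteratedDerivWithin j v (Set.Icc L₁ L₂) y| ≤ 0 :=
          Finset.sum_nonpos hcon
        linarith [hnd y hy]
      have hjm := Finset.mem_Icc.1 hjmem
      have hcont : ContinuousWithinAt
          (fun z => |iteratedDerivWithin j v (Set.Icc L₁ L₂) z|) (Set.Icc L₁ L₂) y :=
        ((hv.continuousOn_iteratedDerivWithin (by exact_mod_cast hjm.2) hud) y hy).abs
      have hev : ∀ᶠ z in nhdsWithin y (Set.Icc L₁ L₂),
          |iteratedDerivWithin j v (Set.Icc L₁ L₂) y| / 2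
            < |iteratedDerivWithin j v (Set.Icc L₁ L₂) z| :=
        hcont.eventually_const_lt (half_lt_self hjpos)
      obtain ⟨ρ, hρpos, hball⟩ := Metric.mem_nhdsWithin_iff.1 hev
      refine ⟨j, |iteratedDerivWithin j v (Set.Icc L₁ L₂) y| / 2, ρ,
        half_pos hjpos, hρpos, fun _ => ⟨hjm.1, hjm.2, fun z hz => ?_⟩⟩
      have : z ∈ Metric.ball y ρ ∩ Set.Icc L₁ L₂ := by
        rw [Real.ball_eq_Ioo]; exact hz
      exact (hball this).le
    · exact ⟨1, 1, 1, one_pos, one_pos, fun h => absurd h hy⟩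
  choose j c r hc hr hmain using hloc
  obtain ⟨t, hts, hcov⟩ := isCompact_Icc.elim_nhds_subcover
    (fun y => Set.Ioo (y - r y) (y + r y))
    (fun x _ => Ioo_mem_nhds (by linarith [hr x]) (by linarith [hr x]))
  set K : ℝ → ℝ := fun y => max 1 (c y)⁻¹ with hKdef
  have hK1 : ∀ y, 1 ≤ K y := fun y => le_max_left _ _
  have hKc : ∀ y, (c y)⁻¹ ≤ K y := fun y => le_max_right _ _
  have htermnn : ∀ y, 0 ≤ Csub (j y - 1) * K y :=
    fun y => mul_nonneg (Csub_pos _).le (le_trans zero_le_one (hK1 y))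
  set C : ℝ := 1 + ∑ y ∈ t, Csub (j y - 1) * K y with hCdef
  have hCpos : 0 < C := by
    have := Finset.sum_nonneg (fun y (_ : y ∈ t) => htermnn y)
    rw [hCdef]; linarith
  intro lam _
  refine ⟨1, one_pos, C, hCpos, fun lam' _ δ hδ hδ1 => ?_⟩
  -- per-piece bound
  have hpiece : ∀ y₀ ∈ t,
      volume {z ∈ Set.Ioo (y₀ - r y₀) (y₀ + r y₀) ∩ Set.Icc L₁ L₂ | |v z - lam'| < δ ^ m}
        ≤ ENNReal.ofReal ((Csub (j y₀ - 1) * K y₀) * δ) := by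
    intro y₀ ht0
    obtain ⟨hj1, hjm, hbd⟩ := hmain y₀ (hts y₀ ht0)
    obtain ⟨k, hk⟩ : ∃ k, j y₀ = k + 1 := ⟨j y₀ - 1, by omega⟩
    set s' := Set.Ioo (y₀ - r y₀) (y₀ + r y₀) ∩ Set.Icc L₁ L₂ with hs'def
    have hs'sub : s' ⊆ Set.Icc L₁ L₂ := Set.inter_subset_right
    have hs'conv : Convex ℝ s' := (convex_Ioo _ _).inter (convex_Icc _ _)
    set F : ℕ → ℝ → ℝ :=
      fun i z => if i = 0 then v z - lam' else iteratedDerivWithin i v (Set.Icc L₁ L₂) z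
      with hFdef
    have hchain : ∀ i ≤ k, ∀ x ∈ s', HasDerivWithinAt (F i) (F (i+1) x) s' x := by
      intro i hi x hx
      have hxI := hs'sub hx
      rcases Nat.eq_zero_or_pos i with rfl | hipos
      · have hdv : DifferentiableWithinAt ℝ v (Set.Icc L₁ L₂) x :=
          hv.differentiableOn (by exact_mod_cast (show m ≠ 0 by omega)) x hxI
        have h1 : HasDerivWithinAt v (derivWithin v (Set.Icc L₁ L₂) x) (Set.Icc L₁ L₂) x :=
          hdv.hasDerivWithinAt
        have h2 : derivWithin v (Set.Icc L₁ L₂) x = iteratedDerivWithin 1 v (Set.Icc L₁ L₂) x :=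
          (congrFun iteratedDerivWithin_one x).symm
        show HasDerivWithinAt (fun z => if (0:ℕ) = 0 then v z - lam' else _)
          (if (1:ℕ) = 0 then v x - lam' else iteratedDerivWithin 1 v (Set.Icc L₁ L₂) x) s' x
        simp only [if_pos rfl, if_neg one_ne_zero]
        exact ((h2 ▸ h1).sub_const lam').mono hs'sub
      · obtain ⟨i', rfl⟩ := Nat.exists_eq_succ_of_ne_zero hipos.ne'
        have hlt : ((i' + 1 : ℕ) : WithTop ℕ∞) < (m : WithTop ℕ∞) := by
          have : i' + 1 < m := by omega
          exact_mod_cast this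
        have hdiff := (hv.differentiableOn_iteratedDerivWithin hlt hud) x hxI
        have h1 := hdiff.hasDerivWithinAt
        have h2 : derivWithin (iteratedDerivWithin (i'+1) v (Set.Icc L₁ L₂)) (Set.Icc L₁ L₂) x
            = iteratedDerivWithin ((i'+1)+1) v (Set.Icc L₁ L₂) x :=
          (congrFun iteratedDerivWithin_succ x).symm
        show HasDerivWithinAt
          (fun z => if (i'+1:ℕ) = 0 then v z - lam' else iteratedDerivWithin (i'+1) v (Set.Icc L₁ L₂) z)
          (if ((i'+1)+1:ℕ) = 0 then v x - lam' else iteratedDerivWithin ((i'+1)+1) v (Set.Icc L₁ L₂) x) s' x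
        simp only [if_neg (Nat.succ_ne_zero _)]
        exact (h2 ▸ h1).mono hs'sub
    have hcont' : ContinuousOn (F (k+1)) s' := by
      have hcm : ((k + 1 : ℕ) : WithTop ℕ∞) ≤ (m : WithTop ℕ∞) := by
        have : k + 1 ≤ m := by omega
        exact_mod_cast this
      have := (hv.continuousOn_iteratedDerivWithin hcm hud).mono hs'sub
      show ContinuousOn
        (fun z => if (k+1:ℕ) = 0 then v z - lam' else iteratedDerivWithin (k+1) v (Set.Icc L₁ L₂) z) s'
      simpa only [if_neg (Nat.succ_ne_zero _)] using this
    have hlb' : ∀ x ∈ s', c y₀ ≤ |F (k+1) x| := by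
      intro x hx
      have h3 := hbd x hx
      rw [hk] at h3
      show c y₀ ≤ |if (k+1:ℕ) = 0 then v x - lam' else iteratedDerivWithin (k+1) v (Set.Icc L₁ L₂) x|
      rw [if_neg (Nat.succ_ne_zero _)]
      exact h3
    have hεr : δ ^ m ≤ c y₀ * (K y₀ * δ) ^ (k+1) := by
      have h1 : δ ^ m ≤ δ ^ (k+1) :=
        pow_le_pow_of_le_one hδ.le hδ1 (by omega)
      have h2 : 1 ≤ c y₀ * K y₀ ^ (k+1) := by
        calc (1:ℝ) = c y₀ * (c y₀)⁻¹ := (mul_inv_cancel₀ (hc y₀).ne').symm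
          _ ≤ c y₀ * K y₀ := mul_le_mul_of_nonneg_left (hKc y₀) (hc y₀).le
          _ ≤ c y₀ * K y₀ ^ (k+1) :=
            mul_le_mul_of_nonneg_left (le_self_pow₀ (hK1 y₀) (Nat.succ_ne_zero _)) (hc y₀).le
      calc δ ^ m ≤ δ ^ (k+1) := h1
        _ = 1 * δ ^ (k+1) := (one_mul _).symm
        _ ≤ (c y₀ * K y₀ ^ (k+1)) * δ ^ (k+1) :=
          mul_le_mul_of_nonneg_right h2 (pow_nonneg hδ.le _)
        _ = c y₀ * (K y₀ * δ) ^ (k+1) := by rw [mul_pow]; ring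
    have hK0 : 0 < K y₀ := lt_of_lt_of_le one_pos (hK1 y₀)
    have := sublevel k F s' hs'conv (c y₀) (δ ^ m) (K y₀ * δ) (hc y₀) (pow_pos hδ m)
      (mul_pos hK0 hδ) hchain hcont' hlb' hεr
    have hsetEq : {y ∈ s' | |F 0 y| < δ ^ m} = {z ∈ s' | |v z - lam'| < δ ^ m} := by
      ext z
      simp only [Set.mem_setOf_eq, hFdef, if_pos rfl]
    rw [hsetEq] at this
    calc volume {z ∈ s' | |v z - lam'| < δ ^ m} ≤ ENNReal.ofReal (Csub k * (K y₀ * δ)) := this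
      _ = ENNReal.ofReal ((Csub (j y₀ - 1) * K y₀) * δ) := by
        congr 1
        rw [show j y₀ - 1 = k by omega]
        ring
  -- combine
  have hsubset : {y ∈ Set.Icc L₁ L₂ | |v y - lam'| < δ ^ m} ⊆
      ⋃ y₀ ∈ t, {z ∈ Set.Ioo (y₀ - r y₀) (y₀ + r y₀) ∩ Set.Icc L₁ L₂ | |v z - lam'| < δ ^ m} := by
    intro y hy
    obtain ⟨y₀, ht0, hyIoo⟩ := Set.mem_iUnion₂.1 (hcov hy.1)
    exact Set.mem_iUnion₂.2 ⟨y₀, ht0, ⟨⟨hyIoo, hy.1⟩, hy.2⟩⟩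
  calc volume {y ∈ Set.Icc L₁ L₂ | |v y - lam'| < δ ^ m}
      ≤ ∑ y₀ ∈ t, volume {z ∈ Set.Ioo (y₀ - r y₀) (y₀ + r y₀) ∩ Set.Icc L₁ L₂ |
          |v z - lam'| < δ ^ m} :=
        le_trans (measure_mono hsubset) (measure_biUnion_finset_le _ _)
    _ ≤ ∑ y₀ ∈ t, ENNReal.ofReal ((Csub (j y₀ - 1) * K y₀) * δ) := Finset.sum_le_sum hpiece
    _ = ENNReal.ofReal (∑ y₀ ∈ t, (Csub (j y₀ - 1) * K y₀) * δ) :=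
        (ENNReal.ofReal_sum_of_nonneg (fun i _ => mul_nonneg (htermnn i) hδ.le)).symm
    _ ≤ ENNReal.ofReal (C * δ) := by
        apply ENNReal.ofReal_le_ofReal
        rw [← Finset.sum_mul]
        apply mul_le_mul_of_nonneg_right _ hδ.le
        rw [hCdef]
        linarith
end

section
/- Let m ≥ 1 and L₁ < L₂ be real numbers, and let v : [L₁, L₂] → ℝ be a C^m function satisfying |v'(y)| + ⋯ + |v^{(m)}(y)| > 0 for all y ∈ [L₁, L₂]. Then there exist constants C₀ > 0 and δ̂₀ ∈ (0, 1) such that for every δ ∈ (0, δ̂₀] and every λ ∈ ℝ, the Lebesgue measure of E^m_{λ,δ} = {y ∈ [L₁, L₂] : |v(y) − λ| < δ^m} satisfies m(E^m_{λ,δ}) ≤ C₀ δ. -/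
open Set MeasureTheory

/-- Signed mean value bound: if `c ≤ f'` on the open interval then `f` grows at rate `c`. -/
lemma mvt_mono (f f' : ℝ → ℝ) (a b x y c : ℝ) (hx : x ∈ Icc a b) (hy : y ∈ Icc a b)
    (hxy : x < y) (hf : ContinuousOn f (Icc a b))
    (hf' : ∀ z ∈ Ioo a b, HasDerivAt f (f' z) z)
    (hlb : ∀ z ∈ Icc a b, c ≤ f' z) : c * (y - x) ≤ f y - f x := by
  obtain ⟨ξ, hξ, hslope⟩ := exists_hasDerivAt_eq_slope f f' hxy
    (hf.mono (Icc_subset_Icc hx.1 hy.2))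
    (fun z hz => hf' z ⟨lt_of_le_of_lt hx.1 hz.1, lt_of_lt_of_le hz.2 hy.2⟩)
  have hξI : ξ ∈ Icc a b := ⟨le_trans hx.1 hξ.1.le, le_trans hξ.2.le hy.2⟩
  have h1 := hlb ξ hξI
  rw [hslope] at h1
  exact (le_div_iff₀ (by linarith)).mp h1

/-- Two sided mean value bound. -/
lemma mvt_abs (f f' : ℝ → ℝ) (a b x y c : ℝ) (hx : x ∈ Icc a b) (hy : y ∈ Icc a b)
    (hxy : x < y) (hf : ContinuousOn f (Icc a b))
    (hf' : ∀ z ∈ Ioo a b, HasDerivAt f (f' z) z)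
    (hlb : ∀ z ∈ Icc a b, c ≤ |f' z|) : c * (y - x) ≤ |f y - f x| := by
  obtain ⟨ξ, hξ, hslope⟩ := exists_hasDerivAt_eq_slope f f' hxy
    (hf.mono (Icc_subset_Icc hx.1 hy.2))
    (fun z hz => hf' z ⟨lt_of_le_of_lt hx.1 hz.1, lt_of_lt_of_le hz.2 hy.2⟩)
  have hξI : ξ ∈ Icc a b := ⟨le_trans hx.1 hξ.1.le, le_trans hξ.2.le hy.2⟩
  have h1 := hlb ξ hξI
  rw [hslope, abs_div, abs_of_pos (by linarith : (0:ℝ) < y - x)] at h1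
  exact (le_div_iff₀ (by linarith)).mp h1

/-- The sublevel estimate statement at order `j`. -/
def SL (j : ℕ) : Prop :=
  ∀ (g : ℕ → ℝ → ℝ) (lam a b c t : ℝ), 0 < c → 0 < t →
  (∀ i ≤ j, ContinuousOn (g i) (Icc a b)) →
  (∀ i < j, ∀ x ∈ Ioo a b, HasDerivAt (g i) (g (i+1) x) x) →
  (∀ x ∈ Icc a b, c ≤ |g j x|) →
  volume {x ∈ Icc a b | |g 0 x - lam| < c * t ^ j} ≤ ENNReal.ofReal (4 ^ j * t)

lemma SL_one : SL 1 := by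
  intro g lam a b c t hc ht Hcont Hder Hlb
  rcases Set.eq_empty_or_nonempty {x ∈ Icc a b | |g 0 x - lam| < c * t ^ 1} with h | ⟨z, hzI, hz⟩
  · rw [h]; simp
  · have key : ∀ x ∈ Icc a b, |g 0 x - lam| < c * t ^ 1 → |x - z| < 2 * t := by
      intro x hxI hx
      rcases lt_trichotomy x z with hlt | heq | hgt
      · have h1 := mvt_abs (g 0) (g 1) a b x z c hxI hzI hlt (Hcont 0 (by omega))
          (fun w hw => Hder 0 (by omega) w hw) Hlb
        have h2 : |g 0 z - g 0 x| ≤ |g 0 z - lam| + |g 0 x - lam| := by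
          have := abs_sub (g 0 z - lam) (g 0 x - lam); rw [sub_sub_sub_cancel_right] at this
          exact this
        rw [abs_of_neg (by linarith : x - z < 0)]
        simp only [pow_one] at hx hz
        nlinarith
      · rw [heq]; simp; positivity
      · have h1 := mvt_abs (g 0) (g 1) a b z x c hzI hxI hgt (Hcont 0 (by omega))
          (fun w hw => Hder 0 (by omega) w hw) Hlb
        have h2 : |g 0 x - g 0 z| ≤ |g 0 x - lam| + |g 0 z - lam| := by
          have := abs_sub (g 0 x - lam) (g 0 z - lam); rw [sub_sub_sub_cancel_right] at this
          exact this
        rw [abs_of_pos (by linarith : 0 < x - z)]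
        simp only [pow_one] at hx hz
        nlinarith
    have hsub : {x ∈ Icc a b | |g 0 x - lam| < c * t ^ 1} ⊆ Icc (z - 2*t) (z + 2*t) := by
      rintro x ⟨hxI, hx⟩
      have := key x hxI hx
      rw [abs_lt] at this
      exact ⟨by linarith [this.1], by linarith [this.2]⟩
    calc volume {x ∈ Icc a b | |g 0 x - lam| < c * t ^ 1}
        ≤ volume (Icc (z - 2*t) (z + 2*t)) := measure_mono hsub
      _ = ENNReal.ofReal (4 * t) := by rw [Real.volume_Icc]; ring_nf
      _ ≤ ENNReal.ofReal (4 ^ 1 * t) := by norm_num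

lemma SL_step (j : ℕ) (hj : 1 ≤ j) (IH : SL j)
    (g : ℕ → ℝ → ℝ) (lam a b c t : ℝ) (hc : 0 < c) (ht : 0 < t)
    (Hcont : ∀ i ≤ j+1, ContinuousOn (g i) (Icc a b))
    (Hder : ∀ i < j+1, ∀ x ∈ Ioo a b, HasDerivAt (g i) (g (i+1) x) x)
    (Hpos : ∀ x ∈ Icc a b, c ≤ g (j+1) x) :
    volume {x ∈ Icc a b | |g 0 x - lam| < c * t ^ (j+1)} ≤ ENNReal.ofReal (4 ^ (j+1) * t) := by
  rcases le_or_gt a b with hab | hab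
  swap
  · rw [Icc_eq_empty_of_lt hab]
    simp
  have hmono : ∀ x ∈ Icc a b, ∀ y ∈ Icc a b, x < y → c * (y - x) ≤ g j y - g j x :=
    fun x hx y hy hxy => mvt_mono (g j) (g (j+1)) a b x y c hx hy hxy (Hcont j (by omega))
      (fun z hz => Hder j (by omega) z hz) Hpos
  obtain ⟨x₀, hx₀I, hK⟩ : ∃ x₀ ∈ Icc a b,
      ∀ x ∈ Icc a b, (x ≤ x₀ - t ∨ x₀ + t ≤ x) → c * t ≤ |g j x| := by
    by_cases ha : 0 ≤ g j a
    · refine ⟨a, left_mem_Icc.mpr hab, ?_⟩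
      rintro x hx (h1 | h2)
      · have := hx.1; linarith
      · have hax : a < x := by linarith
        have h3 := hmono a (left_mem_Icc.mpr hab) x hx hax
        have h4 : c * t ≤ g j x := by nlinarith
        exact le_trans h4 (le_abs_self _)
    · by_cases hb : g j b ≤ 0
      · refine ⟨b, right_mem_Icc.mpr hab, ?_⟩
        rintro x hx (h1 | h2)
        · have hxb : x < b := by linarith [hx.2]
          have h3 := hmono x hx b (right_mem_Icc.mpr hab) hxb
          have h4 : c * t ≤ -(g j x) := by nlinarith
          exact le_abs.mpr (Or.inr h4)
        · have := hx.2; linarith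
      · push_neg at ha hb
        obtain ⟨x₀, hx₀, hzero⟩ := intermediate_value_Icc hab (Hcont j (by omega))
          (show (0:ℝ) ∈ Icc (g j a) (g j b) from ⟨ha.le, hb.le⟩)
        refine ⟨x₀, hx₀, ?_⟩
        rintro x hx (h1 | h2)
        · have hxx : x < x₀ := by linarith
          have h3 := hmono x hx x₀ hx₀ hxx
          have h4 : c * t ≤ -(g j x) := by rw [hzero] at h3; nlinarith
          exact le_abs.mpr (Or.inr h4)
        · have hxx : x₀ < x := by linarith
          have h3 := hmono x₀ hx₀ x hx hxx
          have h4 : c * t ≤ g j x := by rw [hzero] at h3; nlinarith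
          exact le_trans h4 (le_abs_self _)
  have hct : 0 < c * t := mul_pos hc ht
  have hsplit : {x ∈ Icc a b | |g 0 x - lam| < c * t ^ (j+1)} ⊆
      ({x ∈ Icc a (x₀ - t) | |g 0 x - lam| < (c*t) * t ^ j} ∪ Icc (x₀-t) (x₀+t)) ∪
        {x ∈ Icc (x₀+t) b | |g 0 x - lam| < (c*t) * t ^ j} := by
    rintro x ⟨hxI, hx⟩
    have hval : |g 0 x - lam| < (c*t) * t ^ j := by
      have : c * t ^ (j+1) = (c*t) * t ^ j := by ring
      rwa [this] at hx
    rcases le_or_gt x (x₀ - t) with h1 | h1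
    · exact Or.inl (Or.inl ⟨⟨hxI.1, h1⟩, hval⟩)
    · rcases le_or_gt (x₀ + t) x with h2 | h2
      · exact Or.inr ⟨⟨h2, hxI.2⟩, hval⟩
      · exact Or.inl (Or.inr ⟨h1.le, h2.le⟩)
  have hL : volume {x ∈ Icc a (x₀ - t) | |g 0 x - lam| < (c*t) * t ^ j}
      ≤ ENNReal.ofReal (4 ^ j * t) := by
    apply IH g lam a (x₀ - t) (c*t) t hct ht
    · intro i hi
      exact (Hcont i (by omega)).mono (Icc_subset_Icc le_rfl (by linarith [hx₀I.2]))
    · intro i hi x hx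
      exact Hder i (by omega) x ⟨hx.1, by linarith [hx.2, hx₀I.2]⟩
    · intro x hx
      exact hK x ⟨hx.1, by linarith [hx.2, hx₀I.2]⟩ (Or.inl hx.2)
  have hR : volume {x ∈ Icc (x₀ + t) b | |g 0 x - lam| < (c*t) * t ^ j}
      ≤ ENNReal.ofReal (4 ^ j * t) := by
    apply IH g lam (x₀ + t) b (c*t) t hct ht
    · intro i hi
      exact (Hcont i (by omega)).mono (Icc_subset_Icc (by linarith [hx₀I.1]) le_rfl)
    · intro i hi x hx
      exact Hder i (by omega) x ⟨by linarith [hx.1, hx₀I.1], hx.2⟩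
    · intro x hx
      exact hK x ⟨by linarith [hx.1, hx₀I.1], hx.2⟩ (Or.inr hx.1)
  have hM : volume (Icc (x₀-t) (x₀+t)) = ENNReal.ofReal (2 * t) := by
    rw [Real.volume_Icc]; ring_nf
  calc volume {x ∈ Icc a b | |g 0 x - lam| < c * t ^ (j+1)}
      ≤ volume (({x ∈ Icc a (x₀ - t) | |g 0 x - lam| < (c*t) * t ^ j} ∪ Icc (x₀-t) (x₀+t)) ∪
        {x ∈ Icc (x₀+t) b | |g 0 x - lam| < (c*t) * t ^ j}) := measure_mono hsplit
    _ ≤ (volume {x ∈ Icc a (x₀ - t) | |g 0 x - lam| < (c*t) * t ^ j}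
          + volume (Icc (x₀-t) (x₀+t)))
        + volume {x ∈ Icc (x₀+t) b | |g 0 x - lam| < (c*t) * t ^ j} :=
      le_trans (measure_union_le _ _) (add_le_add_left (measure_union_le _ _) _)
    _ ≤ (ENNReal.ofReal (4 ^ j * t) + ENNReal.ofReal (2 * t)) + ENNReal.ofReal (4 ^ j * t) := by
        rw [hM]; exact add_le_add (add_le_add hL le_rfl) hR
    _ ≤ ENNReal.ofReal (4 ^ (j+1) * t) := by
        rw [← ENNReal.ofReal_add (by positivity) (by positivity),
          ← ENNReal.ofReal_add (by positivity) (by positivity)]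
        apply ENNReal.ofReal_le_ofReal
        have h4 : (1:ℝ) ≤ 4 ^ j := one_le_pow₀ (by norm_num)
        have : (4:ℝ) ^ (j+1) = 4 * 4 ^ j := by ring
        rw [this]
        nlinarith [ht.le]

lemma SL_all : ∀ j, 1 ≤ j → SL j := by
  intro j
  induction j with
  | zero => omega
  | succ j IH =>
    intro _
    rcases Nat.eq_zero_or_pos j with rfl | hj
    · exact SL_one
    · intro g lam a b c t hc ht Hcont Hder Hlb
      rcases le_or_gt a b with hab | hab
      swap
      · rw [Icc_eq_empty_of_lt hab]; simp
      have key : ∀ x ∈ Icc a b, c ≤ g (j+1) x ∨ g (j+1) x ≤ -c := by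
        intro x hx
        rcases le_abs.mp (Hlb x hx) with h | h
        · exact Or.inl h
        · exact Or.inr (by linarith)
      have hIVT : ∀ x ∈ Icc a b, ∀ y ∈ Icc a b, c ≤ g (j+1) x → g (j+1) y ≤ -c → False := by
        intro x hx y hy hgx hgy
        have hsub : uIcc x y ⊆ Icc a b := uIcc_subset_Icc hx hy
        have hcont : ContinuousOn (g (j+1)) (uIcc x y) := (Hcont (j+1) le_rfl).mono hsub
        have h0 : (0:ℝ) ∈ uIcc (g (j+1) x) (g (j+1) y) :=
          mem_uIcc.mpr (Or.inr ⟨by linarith, by linarith⟩)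
        obtain ⟨ξ, hξ, hξ0⟩ := intermediate_value_uIcc hcont h0
        have := Hlb ξ (hsub hξ)
        rw [hξ0] at this
        simp at this; linarith
      rcases key a (left_mem_Icc.mpr hab) with hpa | hna
      · have hs : ∀ x ∈ Icc a b, c ≤ g (j+1) x := by
          intro x hx
          rcases key x hx with h | h
          · exact h
          · exact absurd (hIVT a (left_mem_Icc.mpr hab) x hx hpa h) (by simp)
        exact SL_step j hj (IH hj) g lam a b c t hc ht Hcont Hder hs
      · have hs : ∀ x ∈ Icc a b, c ≤ -(g (j+1) x) := by
          intro x hx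
          rcases key x hx with h | h
          · exact absurd (hIVT x hx a (left_mem_Icc.mpr hab) h hna) (by simp)
          · linarith
        have hres := SL_step j hj (IH hj) (fun i x => -(g i x)) (-lam) a b c t hc ht
          (fun i hi => (Hcont i hi).neg)
          (fun i hi x hx => (Hder i hi x hx).neg)
          hs
        have hset : {x ∈ Icc a b | |(fun i x => -(g i x)) 0 x - (-lam)| < c * t ^ (j+1)}
            = {x ∈ Icc a b | |g 0 x - lam| < c * t ^ (j+1)} := by
          ext x
          simp only [mem_setOf_eq]
          rw [show -(g 0 x) - (-lam) = -(g 0 x - lam) by ring, abs_neg]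
        rwa [hset] at hres

/-- uniform-in-`λ` measure estimate for `E^m_{λ,δ}` on a compact
interval.  If `v ∈ C^m([L₁,L₂])` satisfies the `m`-th order non-degeneracy condition,
then there are `C₀ > 0` and `δ̂₀ ∈ (0,1)` such that for every `δ ∈ (0, δ̂₀]` and every
`λ ∈ ℝ`, `m(E^m_{λ,δ}) ≤ C₀ δ`, where `E^m_{λ,δ} = {y ∈ [L₁,L₂] : |v(y) − λ| < δ^m}`. -/
theorem measure_estimate_uniform
    (m : ℕ) (hm : 1 ≤ m) (L₁ L₂ : ℝ) (hL : L₁ < L₂)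
    (v : ℝ → ℝ) (hv : ContDiffOn ℝ m v (Set.Icc L₁ L₂))
    (hnd : ∀ y ∈ Set.Icc L₁ L₂,
      0 < ∑ j ∈ Finset.Icc 1 m, |iteratedDerivWithin j v (Set.Icc L₁ L₂) y|) :
    ∃ C₀ > 0, ∃ δ₀ : ℝ, 0 < δ₀ ∧ δ₀ < 1 ∧
      ∀ δ : ℝ, 0 < δ → δ ≤ δ₀ → ∀ lam : ℝ,
        volume {y ∈ Set.Icc L₁ L₂ | |v y - lam| < δ ^ m} ≤ ENNReal.ofReal (C₀ * δ) := by
  set g : ℕ → ℝ → ℝ := fun i => iteratedDerivWithin i v (Set.Icc L₁ L₂) with hg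
  have hu : UniqueDiffOn ℝ (Icc L₁ L₂) := uniqueDiffOn_Icc hL
  have Hcont : ∀ i ≤ m, ContinuousOn (g i) (Icc L₁ L₂) := fun i hi =>
    hv.continuousOn_iteratedDerivWithin (by exact_mod_cast hi) hu
  have Hder : ∀ i < m, ∀ x ∈ Ioo L₁ L₂, HasDerivAt (g i) (g (i+1) x) x := by
    intro i hi x hx
    have hdiff : DifferentiableOn ℝ (g i) (Icc L₁ L₂) :=
      hv.differentiableOn_iteratedDerivWithin (by exact_mod_cast hi) hu
    have hxI : x ∈ Icc L₁ L₂ := Ioo_subset_Icc_self hx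
    have h2 := (hdiff x hxI).hasDerivWithinAt.hasDerivAt (Icc_mem_nhds hx.1 hx.2)
    rwa [← iteratedDerivWithin_succ] at h2
  -- pointwise nondegeneracy
  have hnd' : ∀ y ∈ Icc L₁ L₂, ∃ j, 1 ≤ j ∧ j ≤ m ∧ 0 < |g j y| := by
    intro y hy
    by_contra hcon
    push_neg at hcon
    have hz : ∑ j ∈ Finset.Icc 1 m, |g j y| ≤ 0 := Finset.sum_nonpos fun j hj =>
      hcon j (Finset.mem_Icc.mp hj).1 (Finset.mem_Icc.mp hj).2
    linarith [hnd y hy]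
  -- local uniform lower bounds
  have hloc : ∀ y : (Icc L₁ L₂), ∃ (j : ℕ) (r cc : ℝ), 1 ≤ j ∧ j ≤ m ∧ 0 < r ∧ 0 < cc ∧
      ∀ x ∈ Icc L₁ L₂, |x - ↑y| < r → cc ≤ |g j x| := by
    rintro ⟨y, hy⟩
    obtain ⟨j, hj1, hjm, hpos⟩ := hnd' y hy
    have hcw : ContinuousWithinAt (fun x => |g j x|) (Icc L₁ L₂) y :=
      ((Hcont j hjm).continuousWithinAt hy).abs
    have hev : {x | |g j y| / 2 < |g j x|} ∈ nhdsWithin y (Icc L₁ L₂) :=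
      hcw.eventually (eventually_gt_nhds (half_lt_self hpos))
    obtain ⟨ε, hε, hsub⟩ := Metric.mem_nhdsWithin_iff.mp hev
    refine ⟨j, ε, |g j y| / 2, hj1, hjm, hε, by positivity, ?_⟩
    intro x hx hxy
    exact (hsub ⟨by rwa [Metric.mem_ball, Real.dist_eq], hx⟩).le
  choose jf rf cf h1 h2 h3 h4 h5 using hloc
  obtain ⟨s, hs⟩ := isCompact_Icc.elim_finite_subcover
    (fun y : (Icc L₁ L₂) => Metric.ball (↑y) (rf y / 2))
    (fun _ => Metric.isOpen_ball)
    (fun x hx => mem_iUnion.mpr ⟨⟨x, hx⟩, by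
      simpa [Metric.mem_ball] using half_pos (h3 ⟨x, hx⟩)⟩)
  have hsne : s.Nonempty := by
    rcases Finset.eq_empty_or_nonempty s with rfl | h
    · exact absurd (hs (left_mem_Icc.mpr hL.le)) (by simp)
    · exact h
  set r := s.inf' hsne (fun y => rf y / 2) with hrdef
  set c₀ := s.inf' hsne (fun y => cf y) with hcdef
  have hr : 0 < r := (Finset.lt_inf'_iff hsne).mpr fun i _ => half_pos (h3 i)
  have hc₀ : 0 < c₀ := (Finset.lt_inf'_iff hsne).mpr fun i _ => h4 i
  have hunif : ∀ y ∈ Icc L₁ L₂, ∃ j, 1 ≤ j ∧ j ≤ m ∧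
      ∀ x ∈ Icc L₁ L₂, |x - y| ≤ r → c₀ ≤ |g j x| := by
    intro y hy
    have hy2 := hs hy
    simp only [mem_iUnion] at hy2
    obtain ⟨i, his, hyi⟩ := hy2
    refine ⟨jf i, h1 i, h2 i, ?_⟩
    intro x hx hxr
    refine le_trans (Finset.inf'_le (fun y => cf y) his) (h5 i x hx ?_)
    have hdy : |y - ↑i| < rf i / 2 := by rw [← Real.dist_eq]; exact hyi
    have hri : r ≤ rf i / 2 := Finset.inf'_le _ his
    calc |x - ↑i| ≤ |x - y| + |y - ↑i| := abs_sub_le x y i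
      _ < rf i := by linarith
  -- constants
  set K : ℝ := max 1 (1/c₀) with hKdef
  have hK1 : (1:ℝ) ≤ K := le_max_left _ _
  have hKc : 1 ≤ c₀ * K := by
    have : 1/c₀ ≤ K := le_max_right _ _
    calc (1:ℝ) = c₀ * (1/c₀) := by field_simp
      _ ≤ c₀ * K := by nlinarith
  set N : ℕ := ⌊(L₂ - L₁)/r⌋₊ + 1 with hNdef
  have hN : (0:ℝ) < N := by positivity
  refine ⟨N * (4^m * K), by positivity, 1/2, by norm_num, by norm_num, ?_⟩
  intro δ hδ hδ₀ lam
  set aa : ℕ → ℝ := fun k => L₁ + k * r with haa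
  set bb : ℕ → ℝ := fun k => min (L₁ + (k+1) * r) L₂ with hbb
  have hcov : {y ∈ Icc L₁ L₂ | |v y - lam| < δ^m} ⊆
      ⋃ k ∈ Finset.range N, {y ∈ Icc (aa k) (bb k) | |v y - lam| < δ^m} := by
    rintro x ⟨hxI, hxv⟩
    have hx1 : (0:ℝ) ≤ (x - L₁)/r := div_nonneg (by linarith [hxI.1]) hr.le
    set k := ⌊(x - L₁)/r⌋₊ with hkdef
    have hkN : k < N := by
      have hle : (x - L₁)/r ≤ (L₂ - L₁)/r := by gcongr <;> linarith [hxI.2]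
      have : k ≤ ⌊(L₂ - L₁)/r⌋₊ := Nat.floor_le_floor hle
      omega
    refine mem_biUnion (Finset.mem_range.mpr hkN) ⟨⟨?_, ?_⟩, hxv⟩
    · have := Nat.floor_le hx1
      have := (le_div_iff₀ hr).mp this
      simp only [haa]; linarith
    · refine le_min ?_ hxI.2
      have := Nat.lt_floor_add_one ((x - L₁)/r)
      have := (div_lt_iff₀ hr).mp this
      push_cast
      linarith
  have hpiece : ∀ k, volume {y ∈ Icc (aa k) (bb k) | |v y - lam| < δ^m}
      ≤ ENNReal.ofReal (4^m * K * δ) := by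
    intro k
    rcases le_or_gt (aa k) (bb k) with hab | hab
    swap
    · rw [show {y ∈ Icc (aa k) (bb k) | |v y - lam| < δ^m} = ∅ by
        rw [Icc_eq_empty_of_lt hab]; simp]
      simp
    have haL : L₁ ≤ aa k := le_add_of_nonneg_right (by positivity)
    have hsub : Icc (aa k) (bb k) ⊆ Icc L₁ L₂ := Icc_subset_Icc haL (min_le_right _ _)
    obtain ⟨j, hj1, hjm, hjb⟩ := hunif (aa k) ⟨haL, le_trans hab (min_le_right _ _)⟩
    have hlb : ∀ x ∈ Icc (aa k) (bb k), c₀ ≤ |g j x| := by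
      intro x hx
      apply hjb x (hsub hx)
      rw [abs_of_nonneg (by linarith [hx.1])]
      have hxb := hx.2
      have hbbk : bb k ≤ L₁ + (k+1) * r := min_le_left _ _
      simp only [haa]
      push_cast at hbbk ⊢
      linarith
    have happ := SL_all j hj1 g lam (aa k) (bb k) c₀ (K*δ) hc₀ (by positivity)
      (fun i hi => (Hcont i (le_trans hi hjm)).mono hsub)
      (fun i hi x hx => Hder i (by omega) x
        ⟨lt_of_le_of_lt haL hx.1, lt_of_lt_of_le hx.2 (min_le_right _ _)⟩)
      hlb
    have hth : δ^m ≤ c₀ * (K*δ)^j := by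
      have e1 : δ^m = δ^(m-j) * δ^j := by rw [← pow_add]; congr 1; omega
      have e2 : δ^(m-j) ≤ 1 := pow_le_one₀ hδ.le (by linarith)
      have e3 : K ≤ K^j := le_self_pow₀ hK1 (by omega)
      have e4 : (1:ℝ) ≤ c₀ * K^j := le_trans hKc (by nlinarith)
      have e5 : (0:ℝ) < δ^j := by positivity
      calc δ^m = δ^(m-j) * δ^j := e1
        _ ≤ 1 * δ^j := by nlinarith
        _ ≤ (c₀ * K^j) * δ^j := by nlinarith
        _ = c₀ * (K*δ)^j := by rw [mul_pow]; ring
    have hss : {y ∈ Icc (aa k) (bb k) | |v y - lam| < δ^m} ⊆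
        {x ∈ Icc (aa k) (bb k) | |g 0 x - lam| < c₀ * (K*δ)^j} := by
      rintro x ⟨hxI, hxv⟩
      refine ⟨hxI, ?_⟩
      rw [show g 0 = v from iteratedDerivWithin_zero]
      linarith
    calc volume {y ∈ Icc (aa k) (bb k) | |v y - lam| < δ^m}
        ≤ volume {x ∈ Icc (aa k) (bb k) | |g 0 x - lam| < c₀ * (K*δ)^j} := measure_mono hss
      _ ≤ ENNReal.ofReal (4^j * (K*δ)) := happ
      _ ≤ ENNReal.ofReal (4^m * K * δ) := by
          apply ENNReal.ofReal_le_ofReal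
          have h4 : (4:ℝ)^j ≤ 4^m := pow_le_pow_right₀ (by norm_num) hjm
          calc (4:ℝ)^j * (K*δ) ≤ 4^m * (K*δ) :=
                mul_le_mul_of_nonneg_right h4 (by positivity)
            _ = 4^m * K * δ := by ring
  calc volume {y ∈ Icc L₁ L₂ | |v y - lam| < δ^m}
      ≤ volume (⋃ k ∈ Finset.range N, {y ∈ Icc (aa k) (bb k) | |v y - lam| < δ^m}) :=
        measure_mono hcov
    _ ≤ ∑ k ∈ Finset.range N, volume {y ∈ Icc (aa k) (bb k) | |v y - lam| < δ^m} :=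
        measure_biUnion_finset_le _ _
    _ ≤ ∑ k ∈ Finset.range N, ENNReal.ofReal (4^m * K * δ) :=
        Finset.sum_le_sum fun k _ => hpiece k
    _ = N * ENNReal.ofReal (4^m * K * δ) := by
        rw [Finset.sum_const, Finset.card_range, nsmul_eq_mul]
    _ = ENNReal.ofReal ((N * (4^m * K)) * δ) := by
        rw [← ENNReal.ofReal_natCast N, ← ENNReal.ofReal_mul (by positivity)]
        ring_nf
end

section
/- Let m ≥ 1 and L₁ < L₂ be real numbers, and let v : [L₁, L₂] → ℝ be a C^m function satisfying |v'(y)| + ⋯ + |v^{(m)}(y)| > 0 for all y ∈ [L₁, L₂]. Then there exist constants C₀' > 0 and δ̂₀ ∈ (0, 1) such that for every δ ∈ (0, δ̂₀] and every λ ∈ ℝ, the Lebesgue measure of the δ-neighborhood 𝓔^m_{λ,δ} = {y ∈ [L₁, L₂] : dist(y, E^m_{λ,δ}) < δ} of E^m_{λ,δ} = {y ∈ [L₁, L₂] : |v(y) − λ| < δ^m} satisfies m(𝓔^m_{λ,δ}) ≤ C₀' δ. -/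
open Set MeasureTheory ENNReal

private lemma aux_mvt (m : ℕ) (L₁ L₂ : ℝ) (hL : L₁ < L₂) (v : ℝ → ℝ)
    (hv : ContDiffOn ℝ m v (Set.Icc L₁ L₂)) {j : ℕ} (hj : j < m)
    {y₁ y₂ : ℝ} (h1 : y₁ ∈ Set.Ioo L₁ L₂) (h2 : y₂ ∈ Set.Ioo L₁ L₂) (hlt : y₁ < y₂) :
    ∃ ξ ∈ Set.Ioo y₁ y₂,
      iteratedDerivWithin j v (Set.Icc L₁ L₂) y₂ - iteratedDerivWithin j v (Set.Icc L₁ L₂) y₁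
        = iteratedDerivWithin (j+1) v (Set.Icc L₁ L₂) ξ * (y₂ - y₁) := by
  set K := Set.Icc L₁ L₂ with hKdef
  have hK : UniqueDiffOn ℝ K := uniqueDiffOn_Icc hL
  have hcont : ContinuousOn (iteratedDerivWithin j v K) K :=
    hv.continuousOn_iteratedDerivWithin (by exact_mod_cast hj.le) hK
  have hdiff : DifferentiableOn ℝ (iteratedDerivWithin j v K) K :=
    hv.differentiableOn_iteratedDerivWithin (by exact_mod_cast hj) hK
  have hIccsub : Set.Icc y₁ y₂ ⊆ K := Set.Icc_subset_Icc h1.1.le h2.2.le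
  have hderiv : ∀ x ∈ Set.Ioo y₁ y₂, HasDerivAt (iteratedDerivWithin j v K)
      (iteratedDerivWithin (j+1) v K x) x := by
    intro x hx
    have hxI : x ∈ Set.Ioo L₁ L₂ := ⟨h1.1.trans hx.1, hx.2.trans h2.2⟩
    have hxK : x ∈ K := Set.Ioo_subset_Icc_self hxI
    have hmem : K ∈ nhds x := Icc_mem_nhds hxI.1 hxI.2
    have h1' := (hdiff x hxK).hasDerivWithinAt.hasDerivAt hmem
    rw [iteratedDerivWithin_succ]
    exact h1'
  obtain ⟨ξ, hξ, hval⟩ := exists_hasDerivAt_eq_slope _ _ hlt (hcont.mono hIccsub) hderiv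
  refine ⟨ξ, hξ, ?_⟩
  rw [hval, div_mul_cancel₀ _ (sub_ne_zero.mpr hlt.ne')]

private lemma aux_sep (m : ℕ) (L₁ L₂ : ℝ) (hL : L₁ < L₂) (v : ℝ → ℝ)
    (hv : ContDiffOn ℝ m v (Set.Icc L₁ L₂)) {j : ℕ} (hj : j < m)
    {a b : ℝ} (ha : L₁ ≤ a) (hb : b ≤ L₂) {c : ℝ} (hc : 0 < c)
    (hder : ∀ y ∈ Set.Ioo a b, c ≤ |iteratedDerivWithin (j+1) v (Set.Icc L₁ L₂) y|)
    (μ h : ℝ) :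
    ∀ y₁ ∈ Set.Ioo a b, ∀ y₂ ∈ Set.Ioo a b,
      |iteratedDerivWithin j v (Set.Icc L₁ L₂) y₁ - μ| ≤ h →
      |iteratedDerivWithin j v (Set.Icc L₁ L₂) y₂ - μ| ≤ h →
      |y₁ - y₂| ≤ 2 * h / c := by
  have hsub : Set.Ioo a b ⊆ Set.Ioo L₁ L₂ := Set.Ioo_subset_Ioo ha hb
  have key : ∀ y₁ ∈ Set.Ioo a b, ∀ y₂ ∈ Set.Ioo a b, y₁ < y₂ →
      |iteratedDerivWithin j v (Set.Icc L₁ L₂) y₁ - μ| ≤ h →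
      |iteratedDerivWithin j v (Set.Icc L₁ L₂) y₂ - μ| ≤ h →
      y₂ - y₁ ≤ 2 * h / c := by
    intro y₁ hy₁ y₂ hy₂ hlt hb1 hb2
    obtain ⟨ξ, hξ, hval⟩ := aux_mvt m L₁ L₂ hL v hv hj (hsub hy₁) (hsub hy₂) hlt
    have hξab : ξ ∈ Set.Ioo a b := ⟨hy₁.1.trans hξ.1, hξ.2.trans hy₂.2⟩
    have h1 : c * (y₂ - y₁) ≤ |iteratedDerivWithin (j+1) v (Set.Icc L₁ L₂) ξ| * (y₂ - y₁) :=
      mul_le_mul_of_nonneg_right (hder ξ hξab) (by linarith)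
    have h2 : |iteratedDerivWithin (j+1) v (Set.Icc L₁ L₂) ξ| * (y₂ - y₁)
        = |iteratedDerivWithin j v (Set.Icc L₁ L₂) y₂
            - iteratedDerivWithin j v (Set.Icc L₁ L₂) y₁| := by
      rw [hval, abs_mul, abs_of_pos (by linarith : (0:ℝ) < y₂ - y₁)]
    have h3 : |iteratedDerivWithin j v (Set.Icc L₁ L₂) y₂
        - iteratedDerivWithin j v (Set.Icc L₁ L₂) y₁| ≤ 2 * h := by
      have heq : iteratedDerivWithin j v (Set.Icc L₁ L₂) y₂
          - iteratedDerivWithin j v (Set.Icc L₁ L₂) y₁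
          = (iteratedDerivWithin j v (Set.Icc L₁ L₂) y₂ - μ)
            - (iteratedDerivWithin j v (Set.Icc L₁ L₂) y₁ - μ) := by ring
      rw [heq]
      calc |(iteratedDerivWithin j v (Set.Icc L₁ L₂) y₂ - μ)
            - (iteratedDerivWithin j v (Set.Icc L₁ L₂) y₁ - μ)|
          ≤ |iteratedDerivWithin j v (Set.Icc L₁ L₂) y₂ - μ|
            + |iteratedDerivWithin j v (Set.Icc L₁ L₂) y₁ - μ| := abs_sub _ _
        _ ≤ 2 * h := by linarith
    rw [le_div_iff₀ hc, mul_comm]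
    linarith
  intro y₁ hy₁ y₂ hy₂ hb1 hb2
  have hh : 0 ≤ h := le_trans (abs_nonneg _) hb1
  rcases lt_trichotomy y₁ y₂ with hlt | heq | hgt
  · rw [abs_of_neg (by linarith : y₁ - y₂ < 0)]
    have := key y₁ hy₁ y₂ hy₂ hlt hb1 hb2
    linarith
  · simp [heq]
    positivity
  · rw [abs_of_pos (by linarith : 0 < y₁ - y₂)]
    have := key y₂ hy₂ y₁ hy₁ hgt hb2 hb1
    linarith

private lemma aux_cover (m : ℕ) (L₁ L₂ : ℝ) (hL : L₁ < L₂) (v : ℝ → ℝ)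
    (hv : ContDiffOn ℝ m v (Set.Icc L₁ L₂))
    {ε0 : ℝ} (hε0 : 0 < ε0) {δ : ℝ} (hδ : 0 < δ) (lam : ℝ) :
    ∀ j, 1 ≤ j → j ≤ m → ∀ a b : ℝ, L₁ ≤ a → b ≤ L₂ →
      (∀ y ∈ Set.Ioo a b, ε0 * δ ^ (m - j) ≤ |iteratedDerivWithin j v (Set.Icc L₁ L₂) y|) →
      ∃ t : Finset ℝ, t.card ≤ 3 ^ j ∧
        {y ∈ Set.Ioo a b | |v y - lam| < δ ^ m} ⊆
          ⋃ p ∈ t, Set.Icc (p - (2/ε0 + 2) * δ) (p + (2/ε0 + 2) * δ) := by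
  intro j hj1
  induction j, hj1 using Nat.le_induction with
  | base =>
    intro hjm a b ha hb hder
    rcases Set.eq_empty_or_nonempty {y ∈ Set.Ioo a b | |v y - lam| < δ ^ m} with hS | ⟨y₀, hy₀⟩
    · exact ⟨∅, by simp, by rw [hS]; exact Set.empty_subset _⟩
    · refine ⟨{y₀}, by simp, ?_⟩
      intro y hy
      obtain ⟨hyab, hyv⟩ := hy
      obtain ⟨hy₀ab, hy₀v⟩ := hy₀
      have hm1 : (0:ℕ) < m := hjm
      have hc : (0:ℝ) < ε0 * δ ^ (m - 1) := by positivity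
      have hder' : ∀ y ∈ Set.Ioo a b, ε0 * δ ^ (m - 1)
          ≤ |iteratedDerivWithin (0+1) v (Set.Icc L₁ L₂) y| := by
        simpa using hder
      have hsep := aux_sep m L₁ L₂ hL v hv hm1 ha hb hc hder' lam (δ ^ m)
        y hyab y₀ hy₀ab (by simpa [iteratedDerivWithin_zero] using hyv.le)
        (by simpa [iteratedDerivWithin_zero] using hy₀v.le)
      have heq : 2 * δ ^ m / (ε0 * δ ^ (m - 1)) = 2 / ε0 * δ := by
        have hm' : m - 1 + 1 = m := Nat.succ_pred_eq_of_pos hm1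
        rw [← hm', pow_succ]
        field_simp
        ring_nf
        congr 1
        omega
      rw [heq] at hsep
      have hbound : |y - y₀| ≤ (2 / ε0 + 2) * δ := by
        have : 2 / ε0 * δ ≤ (2 / ε0 + 2) * δ := by nlinarith
        linarith
      have := abs_le.mp hbound
      refine Set.mem_iUnion₂.mpr ⟨y₀, Finset.mem_singleton_self y₀, ?_⟩
      constructor <;> linarith [this.1, this.2]
  | succ j hj1 IH =>
    intro hjm a b ha hb hder
    have hjm' : j ≤ m := le_trans (Nat.le_succ j) hjm
    have hjltm : j < m := hjm
    rcases Set.eq_empty_or_nonempty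
        {y ∈ Set.Ioo a b | |iteratedDerivWithin j v (Set.Icc L₁ L₂) y| ≤ ε0 * δ ^ (m - j)}
      with hJ | ⟨y₀, hy₀⟩
    · have hder' : ∀ y ∈ Set.Ioo a b,
          ε0 * δ ^ (m - j) ≤ |iteratedDerivWithin j v (Set.Icc L₁ L₂) y| := by
        intro y hy
        by_contra hcon
        exact (Set.eq_empty_iff_forall_notMem.mp hJ y) ⟨hy, (not_le.mp hcon).le⟩
      obtain ⟨t, ht, hsub⟩ := IH hjm' a b ha hb hder'
      exact ⟨t, ht.trans (Nat.pow_le_pow_right (by norm_num) (Nat.le_succ j)), hsub⟩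
    · obtain ⟨hy₀ab, hy₀v⟩ := hy₀
      have hc : (0:ℝ) < ε0 * δ ^ (m - (j+1)) := by positivity
      have hmj : m - j = (m - (j+1)) + 1 := by omega
      have heq : 2 * (ε0 * δ ^ (m - j)) / (ε0 * δ ^ (m - (j+1))) = 2 * δ := by
        rw [hmj, pow_succ]
        field_simp
      have hclose : ∀ y ∈ Set.Ioo a b,
          |iteratedDerivWithin j v (Set.Icc L₁ L₂) y| ≤ ε0 * δ ^ (m - j) →
          |y - y₀| ≤ 2 * δ := by
        intro y hy hyv
        have hsep := aux_sep m L₁ L₂ hL v hv hjltm ha hb hc hder 0 (ε0 * δ ^ (m - j))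
          y hy y₀ hy₀ab (by simpa using hyv) (by simpa using hy₀v)
        rwa [heq] at hsep
      set b₁ := min b (y₀ - 2*δ) with hb₁def
      set a₂ := max a (y₀ + 2*δ) with ha₂def
      have hder₁ : ∀ y ∈ Set.Ioo a b₁,
          ε0 * δ ^ (m - j) ≤ |iteratedDerivWithin j v (Set.Icc L₁ L₂) y| := by
        intro y hy
        have hyab : y ∈ Set.Ioo a b := ⟨hy.1, lt_of_lt_of_le hy.2 (min_le_left _ _)⟩
        by_contra hcon
        have h1 := hclose y hyab (not_le.mp hcon).le
        have h2 : y < y₀ - 2*δ := lt_of_lt_of_le hy.2 (min_le_right _ _)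
        have := abs_le.mp h1
        linarith [this.1]
      have hder₂ : ∀ y ∈ Set.Ioo a₂ b,
          ε0 * δ ^ (m - j) ≤ |iteratedDerivWithin j v (Set.Icc L₁ L₂) y| := by
        intro y hy
        have hyab : y ∈ Set.Ioo a b := ⟨lt_of_le_of_lt (le_max_left _ _) hy.1, hy.2⟩
        by_contra hcon
        have h1 := hclose y hyab (not_le.mp hcon).le
        have h2 : y₀ + 2*δ < y := lt_of_le_of_lt (le_max_right _ _) hy.1
        have := abs_le.mp h1
        linarith [this.2]
      obtain ⟨t₁, ht₁, hsub₁⟩ := IH hjm' a b₁ ha (le_trans (min_le_left _ _) hb) hder₁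
      obtain ⟨t₂, ht₂, hsub₂⟩ := IH hjm' a₂ b (le_trans ha (le_max_left _ _)) hb hder₂
      refine ⟨insert y₀ (t₁ ∪ t₂), ?_, ?_⟩
      · have hcard : (insert y₀ (t₁ ∪ t₂)).card ≤ 1 + (t₁.card + t₂.card) := by
          calc (insert y₀ (t₁ ∪ t₂)).card ≤ (t₁ ∪ t₂).card + 1 := Finset.card_insert_le _ _
            _ ≤ t₁.card + t₂.card + 1 := by
                have := Finset.card_union_le t₁ t₂
                omega
            _ = 1 + (t₁.card + t₂.card) := by omega
        have h3 : (1:ℕ) ≤ 3 ^ j := Nat.one_le_pow _ _ (by norm_num)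
        have : (3:ℕ) ^ (j+1) = 3 * 3 ^ j := by rw [pow_succ]; ring
        omega
      · intro y hy
        obtain ⟨hyab, hyv⟩ := hy
        by_cases hcase : |y - y₀| ≤ 2*δ
        · refine Set.mem_iUnion₂.mpr ⟨y₀, Finset.mem_insert_self _ _, ?_⟩
          have := abs_le.mp hcase
          have hpos : 0 < 2/ε0 := by positivity
          constructor <;> nlinarith [this.1, this.2]
        · have habs : 2*δ < |y - y₀| := not_le.mp hcase
          rcases lt_or_ge y y₀ with h' | h'
          · have hy2 : y < y₀ - 2*δ := by
              rcases abs_cases (y - y₀) with ⟨h1, _⟩ | ⟨h1, _⟩ <;> linarith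
            have hyin : y ∈ {y ∈ Set.Ioo a b₁ | |v y - lam| < δ ^ m} :=
              ⟨⟨hyab.1, lt_min hyab.2 hy2⟩, hyv⟩
            obtain ⟨p, hp, hyp⟩ := Set.mem_iUnion₂.mp (hsub₁ hyin)
            exact Set.mem_iUnion₂.mpr
              ⟨p, Finset.mem_insert_of_mem (Finset.mem_union_left _ hp), hyp⟩
          · have hy2 : y₀ + 2*δ < y := by
              rcases abs_cases (y - y₀) with ⟨h1, _⟩ | ⟨h1, _⟩ <;> linarith
            have hyin : y ∈ {y ∈ Set.Ioo a₂ b | |v y - lam| < δ ^ m} :=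
              ⟨⟨max_lt hyab.1 hy2, hyab.2⟩, hyv⟩
            obtain ⟨p, hp, hyp⟩ := Set.mem_iUnion₂.mp (hsub₂ hyin)
            exact Set.mem_iUnion₂.mpr
              ⟨p, Finset.mem_insert_of_mem (Finset.mem_union_right _ hp), hyp⟩

/-- uniform-in-`λ` measure estimate for the δ-neighborhood
`𝓔^m_{λ,δ}` on a compact interval.  If `v ∈ C^m([L₁,L₂])` satisfies the `m`-th order
non-degeneracy condition, then there are `C₀' > 0` and `δ̂₀ ∈ (0,1)` such that for every
`δ ∈ (0, δ̂₀]` and every `λ ∈ ℝ`, `m(𝓔^m_{λ,δ}) ≤ C₀' δ`, where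
`𝓔^m_{λ,δ} = {y ∈ [L₁,L₂] : dist(y, E^m_{λ,δ}) < δ}` (with `dist(y, ∅) = ∞`) and
`E^m_{λ,δ} = {y ∈ [L₁,L₂] : |v(y) − λ| < δ^m}`. -/
theorem measure_estimate_neighborhood_uniform
    (m : ℕ) (hm : 1 ≤ m) (L₁ L₂ : ℝ) (hL : L₁ < L₂)
    (v : ℝ → ℝ) (hv : ContDiffOn ℝ m v (Set.Icc L₁ L₂))
    (hnd : ∀ y ∈ Set.Icc L₁ L₂,
      0 < ∑ j ∈ Finset.Icc 1 m, |iteratedDerivWithin j v (Set.Icc L₁ L₂) y|) :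
    ∃ C₀' > 0, ∃ δ₀ : ℝ, 0 < δ₀ ∧ δ₀ < 1 ∧
      ∀ δ : ℝ, 0 < δ → δ ≤ δ₀ → ∀ lam : ℝ,
        volume {y ∈ Set.Icc L₁ L₂ |
            EMetric.infEdist y {z ∈ Set.Icc L₁ L₂ | |v z - lam| < δ ^ m} <
              ENNReal.ofReal δ}
          ≤ ENNReal.ofReal (C₀' * δ) := by
  have hKc : IsCompact (Set.Icc L₁ L₂) := isCompact_Icc
  have hKne : (Set.Icc L₁ L₂).Nonempty := Set.nonempty_Icc.mpr hL.le
  have hUD : UniqueDiffOn ℝ (Set.Icc L₁ L₂) := uniqueDiffOn_Icc hL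
  have hcontj : ∀ j, j ≤ m →
      ContinuousOn (iteratedDerivWithin j v (Set.Icc L₁ L₂)) (Set.Icc L₁ L₂) :=
    fun j hj => hv.continuousOn_iteratedDerivWithin (by exact_mod_cast hj) hUD
  have hsumcont : ContinuousOn
      (fun y => ∑ j ∈ Finset.Icc 1 m, |iteratedDerivWithin j v (Set.Icc L₁ L₂) y|)
      (Set.Icc L₁ L₂) := by
    apply continuousOn_finset_sum
    intro j hj
    exact (hcontj j (Finset.mem_Icc.mp hj).2).abs
  obtain ⟨ymin, hyminK, hmin⟩ := hKc.exists_isMinOn hKne hsumcont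
  set ε : ℝ := ∑ j ∈ Finset.Icc 1 m, |iteratedDerivWithin j v (Set.Icc L₁ L₂) ymin| with hεdef
  have hε : 0 < ε := hnd ymin hyminK
  set ε0 : ℝ := ε / (2 * m) with hε0def
  have hε0 : 0 < ε0 := by positivity
  -- pointwise lower bound on some derivative
  have hptwise : ∀ y ∈ Set.Icc L₁ L₂, ∃ j, 1 ≤ j ∧ j ≤ m ∧
      2 * ε0 ≤ |iteratedDerivWithin j v (Set.Icc L₁ L₂) y| := by
    intro y hy
    by_contra hcon
    push_neg at hcon
    have hlt : ∀ j ∈ Finset.Icc 1 m,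
        |iteratedDerivWithin j v (Set.Icc L₁ L₂) y| < 2 * ε0 := by
      intro j hj
      obtain ⟨h1, h2⟩ := Finset.mem_Icc.mp hj
      exact hcon j h1 h2
    have hne : (Finset.Icc 1 m).Nonempty := by
      rw [Finset.nonempty_Icc]; exact hm
    have hsumlt : ∑ j ∈ Finset.Icc 1 m, |iteratedDerivWithin j v (Set.Icc L₁ L₂) y|
        < ∑ _j ∈ Finset.Icc 1 m, 2 * ε0 := Finset.sum_lt_sum_of_nonempty hne hlt
    rw [Finset.sum_const, Nat.card_Icc] at hsumlt
    have hcard : m + 1 - 1 = m := by omega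
    rw [hcard, nsmul_eq_mul] at hsumlt
    have h2e : (m : ℝ) * (2 * ε0) = ε := by
      rw [hε0def]
      field_simp
    rw [h2e] at hsumlt
    have hmy := hmin hy
    rw [Set.mem_setOf_eq] at hmy
    simp only [← hεdef] at hmy
    linarith
  -- uniform continuity, combined over finitely many orders
  have hUC : ∀ s : Finset ℕ, (∀ j ∈ s, j ≤ m) → ∃ r > 0, ∀ j ∈ s, ∀ x ∈ Set.Icc L₁ L₂,
      ∀ y ∈ Set.Icc L₁ L₂, dist x y < r →
      dist (iteratedDerivWithin j v (Set.Icc L₁ L₂) x)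
        (iteratedDerivWithin j v (Set.Icc L₁ L₂) y) < ε0 := by
    intro s
    induction s using Finset.induction_on with
    | empty => exact fun _ => ⟨1, one_pos, by simp⟩
    | insert a s' hni ih =>
      intro hall
      obtain ⟨r₁, hr₁, hF⟩ := ih (fun j hj => hall j (Finset.mem_insert_of_mem hj))
      have hUCa := Metric.uniformContinuousOn_iff.mp
        (hKc.uniformContinuousOn_of_continuous (hcontj a (hall a (Finset.mem_insert_self _ _))))
        ε0 hε0
      obtain ⟨r₂, hr₂, hG⟩ := hUCa
      refine ⟨min r₁ r₂, lt_min hr₁ hr₂, ?_⟩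
      intro j hj x hx y hy hxy
      rcases Finset.mem_insert.mp hj with rfl | hj'
      · exact hG x hx y hy (hxy.trans_le (min_le_right _ _))
      · exact hF j hj' x hx y hy (hxy.trans_le (min_le_left _ _))
  obtain ⟨r, hr, hUCall⟩ := hUC (Finset.Icc 1 m) (fun j hj => (Finset.mem_Icc.mp hj).2)
  -- partition of [L₁, L₂] into n pieces of width w ≤ r
  set n : ℕ := ⌈(L₂ - L₁) / r⌉₊ with hndef
  have hn0 : 0 < n := Nat.ceil_pos.mpr (div_pos (by linarith) hr)
  set w : ℝ := (L₂ - L₁) / n with hwdef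
  have hw : 0 < w := div_pos (by linarith) (by exact_mod_cast hn0)
  have hnw : (n : ℝ) * w = L₂ - L₁ := by
    rw [hwdef]
    field_simp
  have hwr : w ≤ r := by
    have h1 : (L₂ - L₁) / r ≤ n := Nat.le_ceil _
    rw [div_le_iff₀ hr] at h1
    rw [hwdef, div_le_iff₀ (by positivity : (0:ℝ) < (n:ℝ))]
    linarith [mul_comm (n:ℝ) r]
  set x : ℕ → ℝ := fun i => L₁ + i * w with hxdef
  have hxK : ∀ i, i ≤ n → x i ∈ Set.Icc L₁ L₂ := by
    intro i hi
    constructor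
    · simp [hxdef]; positivity
    · simp only [hxdef]
      have : (i:ℝ) * w ≤ n * w := by
        have : (i:ℝ) ≤ n := by exact_mod_cast hi
        nlinarith
      linarith [hnw]
  have hpiece : ∀ i, i < n → ∃ j, 1 ≤ j ∧ j ≤ m ∧
      ∀ y ∈ Set.Ioo (x i) (x (i+1)), ε0 ≤ |iteratedDerivWithin j v (Set.Icc L₁ L₂) y| := by
    intro i hi
    obtain ⟨j, hj1, hjm, hjval⟩ := hptwise (x i) (hxK i hi.le)
    refine ⟨j, hj1, hjm, ?_⟩
    intro y hy
    have hyK : y ∈ Set.Icc L₁ L₂ :=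
      ⟨(hxK i hi.le).1.trans hy.1.le, hy.2.le.trans (hxK (i+1) hi).2⟩
    have hdy : dist (x i) y < r := by
      rw [Real.dist_eq, abs_of_neg (by linarith [hy.1] : x i - y < 0)]
      have hxw : x (i+1) - x i = w := by simp [hxdef]; ring
      have h2 := hy.2
      calc -(x i - y) = y - x i := by ring
        _ < w := by linarith
        _ ≤ r := hwr
    have hd := hUCall j (Finset.mem_Icc.mpr ⟨hj1, hjm⟩) (x i) (hxK i hi.le) y hyK hdy
    rw [Real.dist_eq] at hd
    have habs := abs_sub_abs_le_abs_sub (iteratedDerivWithin j v (Set.Icc L₁ L₂) (x i))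
      (iteratedDerivWithin j v (Set.Icc L₁ L₂) y)
    linarith
  choose jf hjf1 hjf2 hjf3 using hpiece
  -- the constants
  refine ⟨((n * 3 ^ m + (n + 1) : ℕ) : ℝ) * (2 * ((2/ε0 + 2) + 1)), by positivity,
    1/2, by norm_num, by norm_num, ?_⟩
  intro δ hδ hδle lam
  have hδ1 : δ ≤ 1 := hδle.trans (by norm_num)
  -- cover each piece
  have hcover : ∀ i, i < n → ∃ t : Finset ℝ, t.card ≤ 3 ^ m ∧
      {y ∈ Set.Ioo (x i) (x (i+1)) | |v y - lam| < δ ^ m} ⊆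
        ⋃ p ∈ t, Set.Icc (p - (2/ε0 + 2) * δ) (p + (2/ε0 + 2) * δ) := by
    intro i hi
    have hder : ∀ y ∈ Set.Ioo (x i) (x (i+1)),
        ε0 * δ ^ (m - jf i hi) ≤ |iteratedDerivWithin (jf i hi) v (Set.Icc L₁ L₂) y| := by
      intro y hy
      have hp1 : δ ^ (m - jf i hi) ≤ 1 := pow_le_one₀ hδ.le hδ1
      calc ε0 * δ ^ (m - jf i hi) ≤ ε0 * 1 := by nlinarith
        _ = ε0 := mul_one _
        _ ≤ _ := hjf3 i hi y hy
    obtain ⟨t, hcard, hsub⟩ := aux_cover m L₁ L₂ hL v hv hε0 hδ lam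
      (jf i hi) (hjf1 i hi) (hjf2 i hi) (x i) (x (i+1))
      (hxK i hi.le).1 (hxK (i+1) hi).2 hder
    exact ⟨t, hcard.trans (Nat.pow_le_pow_right (by norm_num) (hjf2 i hi)), hsub⟩
  choose tf htc hts using hcover
  classical
  obtain ⟨T, hTcard, hEcov⟩ : ∃ T : Finset ℝ, T.card ≤ n * 3 ^ m + (n + 1) ∧
      ∀ z ∈ {z ∈ Set.Icc L₁ L₂ | |v z - lam| < δ ^ m},
        ∃ p ∈ T, z ∈ Set.Icc (p - (2/ε0 + 2) * δ) (p + (2/ε0 + 2) * δ) := by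
    refine ⟨((Finset.range n).attach.biUnion fun i => tf i (Finset.mem_range.mp i.2))
      ∪ (Finset.range (n+1)).image x, ?_, ?_⟩
    · calc _ ≤ ((Finset.range n).attach.biUnion fun i => tf i (Finset.mem_range.mp i.2)).card
        + ((Finset.range (n+1)).image x).card := Finset.card_union_le _ _
      _ ≤ (∑ i ∈ (Finset.range n).attach, (tf i (Finset.mem_range.mp i.2)).card)
        + (n + 1) := by
          gcongr
          · exact Finset.card_biUnion_le
          · exact (Finset.card_image_le).trans (by simp)
      _ ≤ (∑ _i ∈ (Finset.range n).attach, 3 ^ m) + (n + 1) := by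
          gcongr with i hi
          exact htc i _
      _ = n * 3 ^ m + (n + 1) := by
          rw [Finset.sum_const, Finset.card_attach, Finset.card_range, smul_eq_mul]
    intro z hz
    obtain ⟨hzK, hzv⟩ := hz
    have hRδ : 0 ≤ (2/ε0 + 2) * δ := by positivity
    by_cases hzL : z < L₂
    · set i : ℕ := ⌊(z - L₁) / w⌋₊ with hidef
      have hznn : 0 ≤ (z - L₁) / w := div_nonneg (by linarith [hzK.1]) hw.le
      have hi : i < n := by
        rw [hidef, Nat.floor_lt hznn, div_lt_iff₀ hw]
        linarith [hnw]
      have hxi : x i ≤ z := by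
        have h1 : (i:ℝ) ≤ (z - L₁) / w := Nat.floor_le hznn
        rw [le_div_iff₀ hw] at h1
        simp only [hxdef]
        linarith
      have hxi1 : z < x (i+1) := by
        have h1 : (z - L₁) / w < i + 1 := Nat.lt_floor_add_one _
        rw [div_lt_iff₀ hw] at h1
        simp only [hxdef]
        push_cast
        linarith
      rcases eq_or_lt_of_le hxi with heq | hlt
      · refine ⟨x i, ?_, ?_⟩
        · exact Finset.mem_union_right _
            (Finset.mem_image.mpr ⟨i, Finset.mem_range.mpr (by omega), rfl⟩)
        · rw [heq]
          exact ⟨by linarith, by linarith⟩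
      · have hzmem : z ∈ {y ∈ Set.Ioo (x i) (x (i+1)) | |v y - lam| < δ ^ m} :=
          ⟨⟨hlt, hxi1⟩, hzv⟩
        obtain ⟨p, hp, hzp⟩ := Set.mem_iUnion₂.mp (hts i hi hzmem)
        refine ⟨p, ?_, hzp⟩
        exact Finset.mem_union_left _
          (Finset.mem_biUnion.mpr ⟨⟨i, Finset.mem_range.mpr hi⟩, Finset.mem_attach _ _, hp⟩)
    · have hz2 : z = L₂ := le_antisymm hzK.2 (not_lt.mp hzL)
      have hxn : x n = L₂ := by
        simp only [hxdef]
        linarith [hnw]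
      refine ⟨x n, ?_, ?_⟩
      · exact Finset.mem_union_right _
          (Finset.mem_image.mpr ⟨n, Finset.mem_range.mpr (by omega), rfl⟩)
      · rw [hxn, ← hz2]
        exact ⟨by linarith, by linarith⟩
  -- the δ-neighborhood is covered by enlarged T-intervals
  have hNcov : {y ∈ Set.Icc L₁ L₂ |
      EMetric.infEdist y {z ∈ Set.Icc L₁ L₂ | |v z - lam| < δ ^ m} < ENNReal.ofReal δ} ⊆
      ⋃ p ∈ T, Set.Icc (p - ((2/ε0 + 2) + 1) * δ) (p + ((2/ε0 + 2) + 1) * δ) := by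
    intro y hy
    obtain ⟨hyK, hyd⟩ := hy
    obtain ⟨z, hzE, hze⟩ := EMetric.infEdist_lt_iff.mp hyd
    have hdist : dist y z < δ := edist_lt_ofReal.mp hze
    rw [Real.dist_eq] at hdist
    obtain ⟨p, hp, hzp⟩ := hEcov z hzE
    obtain ⟨hzp1, hzp2⟩ := hzp
    have := abs_lt.mp hdist
    refine Set.mem_iUnion₂.mpr ⟨p, hp, ?_⟩
    constructor <;> [linarith [this.1] ; linarith [this.2]]
  -- conclude with the measure estimate
  calc volume {y ∈ Set.Icc L₁ L₂ |
        EMetric.infEdist y {z ∈ Set.Icc L₁ L₂ | |v z - lam| < δ ^ m} < ENNReal.ofReal δ}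
      ≤ volume (⋃ p ∈ T, Set.Icc (p - ((2/ε0 + 2) + 1) * δ) (p + ((2/ε0 + 2) + 1) * δ)) :=
        measure_mono hNcov
    _ ≤ ∑ p ∈ T, volume (Set.Icc (p - ((2/ε0 + 2) + 1) * δ) (p + ((2/ε0 + 2) + 1) * δ)) :=
        measure_biUnion_finset_le T _
    _ = ∑ _p ∈ T, ENNReal.ofReal (2 * (((2/ε0 + 2) + 1) * δ)) := by
        refine Finset.sum_congr rfl fun p _ => ?_
        rw [Real.volume_Icc]
        congr 1
        ring
    _ = (T.card : ℝ≥0∞) * ENNReal.ofReal (2 * (((2/ε0 + 2) + 1) * δ)) := by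
        rw [Finset.sum_const, nsmul_eq_mul]
    _ = ENNReal.ofReal ((T.card : ℝ) * (2 * (((2/ε0 + 2) + 1) * δ))) := by
        rw [← ENNReal.ofReal_natCast, ← ENNReal.ofReal_mul (by positivity)]
    _ ≤ ENNReal.ofReal (((n * 3 ^ m + (n + 1) : ℕ) : ℝ) * (2 * ((2/ε0 + 2) + 1)) * δ) := by
        apply ENNReal.ofReal_le_ofReal
        have hc1 : (T.card : ℝ) ≤ ((n * 3 ^ m + (n + 1) : ℕ) : ℝ) := by exact_mod_cast hTcard
        have h2 : (0:ℝ) ≤ 2 * (((2/ε0 + 2) + 1) * δ) := by positivity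
        nlinarith [mul_le_mul_of_nonneg_right hc1 h2]
end

section
/- Let Ω be one of ℝ, (-∞, L₁), or (L₂, ∞), let m ∈ ℕ*, and let v : cl(Ω) → ℝ be a C^m function satisfying |v'(y)| + |v''(y)| + ⋯ + |v^{(m)}(y)| > 0 for all y ∈ cl(Ω) and liminf_{|y|→∞} |v'(y)| ≥ c₀ for some c₀ > 0. Then there exist constants C > 0 and δ₀ > 0 such that for every λ ∈ ℝ and every δ ∈ (0, δ₀], the Lebesgue measure of the δ-neighborhood 𝓔^m_{λ,δ} = {y ∈ Ω : dist(y, E^m_{λ,δ}) < δ} of E^m_{λ,δ} = {y ∈ Ω : |v(y) − λ| < δ^m} satisfies m(𝓔^m_{λ,δ}) ≤ C δ. -/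
open Set MeasureTheory Filter ENNReal

set_option maxHeartbeats 1000000

/-- Sign constancy for a nonvanishing continuous function on an order-connected set. -/
lemma aux_sign_const {t : Set ℝ} (ht : t.OrdConnected) {f : ℝ → ℝ} (hf : ContinuousOn f t)
    (h0 : ∀ x ∈ t, f x ≠ 0) {a b : ℝ} (ha : a ∈ t) (hb : b ∈ t) (hfa : 0 < f a) : 0 < f b := by
  rcases lt_or_gt_of_ne (h0 b hb) with hneg | hpos
  · exfalso
    have hsub : uIcc b a ⊆ t := ht.uIcc_subset hb ha
    have := intermediate_value_uIcc (f := f) (a := b) (b := a) (hf.mono hsub)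
    have h0m : (0:ℝ) ∈ uIcc (f b) (f a) := by
      rw [Set.mem_uIcc]; left; exact ⟨hneg.le, hfa.le⟩
    obtain ⟨x, hx, hfx⟩ := this h0m
    exact h0 x (hsub hx) hfx
  · exact hpos

/-- Comparison of increments: if `deriv φ ≤ deriv f` on the interior, then the increment of `φ`
is at most the increment of `f`. -/
lemma aux_incr_of_deriv_le {f φ : ℝ → ℝ} {a b : ℝ} (hab : a ≤ b)
    (hf : ContinuousOn f (Icc a b)) (hφ : ContinuousOn φ (Icc a b))
    (hfd : ∀ x ∈ Ioo a b, DifferentiableAt ℝ f x) (hφd : ∀ x ∈ Ioo a b, DifferentiableAt ℝ φ x)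
    (hle : ∀ x ∈ Ioo a b, deriv φ x ≤ deriv f x) :
    φ b - φ a ≤ f b - f a := by
  have hmono : MonotoneOn (fun x => f x - φ x) (Icc a b) := by
    apply monotoneOn_of_deriv_nonneg (convex_Icc a b) (hf.sub hφ)
    · rw [interior_Icc]
      exact fun x hx => ((hfd x hx).sub (hφd x hx)).differentiableWithinAt
    · rw [interior_Icc]
      intro x hx
      rw [deriv_sub (hfd x hx) (hφd x hx)]
      linarith [hle x hx]
  have := hmono (left_mem_Icc.2 hab) (right_mem_Icc.2 hab) hab
  simp only at this
  linarith

lemma aux_hasDerivAt_shift_pow (c a : ℝ) (n : ℕ) (x : ℝ) :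
    HasDerivAt (fun w => c * (w - a) ^ (n + 1) / (n + 1)) (c * (x - a) ^ n) x := by
  have h1 : HasDerivAt (fun w : ℝ => (w - a) ^ (n + 1)) ((n + 1 : ℕ) * (x - a) ^ n * 1) x := by
    simpa using ((hasDerivAt_id x).sub_const a).fun_pow (n + 1)
  have h2 := (h1.const_mul c).div_const ((n : ℝ) + 1)
  refine h2.congr_deriv ?_
  have : ((n : ℝ) + 1) ≠ 0 := by positivity
  push_cast
  rw [div_eq_iff this]
  ring

lemma aux_hasDerivAt_shift_pow' (c b : ℝ) (n : ℕ) (x : ℝ) :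
    HasDerivAt (fun w => -(c * (b - w) ^ (n + 1) / (n + 1))) (c * (b - x) ^ n) x := by
  have h1 : HasDerivAt (fun w : ℝ => (b - w) ^ (n + 1)) ((n + 1 : ℕ) * (b - x) ^ n * (-1)) x := by
    simpa using ((hasDerivAt_id x).const_sub b).fun_pow (n + 1)
  have h2 := ((h1.const_mul c).div_const ((n : ℝ) + 1)).neg
  refine h2.congr_deriv ?_
  have : ((n : ℝ) + 1) ≠ 0 := by positivity
  push_cast
  rw [neg_eq_iff_eq_neg, div_eq_iff this]
  ring

/-- Core growth lemma: if `f` has nonvanishing continuous derivative `F` on `(a,b)` and `φ` is a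
comparison function with `deriv φ ≤ |F|`, then the increment of `φ` bounds `|f b - f a|`. -/
lemma aux_core {f F φ : ℝ → ℝ} {a b : ℝ} (hab : a < b)
    (hfc : ContinuousOn f (Icc a b)) (hF : ∀ x ∈ Ioo a b, HasDerivAt f (F x) x)
    (hFc : ContinuousOn F (Ioo a b)) (hF0 : ∀ x ∈ Ioo a b, F x ≠ 0)
    (hφc : ContinuousOn φ (Icc a b)) (hφd : ∀ x ∈ Ioo a b, DifferentiableAt ℝ φ x)
    (hlow : ∀ x ∈ Ioo a b, deriv φ x ≤ |F x|) :
    φ b - φ a ≤ |f b - f a| := by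
  have hne : ((a + b) / 2) ∈ Ioo a b := ⟨by linarith, by linarith⟩
  rcases lt_or_gt_of_ne (hF0 _ hne) with hneg | hpos
  · -- F < 0 on Ioo a b
    have hFneg : ∀ x ∈ Ioo a b, 0 < -F x := by
      intro x hx
      exact aux_sign_const ordConnected_Ioo (hFc.neg) (fun y hy => neg_ne_zero.2 (hF0 y hy))
        hne hx (by simp only [Pi.neg_apply]; linarith)
    have key : φ b - φ a ≤ (-f) b - (-f) a := by
      apply aux_incr_of_deriv_le hab.le hfc.neg hφc
        (fun x hx => ((hF x hx).differentiableAt).neg) hφd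
      intro x hx
      rw [deriv.neg, (hF x hx).deriv]
      calc deriv φ x ≤ |F x| := hlow x hx
        _ = -F x := abs_of_neg (by linarith [hFneg x hx])
    simp only [Pi.neg_apply] at key
    have := neg_le_abs (f b - f a)
    linarith
  · -- F > 0 on Ioo a b
    have hFpos : ∀ x ∈ Ioo a b, 0 < F x := by
      intro x hx
      exact aux_sign_const ordConnected_Ioo hFc hF0 hne hx hpos
    have key : φ b - φ a ≤ f b - f a := by
      apply aux_incr_of_deriv_le hab.le hfc hφc
        (fun x hx => (hF x hx).differentiableAt) hφd
      intro x hx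
      rw [(hF x hx).deriv]
      calc deriv φ x ≤ |F x| := hlow x hx
        _ = F x := abs_of_pos (hFpos x hx)
    exact key.trans (le_abs_self _)

lemma aux_base_measure {A : Set ℝ} {b : ℝ} (hb : 0 ≤ b)
    (h : ∀ y₁ ∈ A, ∀ y₂ ∈ A, y₁ ≤ y₂ → volume (A ∩ Icc y₁ y₂) ≤ ENNReal.ofReal b) :
    volume A ≤ ENNReal.ofReal b := by
  rcases A.eq_empty_or_nonempty with rfl | ⟨a₀, ha₀⟩
  · simp
  have key : ∀ c d : ℝ, volume (A ∩ Icc c d) ≤ ENNReal.ofReal b := by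
    intro c d
    rcases (A ∩ Icc c d).eq_empty_or_nonempty with hBe | hBne
    · simp [hBe]
    set B := A ∩ Icc c d with hB
    have hbdd_below : BddBelow B := ⟨c, fun x hx => hx.2.1⟩
    have hbdd_above : BddAbove B := ⟨d, fun x hx => hx.2.2⟩
    apply ENNReal.le_of_forall_pos_le_add
    intro ε hε _
    have hε2 : 0 < (ε : ℝ) / 2 := by positivity
    obtain ⟨y₁, hy₁B, hy₁⟩ := exists_lt_of_csInf_lt hBne
      (show sInf B < sInf B + (ε : ℝ) / 2 by linarith)
    obtain ⟨y₂, hy₂B, hy₂⟩ := exists_lt_of_lt_csSup hBne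
      (show sSup B - (ε : ℝ) / 2 < sSup B by linarith)
    have hsub : B ⊆ (A ∩ Icc y₁ y₂) ∪ (Icc (sInf B) y₁ ∪ Icc y₂ (sSup B)) := by
      intro x hx
      rcases lt_or_ge x y₁ with hlt | hge
      · exact Or.inr (Or.inl ⟨csInf_le hbdd_below hx, hlt.le⟩)
      rcases le_or_gt x y₂ with hle | hgt
      · exact Or.inl ⟨hx.1, hge, hle⟩
      · exact Or.inr (Or.inr ⟨hgt.le, le_csSup hbdd_above hx⟩)
    have hv1 : volume (A ∩ Icc y₁ y₂) ≤ ENNReal.ofReal b := by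
      rcases le_or_gt y₁ y₂ with h12 | h21
      · exact h y₁ hy₁B.1 y₂ hy₂B.1 h12
      · rw [Icc_eq_empty (not_le.2 h21)]; simp
    have hv2 : volume (Icc (sInf B) y₁) ≤ ENNReal.ofReal ((ε : ℝ) / 2) := by
      rw [Real.volume_Icc]; exact ENNReal.ofReal_le_ofReal (by linarith)
    have hv3 : volume (Icc y₂ (sSup B)) ≤ ENNReal.ofReal ((ε : ℝ) / 2) := by
      rw [Real.volume_Icc]; exact ENNReal.ofReal_le_ofReal (by linarith)
    calc volume B ≤ volume ((A ∩ Icc y₁ y₂) ∪ (Icc (sInf B) y₁ ∪ Icc y₂ (sSup B))) :=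
          measure_mono hsub
      _ ≤ volume (A ∩ Icc y₁ y₂) + (volume (Icc (sInf B) y₁) + volume (Icc y₂ (sSup B))) :=
          (measure_union_le _ _).trans (add_le_add le_rfl (measure_union_le _ _))
      _ ≤ ENNReal.ofReal b + (ENNReal.ofReal ((ε:ℝ)/2) + ENNReal.ofReal ((ε:ℝ)/2)) :=
          add_le_add hv1 (add_le_add hv2 hv3)
      _ = ENNReal.ofReal b + ε := by
          rw [← ENNReal.ofReal_add (by positivity) (by positivity)]
          norm_num [ENNReal.ofReal_coe_nnreal]
  have hAsub : A ⊆ ⋃ n : ℕ, A ∩ Icc (a₀ - n) (a₀ + n) := by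
    intro x hx
    refine mem_iUnion.2 ⟨⌈|x - a₀|⌉₊, hx, ?_, ?_⟩
    · have := Nat.le_ceil |x - a₀|
      have h2 := neg_abs_le (x - a₀)
      linarith
    · have := Nat.le_ceil |x - a₀|
      have h2 := le_abs_self (x - a₀)
      linarith
  have hmono : Monotone (fun n : ℕ => A ∩ Icc (a₀ - n) (a₀ + n)) := by
    intro n k hnk
    apply inter_subset_inter_right
    have : (n : ℝ) ≤ k := by exact_mod_cast hnk
    apply Icc_subset_Icc <;> linarith
  calc volume A ≤ volume (⋃ n : ℕ, A ∩ Icc (a₀ - n) (a₀ + n)) := measure_mono hAsub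
    _ = ⨆ n : ℕ, volume (A ∩ Icc (a₀ - n) (a₀ + n)) := hmono.measure_iUnion
    _ ≤ ENNReal.ofReal b := iSup_le fun n => key _ _

lemma aux_comb_measure {b : ℝ} (hb : 0 ≤ b) (Z : Finset ℝ) :
    ∀ A : Set ℝ,
    (∀ y₁ ∈ A, ∀ y₂ ∈ A, y₁ ≤ y₂ → (∀ z ∈ Z, z ∉ Icc y₁ y₂) →
      volume (A ∩ Icc y₁ y₂) ≤ ENNReal.ofReal b) →
    volume A ≤ 2 ^ Z.card * ENNReal.ofReal b := by
  induction Z using Finset.induction with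
  | empty =>
    intro A h
    simpa using aux_base_measure hb (fun y₁ h₁ y₂ h₂ h12 => h y₁ h₁ y₂ h₂ h12 (by simp))
  | @insert z Z' hz ih =>
    intro A h
    have h1 : volume (A ∩ Iio z) ≤ 2 ^ Z'.card * ENNReal.ofReal b := by
      apply ih
      intro y₁ hy₁ y₂ hy₂ h12 hZ
      refine (measure_mono (show (A ∩ Iio z) ∩ Icc y₁ y₂ ⊆ A ∩ Icc y₁ y₂ from
        fun x hx => ⟨hx.1.1, hx.2⟩)).trans (h y₁ hy₁.1 y₂ hy₂.1 h12 ?_)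
      intro w hw
      rcases Finset.mem_insert.1 hw with rfl | hw'
      · exact fun hc => absurd hc.2 (not_le.2 hy₂.2)
      · exact hZ w hw'
    have h2 : volume (A ∩ Ioi z) ≤ 2 ^ Z'.card * ENNReal.ofReal b := by
      apply ih
      intro y₁ hy₁ y₂ hy₂ h12 hZ
      refine (measure_mono (show (A ∩ Ioi z) ∩ Icc y₁ y₂ ⊆ A ∩ Icc y₁ y₂ from
        fun x hx => ⟨hx.1.1, hx.2⟩)).trans (h y₁ hy₁.1 y₂ hy₂.1 h12 ?_)
      intro w hw
      rcases Finset.mem_insert.1 hw with rfl | hw'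
      · exact fun hc => absurd hc.1 (not_le.2 hy₁.2)
      · exact hZ w hw'
    have hsub : A ⊆ (A ∩ Iio z) ∪ ((A ∩ Ioi z) ∪ {z}) := by
      intro x hx
      rcases lt_trichotomy x z with hlt | rfl | hgt
      · exact Or.inl ⟨hx, hlt⟩
      · exact Or.inr (Or.inr rfl)
      · exact Or.inr (Or.inl ⟨hx, hgt⟩)
    calc volume A ≤ volume ((A ∩ Iio z) ∪ ((A ∩ Ioi z) ∪ {z})) := measure_mono hsub
      _ ≤ volume (A ∩ Iio z) + (volume (A ∩ Ioi z) + volume ({z} : Set ℝ)) :=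
          (measure_union_le _ _).trans (add_le_add le_rfl (measure_union_le _ _))
      _ = volume (A ∩ Iio z) + volume (A ∩ Ioi z) := by
          rw [Real.volume_singleton]; ring
      _ ≤ 2 ^ Z'.card * ENNReal.ofReal b + 2 ^ Z'.card * ENNReal.ofReal b := add_le_add h1 h2
      _ = 2 ^ (insert z Z').card * ENNReal.ofReal b := by
          rw [Finset.card_insert_of_notMem hz, pow_succ]; ring

/-- Monotone piece: positive derivative with power lower bound near the left endpoint. -/
lemma aux_mono_piece {f F : ℝ → ℝ} {a b c h : ℝ} {n : ℕ} (hab : a < b)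
    (hfc : ContinuousOn f (Icc a b)) (hF : ∀ x ∈ Ioo a b, HasDerivAt f (F x) x)
    (hpos : ∀ x ∈ Ioo a b, 0 < F x) (hh : 0 < h) (hhb : a + h ≤ b)
    (hlow : ∀ x ∈ Ioo a (a + h), c * (x - a) ^ n ≤ F x) :
    c * h ^ (n + 1) / (n + 1) ≤ f b - f a := by
  have hmono : MonotoneOn f (Icc a b) := by
    apply monotoneOn_of_deriv_nonneg (convex_Icc a b) hfc
    · rw [interior_Icc]; exact fun x hx => (hF x hx).differentiableAt.differentiableWithinAt
    · rw [interior_Icc]; intro x hx; rw [(hF x hx).deriv]; exact (hpos x hx).le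
  have hsub : Icc a (a + h) ⊆ Icc a b := Icc_subset_Icc le_rfl hhb
  have hIoosub : Ioo a (a + h) ⊆ Ioo a b := Ioo_subset_Ioo le_rfl hhb
  have key : (fun w => c * (w - a) ^ (n + 1) / (n + 1)) (a + h)
      - (fun w => c * (w - a) ^ (n + 1) / (n + 1)) a ≤ f (a + h) - f a := by
    apply aux_incr_of_deriv_le (by linarith) ((hfc.mono hsub))
      (fun x _ => (aux_hasDerivAt_shift_pow c a n x).differentiableAt.continuousAt.continuousWithinAt)
      (fun x hx => (hF x (hIoosub hx)).differentiableAt)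
      (fun x _ => (aux_hasDerivAt_shift_pow c a n x).differentiableAt)
    intro x hx
    rw [(aux_hasDerivAt_shift_pow c a n x).deriv, (hF x (hIoosub hx)).deriv]
    exact hlow x hx
  simp only [add_sub_cancel_left, sub_self, zero_pow (Nat.succ_ne_zero n), mul_zero,
    zero_div, sub_zero] at key
  have h2 : f (a + h) ≤ f b :=
    hmono ⟨by linarith, hhb⟩ (right_mem_Icc.2 hab.le) (by linarith)
  linarith

/-- Local lower bound for the derivative near a zero, from the nondegeneracy condition. -/
lemma aux_local_bound {Ω s : Set ℝ} (hopen : IsOpen Ω) (hΩs : Ω ⊆ s)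
    (hsub : ∀ a ∈ s, ∀ b ∈ s, Ioo a b ⊆ Ω) (hsconn : s.OrdConnected)
    (hsud : UniqueDiffOn ℝ s)
    {m k : ℕ} {v : ℝ → ℝ} (hv : ContDiffOn ℝ m v s)
    (hk2 : 2 ≤ k) (hkm : k ≤ m) {z : ℝ} (hz : z ∈ s)
    (hzero : ∀ j, 1 ≤ j → j < k → iteratedDerivWithin j v s z = 0)
    (hD : iteratedDerivWithin k v s z ≠ 0) :
    ∃ r > 0, ∃ c > 0, ∀ y ∈ s, |y - z| ≤ r →
      c * |y - z| ^ (k - 1) ≤ |derivWithin v s y| := by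
  set h : ℕ → ℝ → ℝ := fun j => iteratedDerivWithin j v s with hdef
  have hnh : ∀ w ∈ Ω, s ∈ nhds w := fun w hw => mem_nhds_iff.2 ⟨Ω, hΩs, hopen, hw⟩
  have hHD : ∀ j : ℕ, j < m → ∀ w ∈ Ω, HasDerivAt (h j) (h (j + 1) w) w := by
    intro j hj w hw
    have hd : DifferentiableWithinAt ℝ (h j) s w :=
      (hv.differentiableOn_iteratedDerivWithin (by exact_mod_cast hj) hsud) w (hΩs hw)
    have hda : DifferentiableAt ℝ (h j) w := hd.differentiableAt (hnh w hw)
    have hdr : deriv (h j) w = h (j + 1) w := by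
      rw [← derivWithin_of_mem_nhds (hnh w hw), hdef]
      exact (congrFun (iteratedDerivWithin_succ (n := j) (f := v) (s := s)) w).symm
    rw [← hdr]; exact hda.hasDerivAt
  have hcont : ∀ j : ℕ, j ≤ m → ContinuousOn (h j) s := fun j hj =>
    hv.continuousOn_iteratedDerivWithin (by exact_mod_cast hj) hsud
  set ε := |h k z| / 2 with hεdef
  have hε : 0 < ε := by
    have : 0 < |h k z| := abs_pos.2 hD
    positivity
  have hcw : ContinuousWithinAt (h k) s z := hcont k hkm z hz
  have hev : ∀ᶠ y in nhdsWithin z s, dist (h k y) (h k z) < ε :=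
    Metric.tendsto_nhds.1 hcw ε hε
  obtain ⟨r₀, hr₀, hball⟩ := Metric.mem_nhdsWithin_iff.1 hev
  set r := r₀ / 2 with hrdef
  have hr : 0 < r := by positivity
  have hlb : ∀ y ∈ s, |y - z| ≤ r → ε ≤ |h k y| := by
    intro y hy hyr
    have hmem : y ∈ Metric.ball z r₀ ∩ s := by
      refine ⟨?_, hy⟩
      rw [Metric.mem_ball, Real.dist_eq]; linarith
    have hd := hball hmem
    rw [Set.mem_setOf_eq, Real.dist_eq] at hd
    have h1 : |h k z| - |h k y| ≤ |h k y - h k z| := by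
      have := abs_sub_abs_le_abs_sub (h k z) (h k y)
      rw [abs_sub_comm] at this
      linarith
    have h2 : |h k z| = 2 * ε := by rw [hεdef]; ring
    linarith
  have main : ∀ i : ℕ, i + 1 ≤ k → ∀ y ∈ s, |y - z| ≤ r →
      ε / (Nat.factorial i : ℝ) * |y - z| ^ i ≤ |h (k - i) y| := by
    intro i
    induction i with
    | zero =>
      intro _ y hy hyr
      simpa using hlb y hy hyr
    | succ i ih =>
      intro hik y hy hyr
      have hIH := ih (by omega)
      have hj1 : 1 ≤ k - (i + 1) := by omega
      have hjk : k - (i + 1) < k := by omega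
      have hjm : k - (i + 1) < m := by omega
      have hjsucc : k - (i + 1) + 1 = k - i := by omega
      set j := k - (i + 1) with hjdef
      have hfz : h j z = 0 := hzero j hj1 hjk
      have hfact : (0:ℝ) < (Nat.factorial i : ℝ) := by exact_mod_cast Nat.factorial_pos i
      have hi1 : (0:ℝ) < (i:ℝ) + 1 := by positivity
      set c := ε / (Nat.factorial i : ℝ) with hcdef
      have hc : 0 < c := by positivity
      have hscal : ε / (Nat.factorial (i + 1) : ℝ) = c / ((i:ℝ) + 1) := by
        have hfs : (Nat.factorial (i + 1) : ℝ) = (Nat.factorial i : ℝ) * ((i:ℝ) + 1) := by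
          push_cast [Nat.factorial_succ]; ring
        rw [hcdef]
        conv_rhs => rw [div_div]
        rw [hfs]
      rcases eq_or_ne y z with rfl | hyne
      · rw [sub_self, abs_zero, zero_pow (Nat.succ_ne_zero i), mul_zero, hfz, abs_zero]
      have hIHstep : ∀ x ∈ s, |x - z| ≤ r → x ≠ z → (h (j + 1) x ≠ 0 ∧ c * |x - z| ^ i ≤ |h (j + 1) x|) := by
        intro x hxs hxr hxne
        have hb := hIH x hxs hxr
        rw [← hjsucc] at hb
        constructor
        · intro h0
          rw [h0, abs_zero] at hb
          have : 0 < c * |x - z| ^ i := by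
            have : 0 < |x - z| := abs_pos.2 (sub_ne_zero.2 hxne)
            positivity
          linarith
        · exact hb
      rcases hyne.lt_or_gt with hlt | hgt
      · -- y < z
        have hIoo : Ioo y z ⊆ Ω := hsub y hy z hz
        have hxmem : ∀ x ∈ Ioo y z, x ∈ s ∧ |x - z| ≤ r ∧ x ≠ z := by
          intro x hx
          refine ⟨hΩs (hIoo hx), ?_, by intro e; rw [e] at hx; exact lt_irrefl z hx.2⟩
          rw [abs_sub_comm, abs_of_pos (by linarith [hx.2] : (0:ℝ) < z - x)]
          rw [abs_sub_comm, abs_of_pos (by linarith : (0:ℝ) < z - y)] at hyr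
          linarith [hx.1]
        have hcore := aux_core (f := h j) (F := h (j + 1))
          (φ := fun w => -(c * (z - w) ^ (i + 1) / (i + 1))) hlt
          ((hcont j (by omega)).mono (hsconn.out hy hz))
          (fun x hx => hHD j hjm x (hIoo hx))
          ((hcont (j + 1) (by omega)).mono (hIoo.trans hΩs))
          (fun x hx => ((hIHstep x (hxmem x hx).1 (hxmem x hx).2.1 (hxmem x hx).2.2)).1)
          (fun x _ => (aux_hasDerivAt_shift_pow' c z i x).differentiableAt.continuousAt.continuousWithinAt)
          (fun x _ => (aux_hasDerivAt_shift_pow' c z i x).differentiableAt)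
          (by
            intro x hx
            rw [(aux_hasDerivAt_shift_pow' c z i x).deriv]
            obtain ⟨hxs, hxr, hxne⟩ := hxmem x hx
            have hb := (hIHstep x hxs hxr hxne).2
            rw [abs_sub_comm, abs_of_pos (by linarith [hx.2] : (0:ℝ) < z - x)] at hb
            exact hb)
        rw [hfz, zero_sub, abs_neg] at hcore
        have hzz : -(c * (z - z) ^ (i + 1) / ((i:ℝ) + 1)) = 0 := by
          rw [sub_self, zero_pow (Nat.succ_ne_zero i)]; ring
        rw [hzz, sub_neg_eq_add, zero_add] at hcore
        have habs : |y - z| = z - y := by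
          rw [abs_sub_comm]; exact abs_of_pos (by linarith)
        rw [hscal, habs]
        calc c / ((i:ℝ) + 1) * (z - y) ^ (i + 1) = c * (z - y) ^ (i + 1) / ((i:ℝ) + 1) := by ring
          _ ≤ |h j y| := hcore
      · -- z < y
        have hIoo : Ioo z y ⊆ Ω := hsub z hz y hy
        have hxmem : ∀ x ∈ Ioo z y, x ∈ s ∧ |x - z| ≤ r ∧ x ≠ z := by
          intro x hx
          refine ⟨hΩs (hIoo hx), ?_, by intro e; rw [e] at hx; exact lt_irrefl z hx.1⟩
          rw [abs_of_pos (by linarith [hx.1] : (0:ℝ) < x - z)]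
          rw [abs_of_pos (by linarith : (0:ℝ) < y - z)] at hyr
          linarith [hx.2]
        have hcore := aux_core (f := h j) (F := h (j + 1))
          (φ := fun w => c * (w - z) ^ (i + 1) / (i + 1)) hgt
          ((hcont j (by omega)).mono (hsconn.out hz hy))
          (fun x hx => hHD j hjm x (hIoo hx))
          ((hcont (j + 1) (by omega)).mono (hIoo.trans hΩs))
          (fun x hx => ((hIHstep x (hxmem x hx).1 (hxmem x hx).2.1 (hxmem x hx).2.2)).1)
          (fun x _ => (aux_hasDerivAt_shift_pow c z i x).differentiableAt.continuousAt.continuousWithinAt)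
          (fun x _ => (aux_hasDerivAt_shift_pow c z i x).differentiableAt)
          (by
            intro x hx
            rw [(aux_hasDerivAt_shift_pow c z i x).deriv]
            obtain ⟨hxs, hxr, hxne⟩ := hxmem x hx
            have hb := (hIHstep x hxs hxr hxne).2
            rw [abs_of_pos (by linarith [hx.1] : (0:ℝ) < x - z)] at hb
            exact hb)
        rw [hfz, sub_zero] at hcore
        have hzz : c * (z - z) ^ (i + 1) / ((i:ℝ) + 1) = 0 := by
          rw [sub_self, zero_pow (Nat.succ_ne_zero i)]; ring
        rw [hzz, sub_zero] at hcore
        have habs : |y - z| = y - z := abs_of_pos (by linarith)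
        rw [hscal, habs]
        calc c / ((i:ℝ) + 1) * (y - z) ^ (i + 1) = c * (y - z) ^ (i + 1) / ((i:ℝ) + 1) := by ring
          _ ≤ |h j y| := hcore
  refine ⟨r, hr, ε / (Nat.factorial (k - 1) : ℝ), ?_, ?_⟩
  · have : (0:ℝ) < (Nat.factorial (k - 1) : ℝ) := by exact_mod_cast Nat.factorial_pos (k - 1)
    positivity
  intro y hy hyr
  have hmain := main (k - 1) (by omega) y hy hyr
  have h1k : k - (k - 1) = 1 := by omega
  rw [h1k] at hmain
  have hone : h 1 y = derivWithin v s y := congrFun (iteratedDerivWithin_one (f := v) (s := s)) y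
  rwa [hone] at hmain

lemma aux_main {Ω s : Set ℝ} (hopen : IsOpen Ω) (hΩs : Ω ⊆ s)
    (hsub : ∀ a ∈ s, ∀ b ∈ s, Ioo a b ⊆ Ω) (hsconn : s.OrdConnected)
    (hsud : UniqueDiffOn ℝ s) (hsclosed : IsClosed s)
    (m : ℕ) (hm : 1 ≤ m) (v : ℝ → ℝ)
    (hv : ContDiffOn ℝ m v s)
    (hnd : ∀ y ∈ s, 0 < ∑ j ∈ Finset.Icc 1 m, |iteratedDerivWithin j v s y|)
    (c₀ : ℝ) (hc₀ : 0 < c₀)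
    (hinf : c₀ ≤ Filter.liminf (fun y => |derivWithin v s y|)
      (Filter.cocompact ℝ ⊓ Filter.principal s)) :
    ∃ C > 0, ∃ δ₀ > 0, ∀ lam : ℝ, ∀ δ : ℝ, 0 < δ → δ ≤ δ₀ →
      volume {y ∈ Ω |
          EMetric.infEdist y {z ∈ Ω | |v z - lam| < δ ^ m} < ENNReal.ofReal δ}
        ≤ ENNReal.ofReal (C * δ) := by
  classical
  obtain ⟨n, rfl⟩ : ∃ n, m = n + 1 := ⟨m - 1, by omega⟩
  set g := derivWithin v s with hgdef
  have hnhds : ∀ w ∈ Ω, s ∈ nhds w := fun w hw => mem_nhds_iff.2 ⟨Ω, hΩs, hopen, hw⟩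
  have hgcont : ContinuousOn g s := by
    have h1 : ContinuousOn (iteratedDerivWithin 1 v s) s :=
      hv.continuousOn_iteratedDerivWithin (by exact_mod_cast hm) hsud
    exact h1.congr fun y hy => (congrFun (iteratedDerivWithin_one (f := v) (s := s)) y).symm
  -- step B : behaviour at infinity
  have hbdd : IsBoundedUnder (· ≥ ·) (cocompact ℝ ⊓ 𝓟 s) (fun y => |g y|) :=
    isBoundedUnder_of ⟨0, fun y => abs_nonneg _⟩
  have hev : ∀ᶠ y in cocompact ℝ ⊓ 𝓟 s, c₀ / 2 < |g y| :=
    eventually_lt_of_lt_liminf (lt_of_lt_of_le (by linarith) hinf) hbdd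
  rw [eventually_inf_principal] at hev
  obtain ⟨K, hKcpt, hKsub⟩ := hasBasis_cocompact.eventually_iff.1 hev
  obtain ⟨R₀, hR₀⟩ := hKcpt.isBounded.subset_closedBall 0
  set R := |R₀| + 1 with hRdef
  have hR : ∀ y ∈ s, R ≤ |y| → c₀ / 2 ≤ |g y| := by
    intro y hy hRy
    have hyK : y ∉ K := by
      intro hyK
      have h1 := hR₀ hyK
      rw [Metric.mem_closedBall, Real.dist_eq, sub_zero] at h1
      have := h1.trans (le_abs_self _)
      linarith
    exact (hKsub hyK hy).le
  -- step C : zeros of g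
  set Z := {y ∈ s | g y = 0} with hZdef
  have hRpos : (0:ℝ) < R := by rw [hRdef]; positivity
  have hZsub : Z ⊆ Icc (-R) R := by
    intro y hy
    by_contra hout
    rw [mem_Icc, not_and_or, not_le, not_le] at hout
    have hRy : R ≤ |y| := by
      rcases hout with h1 | h1
      · rw [abs_of_neg (by linarith)]; linarith
      · rw [abs_of_pos (by linarith)]; linarith
    have := hR y hy.1 hRy
    rw [hy.2, abs_zero] at this
    linarith
  have hZclosed : IsClosed Z := by
    have : Z = s ∩ g ⁻¹' {0} := by ext y; simp [hZdef]
    rw [this]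
    exact hgcont.preimage_isClosed_of_isClosed hsclosed isClosed_singleton
  have hZcpt : IsCompact Z := isCompact_Icc.of_isClosed_subset hZclosed hZsub
  have hloc : ∀ z ∈ Z, ∃ k : ℕ, (2 ≤ k ∧ k ≤ n + 1) ∧ ∃ r > 0, ∃ c > 0,
      ∀ y ∈ s, |y - z| ≤ r → c * |y - z| ^ (k - 1) ≤ |g y| := by
    intro z hz
    obtain ⟨hzs, hz0⟩ := hz
    have hex : ∃ j : ℕ, 1 ≤ j ∧ j ≤ n + 1 ∧ iteratedDerivWithin j v s z ≠ 0 := by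
      by_contra hno
      push_neg at hno
      have hsum := hnd z hzs
      have hzero : ∑ j ∈ Finset.Icc 1 (n + 1), |iteratedDerivWithin j v s z| = 0 := by
        apply Finset.sum_eq_zero
        intro j hj
        rw [Finset.mem_Icc] at hj
        rw [hno j hj.1 hj.2, abs_zero]
      linarith
    obtain ⟨hk1, hkm', hkD⟩ := Nat.find_spec hex
    have hkmin : ∀ j, 1 ≤ j → j < Nat.find hex → iteratedDerivWithin j v s z = 0 := by
      intro j hj1 hjk
      by_contra hne
      exact (Nat.find_min hex hjk) ⟨hj1, by omega, hne⟩
    have hk2 : 2 ≤ Nat.find hex := by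
      by_contra h2
      push_neg at h2
      have hk1' : Nat.find hex = 1 := by omega
      rw [hk1', iteratedDerivWithin_one] at hkD
      exact hkD hz0
    obtain ⟨r, hr, c, hc, hbound⟩ :=
      aux_local_bound hopen hΩs hsub hsconn hsud hv hk2 hkm' hzs hkmin hkD
    exact ⟨Nat.find hex, ⟨hk2, hkm'⟩, r, hr, c, hc, hbound⟩
  choose! kk hkk rr hrr cc hcc hloc_bound using hloc
  have hiso : ∀ z ∈ Z, ∀ y ∈ Z, |y - z| < rr z → y = z := by
    intro z hz y hy hyr
    by_contra hne
    have hb := hloc_bound z hz y hy.1 hyr.le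
    rw [hy.2, abs_zero] at hb
    have h1 : 0 < |y - z| := abs_pos.2 (sub_ne_zero.2 hne)
    have hkz := hkk z hz
    have h2 : 0 < cc z * |y - z| ^ (kk z - 1) := by
      have := hcc z hz
      positivity
    linarith
  have hcover : Z ⊆ ⋃ z ∈ Z, Metric.ball z (rr z) := by
    intro z hz
    exact mem_biUnion hz (by simp [Metric.mem_ball, hrr z hz])
  obtain ⟨T, hTsub, hTfin, hTcover⟩ :=
    hZcpt.elim_finite_subcover_image (fun z _ => Metric.isOpen_ball) hcover
  have hZfin : Z.Finite := by
    apply hTfin.subset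
    intro y hy
    obtain ⟨z, hzT, hzb⟩ := mem_iUnion₂.1 (hTcover hy)
    rw [Metric.mem_ball, Real.dist_eq] at hzb
    have := hiso z (hTsub hzT) y hy hzb
    rwa [this]
  set Zf : Finset ℝ := hZfin.toFinset with hZfdef
  -- uniform lower bound on a compact set away from balls
  set Kc := (s ∩ Icc (-R) R) \ (⋃ z ∈ Z, Metric.ball z (rr z)) with hKcdef
  have hKc_cpt : IsCompact Kc := by
    apply isCompact_Icc.of_isClosed_subset
    · exact ((hsclosed.inter isClosed_Icc).sdiff (isOpen_biUnion fun z _ => Metric.isOpen_ball))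
    · exact fun y hy => hy.1.2
  obtain ⟨c₁, hc₁, hKcb⟩ : ∃ c₁ > 0, ∀ y ∈ Kc, c₁ ≤ |g y| := by
    rcases Kc.eq_empty_or_nonempty with he | hne
    · exact ⟨1, one_pos, fun y hy => absurd (he ▸ hy) (notMem_empty y)⟩
    · obtain ⟨y₀, hy₀, hmin⟩ := hKc_cpt.exists_isMinOn hne
        ((hgcont.mono (fun y hy => hy.1.1)).abs)
      refine ⟨|g y₀|, ?_, fun y hy => hmin hy⟩
      rcases eq_or_ne (g y₀) 0 with h0 | h0
      · exfalso
        have hy₀Z : y₀ ∈ Z := ⟨hy₀.1.1, h0⟩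
        exact hy₀.2 (mem_biUnion hy₀Z (by simp [Metric.mem_ball, hrr _ hy₀Z]))
      · exact abs_pos.2 h0
  obtain ⟨cZ, hcZ, hcZle⟩ : ∃ cZ > 0, ∀ z ∈ Z, cZ ≤ cc z := by
    set Tf := insert (1:ℝ) (Zf.image cc) with hTfdef
    refine ⟨Tf.min' (Finset.insert_nonempty _ _), ?_, ?_⟩
    · have hmem := Tf.min'_mem (Finset.insert_nonempty _ _)
      rcases Finset.mem_insert.1 hmem with h1 | h2
      · rw [h1]; exact one_pos
      · obtain ⟨z, hzZ, hze⟩ := Finset.mem_image.1 h2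
        rw [← hze]
        exact hcc z (hZfin.mem_toFinset.1 hzZ)
    · intro z hzZ
      exact Finset.min'_le _ _
        (Finset.mem_insert_of_mem (Finset.mem_image_of_mem cc (hZfin.mem_toFinset.2 hzZ)))
  set c := min (min (c₀ / 2) c₁) (min cZ 1) with hcdef
  have hcpos : 0 < c := lt_min (lt_min (by linarith) hc₁) (lt_min hcZ one_pos)
  have hc1 : c ≤ 1 := le_trans (min_le_right _ _) (min_le_right _ _)
  have hglob : ∀ y ∈ s, ∀ ρ : ℝ, 0 < ρ → ρ ≤ 1 → (∀ z ∈ Z, ρ ≤ |y - z|) →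
      c * ρ ^ n ≤ |g y| := by
    intro y hy ρ hρ hρ1 hρZ
    have hρn1 : ρ ^ n ≤ 1 := pow_le_one₀ hρ.le hρ1
    by_cases hball : ∃ z ∈ Z, |y - z| < rr z
    · obtain ⟨z, hzZ, hzb⟩ := hball
      have hb := hloc_bound z hzZ y hy hzb.le
      have hk := hkk z hzZ
      calc c * ρ ^ n ≤ cZ * ρ ^ n := by
            apply mul_le_mul_of_nonneg_right _ (by positivity)
            exact le_trans (min_le_right _ _) (min_le_left _ _)
        _ ≤ cc z * |y - z| ^ (kk z - 1) := by
            apply mul_le_mul (hcZle z hzZ) ?_ (by positivity) (hcc z hzZ).le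
            calc ρ ^ n ≤ ρ ^ (kk z - 1) :=
                  pow_le_pow_of_le_one hρ.le hρ1 (by omega)
              _ ≤ |y - z| ^ (kk z - 1) := pow_le_pow_left₀ hρ.le (hρZ z hzZ) _
        _ ≤ |g y| := hb
    · push_neg at hball
      have hcρ : c * ρ ^ n ≤ c :=
        (mul_le_of_le_one_right hcpos.le hρn1)
      by_cases hRy : R ≤ |y|
      · refine hcρ.trans (le_trans ?_ (hR y hy hRy))
        exact le_trans (min_le_left _ _) (min_le_left _ _)
      · have hyK : y ∈ Kc := by
          refine ⟨⟨hy, ?_⟩, ?_⟩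
          · rw [not_le] at hRy
            constructor
            · linarith [neg_abs_le y]
            · linarith [le_abs_self y]
          · intro hmem
            obtain ⟨z, hzZ, hzb⟩ := mem_iUnion₂.1 hmem
            rw [Metric.mem_ball, Real.dist_eq] at hzb
            exact absurd hzb (not_lt.2 (hball z hzZ))
        refine hcρ.trans (le_trans ?_ (hKcb y hyK))
        exact le_trans (min_le_left _ _) (min_le_right _ _)
  -- constants
  set B := max 1 (2 * ((n:ℝ) + 1) / c) with hBdef
  have hB1 : (1:ℝ) ≤ B := le_max_left _ _
  have hBpos : (0:ℝ) < B := by linarith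
  set δ₀ := min 1 (1 / (2 * B)) with hδ₀def
  have hδ₀pos : 0 < δ₀ := lt_min one_pos (by positivity)
  set C := (2:ℝ) ^ Zf.card * (4 * B + 4) with hCdef
  have hCpos : 0 < C := by positivity
  refine ⟨C, hCpos, δ₀, hδ₀pos, ?_⟩
  intro lam δ hδ hδ0
  have hδ1 : δ ≤ 1 := hδ0.trans (min_le_left _ _)
  have hδB : B * δ ≤ 1 / 2 := by
    have h1 : δ ≤ 1 / (2 * B) := hδ0.trans (min_le_right _ _)
    have h2 : B * δ ≤ B * (1 / (2 * B)) := mul_le_mul_of_nonneg_left h1 hBpos.le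
    have h3 : B * (1 / (2 * B)) = 1 / 2 := by
      field_simp
    linarith
  set E := {z ∈ Ω | |v z - lam| < δ ^ (n + 1)} with hEdef
  -- pair bound within E
  have hpairE : ∀ x₁ ∈ E, ∀ x₂ ∈ E, x₁ ≤ x₂ → (∀ z ∈ Z, z ∉ Icc x₁ x₂) →
      x₂ - x₁ ≤ 2 * B * δ := by
    intro x₁ hx₁ x₂ hx₂ hle hZfree
    rcases eq_or_lt_of_le hle with rfl | hlt
    · have : 0 ≤ 2 * B * δ := by positivity
      linarith
    set hh := min ((x₂ - x₁) / 2) 1 with hhdef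
    have hhpos : 0 < hh := lt_min (by linarith) one_pos
    have hh1 : hh ≤ 1 := min_le_right _ _
    have hhhalf : hh ≤ (x₂ - x₁) / 2 := min_le_left _ _
    have hx₁Ω : x₁ ∈ Ω := hx₁.1
    have hx₂Ω : x₂ ∈ Ω := hx₂.1
    have hIoo : Ioo x₁ x₂ ⊆ Ω := hsub x₁ (hΩs hx₁Ω) x₂ (hΩs hx₂Ω)
    have hIcc : Icc x₁ x₂ ⊆ s := hsconn.out (hΩs hx₁Ω) (hΩs hx₂Ω)
    have hvd : ∀ x ∈ Ioo x₁ x₂, HasDerivAt v (g x) x := by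
      intro x hx
      have hxΩ := hIoo hx
      have hd : DifferentiableWithinAt ℝ v s x :=
        (hv.differentiableOn (by simp)) x (hΩs hxΩ)
      have hda : DifferentiableAt ℝ v x := hd.differentiableAt (hnhds x hxΩ)
      have hdr : deriv v x = g x := by
        rw [hgdef, ← derivWithin_of_mem_nhds (hnhds x hxΩ)]
      rw [← hdr]
      exact hda.hasDerivAt
    have hglow : ∀ x ∈ Ioo x₁ x₂, c * (min (min (x - x₁) (x₂ - x)) 1) ^ n ≤ |g x| := by
      intro x hx
      have hρpos : 0 < min (min (x - x₁) (x₂ - x)) 1 := by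
        apply lt_min (lt_min (by linarith [hx.1]) (by linarith [hx.2])) one_pos
      apply hglob x (hΩs (hIoo hx)) _ hρpos (min_le_right _ _)
      intro z hzZ
      have hznot := hZfree z hzZ
      rw [mem_Icc, not_and_or, not_le, not_le] at hznot
      rcases hznot with h1 | h1
      · calc min (min (x - x₁) (x₂ - x)) 1 ≤ x - x₁ :=
              le_trans (min_le_left _ _) (min_le_left _ _)
          _ ≤ x - z := by linarith
          _ ≤ |x - z| := le_abs_self _
      · calc min (min (x - x₁) (x₂ - x)) 1 ≤ x₂ - x :=
              le_trans (min_le_left _ _) (min_le_right _ _)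
          _ ≤ z - x := by linarith
          _ ≤ |x - z| := by rw [abs_sub_comm]; exact le_abs_self _
    have hgne : ∀ x ∈ Ioo x₁ x₂, g x ≠ 0 := by
      intro x hx h0
      have := hglow x hx
      rw [h0, abs_zero] at this
      have hρpos : 0 < min (min (x - x₁) (x₂ - x)) 1 :=
        lt_min (lt_min (by linarith [hx.1]) (by linarith [hx.2])) one_pos
      have : 0 < c * (min (min (x - x₁) (x₂ - x)) 1) ^ n := by positivity
      linarith [hglow x hx]
    have hmid : (x₁ + x₂) / 2 ∈ Ioo x₁ x₂ := ⟨by linarith, by linarith⟩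
    have hlow2 : ∀ x ∈ Ioo x₁ (x₁ + hh), c * (x - x₁) ^ n ≤ |g x| := by
      intro x hx
      have hxI : x ∈ Ioo x₁ x₂ := ⟨hx.1, by linarith [hx.2, hhhalf]⟩
      refine le_trans ?_ (hglow x hxI)
      apply mul_le_mul_of_nonneg_left _ hcpos.le
      apply pow_le_pow_left₀ (by linarith [hx.1])
      apply le_min (le_min le_rfl ?_) (by linarith [hx.2, hh1])
      linarith [hx.2, hhhalf]
    have habs : |v x₂ - v x₁| < 2 * δ ^ (n + 1) := by
      have h1 := abs_lt.1 hx₁.2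
      have h2 := abs_lt.1 hx₂.2
      rw [abs_lt]
      constructor <;> [linarith [h1.1, h1.2, h2.1, h2.2]; linarith [h1.1, h1.2, h2.1, h2.2]]
    have hkey : c * hh ^ (n + 1) / ((n:ℝ) + 1) < 2 * δ ^ (n + 1) := by
      rcases lt_or_gt_of_ne (hgne _ hmid) with hneg | hpos
      · -- g < 0 on the interval : use -v
        have hsign : ∀ x ∈ Ioo x₁ x₂, 0 < -g x := fun x hx =>
          aux_sign_const ordConnected_Ioo ((hgcont.mono (hIoo.trans hΩs)).neg)
            (fun y hy => neg_ne_zero.2 (hgne y hy)) hmid hx (by simp only [Pi.neg_apply]; linarith)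
        have hmp := aux_mono_piece (f := fun y => -v y) (F := fun y => -g y) hlt
          ((hv.continuousOn.mono hIcc).neg)
          (fun x hx => (hvd x hx).neg) hsign hhpos (by linarith [hhhalf])
          (fun x hx => by
            have h1 := hlow2 x hx
            have hxI : x ∈ Ioo x₁ x₂ := ⟨hx.1, by linarith [hx.2, hhhalf]⟩
            rw [abs_of_neg (by linarith [hsign x hxI])] at h1
            exact h1)
        have : -v x₂ - -v x₁ ≤ |v x₂ - v x₁| := by
          rw [abs_sub_comm]
          have := le_abs_self (v x₁ - v x₂)
          linarith
        linarith
      · have hsign : ∀ x ∈ Ioo x₁ x₂, 0 < g x := fun x hx =>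
          aux_sign_const ordConnected_Ioo (hgcont.mono (hIoo.trans hΩs)) hgne hmid hx hpos
        have hmp := aux_mono_piece (f := v) (F := g) hlt
          (hv.continuousOn.mono hIcc)
          hvd hsign hhpos (by linarith [hhhalf])
          (fun x hx => by
            have h1 := hlow2 x hx
            have hxI : x ∈ Ioo x₁ x₂ := ⟨hx.1, by linarith [hx.2, hhhalf]⟩
            rw [abs_of_pos (hsign x hxI)] at h1
            exact h1)
        have := le_abs_self (v x₂ - v x₁)
        linarith
    -- conclude
    have hn1 : (0:ℝ) < (n:ℝ) + 1 := by positivity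
    have e0 : c * hh ^ (n + 1) < 2 * δ ^ (n + 1) * ((n:ℝ) + 1) := by
      have := (div_lt_iff₀ hn1).1 hkey
      linarith
    have e1 : hh ^ (n + 1) < 2 * ((n:ℝ) + 1) / c * δ ^ (n + 1) := by
      rw [div_mul_eq_mul_div, lt_div_iff₀ hcpos]
      linarith
    have e2 : 2 * ((n:ℝ) + 1) / c ≤ B := le_max_right _ _
    have e3 : B ≤ B ^ (n + 1) := le_self_pow₀ hB1 (Nat.succ_ne_zero n)
    have e4 : hh ^ (n + 1) < (B * δ) ^ (n + 1) := by
      calc hh ^ (n + 1) < 2 * ((n:ℝ) + 1) / c * δ ^ (n + 1) := e1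
        _ ≤ B ^ (n + 1) * δ ^ (n + 1) :=
            mul_le_mul_of_nonneg_right (e2.trans e3) (by positivity)
        _ = (B * δ) ^ (n + 1) := (mul_pow B δ (n + 1)).symm
    have hBup : hh < B * δ := lt_of_pow_lt_pow_left₀ (n + 1) (by positivity) e4
    have hhlt : hh < 1 / 2 := lt_of_lt_of_le hBup hδB
    have hhalf_le : (x₂ - x₁) / 2 ≤ 1 := by
      by_contra hgt
      rw [not_le] at hgt
      have : hh = 1 := min_eq_right (by linarith)
      linarith
    have hheq : hh = (x₂ - x₁) / 2 := min_eq_left (by linarith)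
    rw [hheq] at hBup
    linarith
  -- pair bound for the thickened set
  set ES := {y ∈ Ω | EMetric.infEdist y E < ENNReal.ofReal δ} with hESdef
  have hwit : ∀ y ∈ ES, ∃ x ∈ E, |y - x| < δ := by
    intro y hy
    obtain ⟨x, hxE, hxd⟩ := EMetric.infEdist_lt_iff.1 hy.2
    exact ⟨x, hxE, by rw [← Real.dist_eq]; exact edist_lt_ofReal.1 hxd⟩
  have hpairES : ∀ y₁ ∈ ES, ∀ y₂ ∈ ES, y₁ ≤ y₂ → (∀ z ∈ Zf, z ∉ Icc y₁ y₂) →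
      volume (ES ∩ Icc y₁ y₂) ≤ ENNReal.ofReal ((4 * B + 4) * δ) := by
    intro y₁ hy₁ y₂ hy₂ h12 hZf
    have hZfree : ∀ z ∈ Z, z ∉ Icc y₁ y₂ := fun z hz => hZf z (hZfin.mem_toFinset.2 hz)
    by_cases hne : (E ∩ Ioo y₁ y₂).Nonempty
    · obtain ⟨x₀, hx₀E, hx₀I⟩ := hne
      have hsubES : ES ∩ Icc y₁ y₂ ⊆ Icc y₁ (y₁ + δ) ∪
          (Icc (y₂ - δ) y₂ ∪ Icc (x₀ - (2 * B * δ + δ)) (x₀ + (2 * B * δ + δ))) := by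
        rintro y ⟨hyES, hyI⟩
        obtain ⟨x, hxE, hxd⟩ := hwit y hyES
        have hxd' := abs_lt.1 hxd
        rcases le_or_gt x y₁ with hxy₁ | hx1
        · exact Or.inl ⟨hyI.1, by linarith [hxd'.2]⟩
        rcases le_or_gt y₂ x with hxy₂ | hx2
        · exact Or.inr (Or.inl ⟨by linarith [hxd'.1], hyI.2⟩)
        · refine Or.inr (Or.inr ?_)
          have hxx₀ : |x - x₀| ≤ 2 * B * δ := by
            rcases le_total x x₀ with hle' | hle'
            · have hp := hpairE x hxE x₀ hx₀E hle' (fun z hz hmem => hZfree z hz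
                ⟨by linarith [hmem.1], by linarith [hmem.2, hx₀I.2]⟩)
              rw [abs_sub_comm, abs_of_nonneg (by linarith)]
              linarith
            · have hp := hpairE x₀ hx₀E x hxE hle' (fun z hz hmem => hZfree z hz
                ⟨by linarith [hmem.1, hx₀I.1], by linarith [hmem.2]⟩)
              rw [abs_of_nonneg (by linarith)]
              linarith
          have hxx₀' := abs_le.1 hxx₀
          constructor
          · linarith [hxd'.1, hxx₀'.1]
          · linarith [hxd'.2, hxx₀'.2]
      calc volume (ES ∩ Icc y₁ y₂) ≤ volume (Icc y₁ (y₁ + δ)) +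
            (volume (Icc (y₂ - δ) y₂) + volume (Icc (x₀ - (2 * B * δ + δ)) (x₀ + (2 * B * δ + δ)))) :=
            (measure_mono hsubES).trans
              ((measure_union_le _ _).trans (add_le_add le_rfl (measure_union_le _ _)))
        _ = ENNReal.ofReal δ + (ENNReal.ofReal δ + ENNReal.ofReal (2 * (2 * B * δ + δ))) := by
            rw [Real.volume_Icc, Real.volume_Icc, Real.volume_Icc]
            congr 2 <;> ring_nf
        _ ≤ ENNReal.ofReal ((4 * B + 4) * δ) := by
            rw [← ENNReal.ofReal_add (by positivity) (by positivity),
              ← ENNReal.ofReal_add (by positivity) (by positivity)]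
            apply ENNReal.ofReal_le_ofReal
            nlinarith [hδ.le, hBpos.le]
    · have hsubES : ES ∩ Icc y₁ y₂ ⊆ Icc y₁ (y₁ + δ) ∪ Icc (y₂ - δ) y₂ := by
        rintro y ⟨hyES, hyI⟩
        obtain ⟨x, hxE, hxd⟩ := hwit y hyES
        have hxd' := abs_lt.1 hxd
        rcases le_or_gt x y₁ with hxy₁ | hx1
        · exact Or.inl ⟨hyI.1, by linarith [hxd'.2]⟩
        rcases le_or_gt y₂ x with hxy₂ | hx2
        · exact Or.inr ⟨by linarith [hxd'.1], hyI.2⟩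
        · exact absurd ⟨hxE, hx1, hx2⟩ (fun hmem => hne ⟨x, hmem⟩)
      calc volume (ES ∩ Icc y₁ y₂) ≤ volume (Icc y₁ (y₁ + δ)) + volume (Icc (y₂ - δ) y₂) :=
            (measure_mono hsubES).trans (measure_union_le _ _)
        _ = ENNReal.ofReal δ + ENNReal.ofReal δ := by
            rw [Real.volume_Icc, Real.volume_Icc]
            congr 2 <;> ring_nf
        _ ≤ ENNReal.ofReal ((4 * B + 4) * δ) := by
            rw [← ENNReal.ofReal_add (by positivity) (by positivity)]
            apply ENNReal.ofReal_le_ofReal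
            nlinarith [hδ.le, hBpos.le]
  have hfinal := aux_comb_measure (b := (4 * B + 4) * δ) (by positivity) Zf ES hpairES
  calc volume ES ≤ 2 ^ Zf.card * ENNReal.ofReal ((4 * B + 4) * δ) := hfinal
    _ = ENNReal.ofReal (C * δ) := by
        rw [show C * δ = 2 ^ Zf.card * ((4 * B + 4) * δ) by rw [hCdef]; ring]
        conv_rhs => rw [ENNReal.ofReal_mul (show (0:ℝ) ≤ 2 ^ Zf.card by positivity),
          ENNReal.ofReal_pow (show (0:ℝ) ≤ 2 by norm_num), ENNReal.ofReal_ofNat]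

/-- uniform-in-`λ` measure estimate for `𝓔^m_{λ,δ}` on a non-compact
region.  For `Ω` one of `ℝ`, `(-∞, L₁)`, `(L₂, ∞)`, if `v ∈ C^m(cl Ω)` satisfies the
`m`-th order non-degeneracy condition on `cl Ω` and the non-degeneracy condition at
infinity, then there are `C > 0` and `δ₀ > 0` such that for every `λ ∈ ℝ` and every
`δ ∈ (0, δ₀]`, `m(𝓔^m_{λ,δ}) ≤ C δ`, where
`𝓔^m_{λ,δ} = {y ∈ Ω : dist(y, E^m_{λ,δ}) < δ}` (with `dist(y, ∅) = ∞`) and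
`E^m_{λ,δ} = {y ∈ Ω : |v(y) − λ| < δ^m}`. -/
theorem measure_estimate_noncompact
    (Ω : Set ℝ)
    (hΩ : Ω = Set.univ ∨ (∃ L₁ : ℝ, Ω = Set.Iio L₁) ∨ (∃ L₂ : ℝ, Ω = Set.Ioi L₂))
    (m : ℕ) (hm : 1 ≤ m) (v : ℝ → ℝ)
    (hv : ContDiffOn ℝ m v (closure Ω))
    (hnd : ∀ y ∈ closure Ω,
      0 < ∑ j ∈ Finset.Icc 1 m, |iteratedDerivWithin j v (closure Ω) y|)
    (c₀ : ℝ) (hc₀ : 0 < c₀)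
    (hinf : c₀ ≤ Filter.liminf (fun y => |derivWithin v (closure Ω) y|)
      (Filter.cocompact ℝ ⊓ Filter.principal (closure Ω))) :
    ∃ C > 0, ∃ δ₀ > 0, ∀ lam : ℝ, ∀ δ : ℝ, 0 < δ → δ ≤ δ₀ →
      volume {y ∈ Ω |
          EMetric.infEdist y {z ∈ Ω | |v z - lam| < δ ^ m} < ENNReal.ofReal δ}
        ≤ ENNReal.ofReal (C * δ) := by
  rcases hΩ with rfl | ⟨L₁, rfl⟩ | ⟨L₂, rfl⟩
  · rw [closure_univ] at hv hnd hinf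
    exact aux_main isOpen_univ (subset_refl _) (fun a _ b _ => subset_univ _)
      ordConnected_univ uniqueDiffOn_univ isClosed_univ m hm v hv hnd c₀ hc₀ hinf
  · rw [closure_Iio] at hv hnd hinf
    refine aux_main isOpen_Iio Iio_subset_Iic_self ?_ ordConnected_Iic
      (uniqueDiffOn_Iic L₁) isClosed_Iic m hm v hv hnd c₀ hc₀ hinf
    intro a _ b hb x hx
    exact lt_of_lt_of_le hx.2 hb
  · rw [closure_Ioi] at hv hnd hinf
    refine aux_main isOpen_Ioi Ioi_subset_Ici_self ?_ ordConnected_Ici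
      (uniqueDiffOn_Ici L₂) isClosed_Ici m hm v hv hnd c₀ hc₀ hinf
    intro a ha b _ x hx
    exact lt_of_le_of_lt ha hx.1
end
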